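/- arXiv:1408.2393 — 13 statements merged into one kernel-verified Lean document; each statement's English description precedes it below -/
import Mathlib

section
/- Let L be a relational first-order language and M a countable L-structure. Then M is II-homogeneous if and only if M is IA-homogeneous; that is, every isomorphism between finite substructures of M extends to an L-embedding of M into M if and only if every isomorphism between finite substructures of M extends to an L-automorphism of M. -/
open FirstOrder

/-- `M` is II-homogeneous: every isomorphism between finite substructures of `M`
extends to an `L`-embedding of `M` into `M`. -/
def IIHomogeneous (L : Language) (M : Type*) [L.Structure M] : Prop :=
  ∀ (A B : L.Substructure M), (A : Set M).Finite → (B : Set M).Finite →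
    ∀ e : A ≃[L] B, ∃ g : M ↪[L] M, ∀ a : A, g (a : M) = (e a : M)

/-- `M` is IA-homogeneous: every isomorphism between finite substructures of `M`
extends to an `L`-automorphism of `M`. -/
def IAHomogeneous (L : Language) (M : Type*) [L.Structure M] : Prop :=
  ∀ (A B : L.Substructure M), (A : Set M).Finite → (B : Set M).Finite →
    ∀ e : A ≃[L] B, ∃ g : M ≃[L] M, ∀ a : A, g (a : M) = (e a : M)

open FirstOrder.Language FirstOrder.Language.Substructure in
lemma isExtensionPair_of_II {L : Language} [L.IsRelational] {M : Type*} [L.Structure M]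
    (h : IIHomogeneous L M) : L.IsExtensionPair M M := by
  rw [Language.isExtensionPair_iff_exists_embedding_closure_singleton_sup]
  intro S hS f m
  haveI : Finite S := hS.finite
  have hSfin : (S : Set M).Finite := Set.toFinite _
  have hRfin : ((f.toHom.range : L.Substructure M) : Set M).Finite := by
    have : ((f.toHom.range : L.Substructure M) : Set M) = Set.range f := by
      ext x
      simp [Language.Hom.mem_range]
    rw [this]
    exact Set.finite_range _
  obtain ⟨g, hg⟩ := h S f.toHom.range hSfin hRfin f.equivRange
  refine ⟨g.comp (Substructure.subtype _), ?_⟩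
  ext ⟨x, hx⟩
  have := hg ⟨x, hx⟩
  have h2 : g x = f ⟨x, hx⟩ := by
    rw [show (f ⟨x, hx⟩ : M) = ((f.equivRange ⟨x, hx⟩ : f.toHom.range) : M) from rfl]
    exact this
  simpa using h2.symm

theorem II_iff_IA (L : Language) [L.IsRelational] (M : Type*) [L.Structure M]
    [Countable M] : IIHomogeneous L M ↔ IAHomogeneous L M := by
  constructor
  · intro h A B hA hB e
    have ep : Language.IsExtensionPair L M M := isExtensionPair_of_II h
    haveI : Finite A := hA.to_subtype
    have hAfg : A.FG := Language.Substructure.fg_iff_finite.2 inferInstance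
    obtain ⟨f, hf⟩ := Language.equiv_between_cg Language.Structure.cg_of_countable
      Language.Structure.cg_of_countable ⟨⟨A, B, e⟩, hAfg⟩ ep ep
    refine ⟨f, fun a => ?_⟩
    have := congr_fun (congr_arg (fun (j : A ↪[L] M) => (j : A → M))
      (Language.PartialEquiv.subtype_toEquiv_inclusion hf)) a
    have h2 : (e a : M) = f a := by
      simp only [Language.Embedding.toPartialEquiv] at this
      exact this.symm.trans rfl
    exact h2.symm
  · intro h A B hA hB e
    obtain ⟨g, hg⟩ := h A B hA hB e
    exact ⟨g.toEmbedding, hg⟩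
end

section
/- Let L be a relational first-order language and M a countable L-structure. Then M is MI-homogeneous if and only if M is MA-homogeneous; that is, every injective L-homomorphism between finite substructures of M extends to an L-embedding of M into M if and only if every injective L-homomorphism between finite substructures of M extends to an L-automorphism of M. -/
open FirstOrder

/-- `M` is MI-homogeneous: every injective `L`-homomorphism between finite substructures
of `M` extends to an `L`-embedding of `M` into `M`. -/
def MIHomogeneous (L : Language) (M : Type*) [L.Structure M] : Prop :=
  ∀ (A B : L.Substructure M), (A : Set M).Finite → (B : Set M).Finite →
    ∀ e : A →[L] B, Function.Injective e →
      ∃ g : M ↪[L] M, ∀ a : A, g (a : M) = (e a : M)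

/-- `M` is MA-homogeneous: every injective `L`-homomorphism between finite substructures
of `M` extends to an `L`-automorphism of `M`. -/
def MAHomogeneous (L : Language) (M : Type*) [L.Structure M] : Prop :=
  ∀ (A B : L.Substructure M), (A : Set M).Finite → (B : Set M).Finite →
    ∀ e : A →[L] B, Function.Injective e →
      ∃ g : M ≃[L] M, ∀ a : A, g (a : M) = (e a : M)

open FirstOrder.Language FirstOrder.Language.Substructure FirstOrder.Language.PartialEquiv in
private lemma aux_le_toPartialEquiv {L : Language} {M : Type*} [L.Structure M]
    (f : M ≃ₚ[L] M) (g : M ↪[L] M)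
    (hg : ∀ a : f.dom, g (a : M) = (f.toEquiv a : M)) : f ≤ g.toPartialEquiv := by
  refine ⟨le_top, ?_⟩
  ext x
  simp only [Embedding.comp_apply, Equiv.coe_toEmbedding, coe_subtype, Embedding.toPartialEquiv,
    Equiv.comp_apply, Embedding.equivRange_toEquiv_apply, coe_topEquiv, coe_inclusion]
  exact hg x

open FirstOrder.Language FirstOrder.Language.Substructure FirstOrder.Language.PartialEquiv in
private lemma aux_extension_pair {L : Language} [L.IsRelational] {M : Type*} [L.Structure M]
    (h : MIHomogeneous L M) : L.IsExtensionPair M M := by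
  rintro ⟨f, hfg⟩ m
  have hAfin : ((f.dom : L.Substructure M) : Set M).Finite := by
    haveI := hfg.finite; exact Set.toFinite _
  have hBfin : ((f.cod : L.Substructure M) : Set M).Finite := by
    haveI := (f.dom_fg_iff_cod_fg.1 hfg).finite; exact Set.toFinite _
  have einj : Function.Injective (f.toEquiv.toHom) := by
    intro a b hab
    exact f.toEquiv.injective (by exact_mod_cast hab)
  obtain ⟨g, hgg⟩ := h f.dom f.cod hAfin hBfin f.toEquiv.toHom einj
  have hle : f ≤ g.toPartialEquiv := aux_le_toPartialEquiv f g hgg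
  refine ⟨⟨g.toPartialEquiv.domRestrict
      (le_top : f.dom ⊔ closure L {m} ≤ g.toPartialEquiv.dom), hfg.sup (fg_closure_singleton m)⟩,
      ?_, ?_⟩
  · exact SetLike.le_def.1 le_sup_right (subset_closure (Set.mem_singleton m))
  · exact le_domRestrict f g.toPartialEquiv le_sup_left _ hle

theorem MI_iff_MA (L : Language) [L.IsRelational] (M : Type*) [L.Structure M]
    [Countable M] : MIHomogeneous L M ↔ MAHomogeneous L M := by
  classical
  constructor
  · intro h A B hA hB e he
    obtain ⟨g₀, hg₀⟩ := h A B hA hB e he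
    -- initial finite partial equivalence: restriction of g₀ to A
    let f₀ : L.PartialEquiv M M := g₀.toPartialEquiv.domRestrict (le_top : A ≤ ⊤)
    have hf₀dom : f₀.dom = A := rfl
    have hf₀fg : f₀.dom.FG := by
      rw [hf₀dom, Language.Substructure.fg_iff_finite]
      exact hA.to_subtype
    obtain ⟨F, hF⟩ := Language.equiv_between_cg (Language.Structure.cg_of_countable)
      (Language.Structure.cg_of_countable) ⟨f₀, hf₀fg⟩
      (aux_extension_pair h) (aux_extension_pair h)
    refine ⟨F, fun a => ?_⟩
    have h1 := Language.PartialEquiv.subtype_toEquiv_inclusion hF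
    have h2 := congrFun (congrArg (↑·) h1) (⟨a, a.2⟩ : f₀.dom)
    simp only [Language.Embedding.comp_apply, Language.Equiv.coe_toEmbedding,
      Language.Substructure.coe_subtype, Language.Embedding.toPartialEquiv,
      Language.Equiv.comp_apply, Language.Substructure.coe_inclusion] at h2
    -- h2 : F (a) = ↑(f₀.toEquiv ⟨a, _⟩)
    rw [← hg₀ a]
    convert h2 using 1 <;> rfl
  · intro h A B hA hB e he
    obtain ⟨g, hg⟩ := h A B hA hB e he
    exact ⟨g.toEmbedding, hg⟩
end

section
/- Let L be a relational first-order language and M a countable L-structure. Then M is HI-homogeneous if and only if M is HA-homogeneous; that is, every L-homomorphism between finite substructures of M extends to an L-embedding of M into M if and only if every L-homomorphism between finite substructures of M extends to an L-automorphism of M. -/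
open FirstOrder

/-- `M` is HI-homogeneous: every `L`-homomorphism between finite substructures
of `M` extends to an `L`-embedding of `M` into `M`. -/
def HIHomogeneous (L : Language) (M : Type*) [L.Structure M] : Prop :=
  ∀ (A B : L.Substructure M), (A : Set M).Finite → (B : Set M).Finite →
    ∀ e : A →[L] B, ∃ g : M ↪[L] M, ∀ a : A, g (a : M) = (e a : M)

/-- `M` is HA-homogeneous: every `L`-homomorphism between finite substructures
of `M` extends to an `L`-automorphism of `M`. -/
def HAHomogeneous (L : Language) (M : Type*) [L.Structure M] : Prop :=
  ∀ (A B : L.Substructure M), (A : Set M).Finite → (B : Set M).Finite →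
    ∀ e : A →[L] B, ∃ g : M ≃[L] M, ∀ a : A, g (a : M) = (e a : M)

open FirstOrder.Language FirstOrder.Language.Structure

section Aux

variable {L : Language} [L.IsRelational] {M : Type*} [L.Structure M]

/-- Unwrapped form of HI-homogeneity for plain functions on finite sets. -/
lemma key_extend (hHI : HIHomogeneous L M) (s : Set M) (hs : s.Finite) (f : M → M)
    (hf : ∀ (n : ℕ) (r : L.Relations n) (x : Fin n → M), (∀ i, x i ∈ s) →
      RelMap r x → RelMap r (f ∘ x)) :
    ∃ g : M ↪[L] M, ∀ x ∈ s, g x = f x := by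
  classical
  set A : L.Substructure M := Substructure.closure L s with hA
  set B : L.Substructure M := Substructure.closure L (f '' s) with hB
  have hAs : (A : Set M) = s := Substructure.closure_eq_of_isRelational L s
  have hBs : (B : Set M) = f '' s := Substructure.closure_eq_of_isRelational L _
  have hmem : ∀ a : A, f (a : M) ∈ B := by
    intro a
    have : (a : M) ∈ s := by rw [← hAs]; exact a.2
    rw [← SetLike.mem_coe, hBs]
    exact ⟨a, this, rfl⟩
  let e : A →[L] B :=
    { toFun := fun a => ⟨f a, hmem a⟩
      map_fun' := fun {n} F _ => isEmptyElim F
      map_rel' := by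
        intro n r x hx
        exact hf n r (fun i => (x i : M))
          (fun i => by rw [← hAs]; exact (x i).2) hx }
  obtain ⟨g, hg⟩ := hHI A B (hAs ▸ hs) (hBs ▸ hs.image f) e
  exact ⟨g, fun x hx => hg ⟨x, by rw [← SetLike.mem_coe, hAs]; exact hx⟩⟩

lemma step_extend (hHI : HIHomogeneous L M) (g : M ↪[L] M) (s : Set M) (hs : s.Finite)
    (m : M) :
    ∃ (g' : M ↪[L] M) (s' : Set M), s'.Finite ∧ s ∪ {m} ⊆ s' ∧
      (∀ x ∈ s ∪ {m}, g' x = g x) ∧ m ∈ g' '' s' := by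
  classical
  have : Nonempty M := ⟨m⟩
  set s₁ : Set M := s ∪ {m} with hs₁def
  have hs₁ : s₁.Finite := hs.union (Set.finite_singleton m)
  -- invert g on s₁
  have hinv : ∀ x ∈ s₁, Function.invFunOn g s₁ (g x) = x := fun x hx =>
    (g.injective.injOn).leftInvOn_invFunOn hx
  have hom : ∀ (n : ℕ) (r : L.Relations n) (x : Fin n → M), (∀ i, x i ∈ g '' s₁) →
      RelMap r x → RelMap r ((Function.invFunOn g s₁) ∘ x) := by
    intro n r x hx hrel
    choose a ha hga using hx
    have hxeq : x = g ∘ a := funext fun i => (hga i).symm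
    have : RelMap r a := (g.map_rel r a).mp (by rw [← hxeq]; exact hrel)
    have heq : (Function.invFunOn g s₁) ∘ x = a := funext fun i => by
      rw [hxeq]; exact hinv (a i) (ha i)
    rwa [heq]
  obtain ⟨h, hh⟩ := key_extend hHI (g '' s₁) (hs₁.image g) (Function.invFunOn g s₁) hom
  -- hh : ∀ y ∈ g '' s₁, h y = invFunOn g s₁ y
  have hhg : ∀ x ∈ s₁, h (g x) = x := by
    intro x hx
    rw [hh (g x) ⟨x, hx, rfl⟩, hinv x hx]
  set p : M → M := fun y => if y ∈ s₁ then g y else m with hpdef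
  have hp1 : ∀ y ∈ s₁, p y = g y := fun y hy => if_pos hy
  have hp2 : p (h m) = m := by
    by_cases hmem : h m ∈ s₁
    · have : h (g (h m)) = h m := hhg _ hmem
      have := h.injective this
      simp only [p, if_pos hmem, this]
    · simp only [p, if_neg hmem]
  set s₂ : Set M := s₁ ∪ {h m} with hs₂def
  have hcomp : ∀ y ∈ s₂, h (p y) = y := by
    intro y hy
    rcases hy with hy | hy
    · rw [hp1 y hy, hhg y hy]
    · rcases hy with rfl
      rw [hp2]
  have hom2 : ∀ (n : ℕ) (r : L.Relations n) (x : Fin n → M), (∀ i, x i ∈ s₂) →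
      RelMap r x → RelMap r (p ∘ x) := by
    intro n r x hx hrel
    have hxeq : x = h ∘ (p ∘ x) := funext fun i => (hcomp (x i) (hx i)).symm
    exact (h.map_rel r (p ∘ x)).mp (by rw [← hxeq]; exact hrel)
  obtain ⟨g', hg'⟩ := key_extend hHI s₂ (hs₁.union (Set.finite_singleton _)) p hom2
  refine ⟨g', s₂, hs₁.union (Set.finite_singleton _), Set.subset_union_left, ?_, ?_⟩
  · intro x hx
    rw [hg' x (Or.inl hx), hp1 x hx]
  · exact ⟨h m, Or.inr rfl, by rw [hg' (h m) (Or.inr rfl), hp2]⟩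

end Aux

theorem HI_iff_HA (L : Language) [L.IsRelational] (M : Type*) [L.Structure M]
    [Countable M] : HIHomogeneous L M ↔ HAHomogeneous L M := by
  classical
  constructor
  · intro hHI A B hA hB e
    cases isEmpty_or_nonempty M with
    | inl hM =>
      exact ⟨Language.Equiv.refl L M, fun a => isEmptyElim (a : M)⟩
    | inr hM =>
      obtain ⟨φ, hφ⟩ := exists_surjective_nat M
      obtain ⟨g₀, hg₀⟩ := hHI A B hA hB e
      -- the sequence of (embedding, finite domain) pairs
      let D := (M ↪[L] M) × {s : Set M // s.Finite}
      have step' : ∀ (q : D) (m : M), ∃ q' : D,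
          q.2.1 ∪ {m} ⊆ q'.2.1 ∧ (∀ x ∈ q.2.1 ∪ {m}, q'.1 x = q.1 x) ∧
            m ∈ q'.1 '' q'.2.1 := by
        intro q m
        obtain ⟨g', s', hfin, hsub, hagree, hmem⟩ := step_extend hHI q.1 q.2.1 q.2.2 m
        exact ⟨⟨g', s', hfin⟩, hsub, hagree, hmem⟩
      let seq : ℕ → D := fun n =>
        Nat.rec (⟨g₀, ⟨(A : Set M), hA⟩⟩ : D) (fun n q => (step' q (φ n)).choose) n
      have hstep : ∀ n, (seq n).2.1 ∪ {φ n} ⊆ (seq (n+1)).2.1 ∧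
          (∀ x ∈ (seq n).2.1 ∪ {φ n}, (seq (n+1)).1 x = (seq n).1 x) ∧
            φ n ∈ (seq (n+1)).1 '' (seq (n+1)).2.1 :=
        fun n => (step' (seq n) (φ n)).choose_spec
      have mono : ∀ {a b : ℕ}, a ≤ b → (seq a).2.1 ⊆ (seq b).2.1 := by
        intro a b hab
        induction b, hab using Nat.le_induction with
        | base => exact subset_rfl
        | succ n hn ih =>
          exact ih.trans ((Set.subset_union_left).trans (hstep n).1)
      have agree : ∀ {a b : ℕ}, a ≤ b → ∀ x ∈ (seq a).2.1, (seq b).1 x = (seq a).1 x := by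
        intro a b hab
        induction b, hab using Nat.le_induction with
        | base => exact fun x _ => rfl
        | succ n hn ih =>
          intro x hx
          rw [(hstep n).2.1 x (Or.inl (mono hn hx)), ih x hx]
      let k : M → ℕ := fun x => (hφ x).choose
      have hk : ∀ x, φ (k x) = x := fun x => (hφ x).choose_spec
      have memk : ∀ x : M, x ∈ (seq (k x + 1)).2.1 := fun x =>
        (hstep (k x)).1 (Or.inr (by rw [hk x]; rfl))
      let F : M → M := fun x => (seq (k x + 1)).1 x
      have agreeF : ∀ (n : ℕ), ∀ x ∈ (seq n).2.1, F x = (seq n).1 x := by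
        intro n x hx
        show (seq (k x + 1)).1 x = (seq n).1 x
        rw [← agree (le_max_right n (k x + 1)) x (memk x),
          agree (le_max_left n (k x + 1)) x hx]
      have hinj : Function.Injective F := by
        intro x y hxy
        have hx := mono (le_max_left (k x + 1) (k y + 1)) (memk x)
        have hy := mono (le_max_right (k x + 1) (k y + 1)) (memk y)
        set j := max (k x + 1) (k y + 1)
        rw [agreeF j x hx, agreeF j y hy] at hxy
        exact (seq j).1.injective hxy
      have hsurj : Function.Surjective F := by
        intro m
        obtain ⟨x, hx, hgx⟩ := (hstep (k m)).2.2
        rw [hk m] at hgx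
        exact ⟨x, by rw [agreeF (k m + 1) x hx, hgx]⟩
      have hrel : ∀ {n} (r : L.Relations n) (x : Fin n → M),
          RelMap r (F ∘ x) ↔ RelMap r x := by
        intro n r x
        let j := (Finset.univ : Finset (Fin n)).sup (fun i => k (x i) + 1)
        have hx : ∀ i, x i ∈ (seq j).2.1 := fun i =>
          mono (Finset.le_sup (Finset.mem_univ i)) (memk (x i))
        have : F ∘ x = (seq j).1 ∘ x := funext fun i => agreeF j (x i) (hx i)
        rw [this]
        exact (seq j).1.map_rel r x
      refine ⟨⟨Equiv.ofBijective F ⟨hinj, hsurj⟩, fun {n} f _ => isEmptyElim f,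
        fun {n} r x => hrel r x⟩, ?_⟩
      intro a
      have ha : (a : M) ∈ (seq 0).2.1 := a.2
      show F (a : M) = (e a : M)
      rw [agreeF 0 (a : M) ha]
      exact hg₀ a
  · intro hHA A B hA hB e
    obtain ⟨g, hg⟩ := hHA A B hA hB e
    exact ⟨g.toEmbedding, hg⟩
end

section
/- Let P be a countable partial order which is IĒ-homogeneous and which is not a chain (i.e., there exist a, b ∈ P with a ∥ b). Then for every x ∈ P there exists y ∈ P with x ∥ y. -/
/-- `x` and `y` are incomparable in a poset. -/
def Incomp {P : Type*} [PartialOrder P] (x y : P) : Prop := ¬ x ≤ y ∧ ¬ y ≤ x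

/-- A finite partial isomorphism of a poset `P`. -/
def IsFinPartIso {P : Type*} [PartialOrder P] (A : Finset P) (f : P → P) : Prop :=
  ∀ a₁ ∈ A, ∀ a₂ ∈ A, (a₁ ≤ a₂ ↔ f a₁ ≤ f a₂)

/-- `P` is IĒ-homogeneous: every finite partial isomorphism of `P` extends to a
surjective ≤-preserving map `P → P`. -/
def IEbarHomogeneous (P : Type*) [PartialOrder P] : Prop :=
  ∀ (A : Finset P) (f : P → P), IsFinPartIso A f →
    ∃ g : P → P, Monotone g ∧ Function.Surjective g ∧ ∀ a ∈ A, g a = f a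

theorem IEbar_incomparable_point {P : Type*} [PartialOrder P] [Countable P]
    (hIE : IEbarHomogeneous P) (hnc : ∃ a b : P, Incomp a b) :
    ∀ x : P, ∃ y : P, Incomp x y := by
  obtain ⟨a, b, hab⟩ := hnc
  intro x
  have hiso : IsFinPartIso {x} (fun _ => a) := by
    intro a₁ h1 a₂ h2
    simp_all
  obtain ⟨g, hmono, hsurj, hext⟩ := hIE {x} _ hiso
  obtain ⟨y, hy⟩ := hsurj b
  have hgx : g x = a := hext x (Finset.mem_singleton_self x)
  refine ⟨y, ?_, ?_⟩
  · intro h; exact hab.1 (by rw [← hgx, ← hy]; exact hmono h)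
  · intro h; exact hab.2 (by rw [← hgx, ← hy]; exact hmono h)
end

section
/- The ordered rationals (ℚ, ≤) are H̄Ē-homogeneous: every ≤-preserving map f between finite subsets of ℚ (i.e., f : A → ℚ with A ⊆ ℚ finite and a₁ ≤ a₂ → f a₁ ≤ f a₂) extends to a surjective ≤-preserving map g : ℚ → ℚ. -/
/-- Piecewise-linear interpolation through a list of points, with slope-1 tails. -/
def interp : List (ℚ × ℚ) → ℚ → ℚ
  | [], x => x
  | [(a, c)], x => c + (x - a)
  | (a, c) :: (b, d) :: l, x =>
      if x ≤ a then c + (x - a)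
      else if x ≤ b then c + (d - c) * (x - a) / (b - a)
      else interp ((b, d) :: l) x

/-- The relation we assume pairwise on the node list. -/
def interpR (p q : ℚ × ℚ) : Prop := p.1 < q.1 ∧ p.2 ≤ q.2

lemma pw_head {p q : ℚ × ℚ} {l : List (ℚ × ℚ)}
    (h : (p :: q :: l).Pairwise interpR) : p.1 < q.1 ∧ p.2 ≤ q.2 :=
  (List.pairwise_cons.mp h).1 q List.mem_cons_self

lemma interp_left (a c : ℚ) (l : List (ℚ × ℚ)) (x : ℚ) (hx : x ≤ a) :
    interp ((a, c) :: l) x = c + (x - a) := by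
  match l with
  | [] => simp [interp]
  | (b, d) :: l' => simp [interp, hx]

lemma interp_lower (a c : ℚ) (l : List (ℚ × ℚ))
    (h : ((a, c) :: l).Pairwise interpR) (x : ℚ) (hx : a ≤ x) :
    c ≤ interp ((a, c) :: l) x := by
  induction l generalizing a c x with
  | nil => simp [interp]; linarith
  | cons p l ih =>
    obtain ⟨b, d⟩ := p
    have hab : a < b := (pw_head h).1
    have hcd : c ≤ d := (pw_head h).2
    rw [interp]
    split_ifs with h1 h2
    · have : x = a := le_antisymm h1 hx
      simp [this]
    · have : 0 ≤ (d - c) * (x - a) / (b - a) := by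
        apply div_nonneg
        · have := le_of_not_ge h1
          nlinarith
        · linarith
      linarith
    · have := ih b d h.of_cons x (not_le.mp h2).le
      linarith

lemma interp_mono (l : List (ℚ × ℚ)) (h : l.Pairwise interpR) :
    Monotone (interp l) := by
  induction l with
  | nil => intro x y hxy; simpa [interp] using hxy
  | cons p l ih =>
    obtain ⟨a, c⟩ := p
    match l with
    | [] =>
      intro x y hxy
      simp [interp]; linarith
    | (b, d) :: l' =>
      have hab : a < b := (pw_head h).1
      have hcd : c ≤ d := (pw_head h).2
      intro x y hxy
      rw [interp, interp]
      split_ifs with hx1 hy1 hy2 hx2 hy1' hy2'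
      · linarith
      · have : 0 ≤ (d - c) * (y - a) / (b - a) := by
          apply div_nonneg
          · have := (not_le.mp hy1).le
            nlinarith
          · linarith
        linarith
      · have hby : b ≤ y := (not_le.mp hy2).le
        have := interp_lower b d l' (h.of_cons) y hby
        linarith
      · exact absurd hxy (by push_neg; linarith [not_le.mp hx1])
      · gcongr
      · -- x in (a, b], y > b : interp at x ≤ d ≤ interp tail y
        have hby : b ≤ y := (not_le.mp hy2').le
        have h1 : (d - c) * (x - a) / (b - a) ≤ d - c := by
          rw [div_le_iff₀ (by linarith)]
          nlinarith
        have h2 := interp_lower b d l' (h.of_cons) y hby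
        linarith
      · exact absurd hxy (by push_neg; linarith [not_le.mp hx1])
      · exact absurd hxy (by push_neg; linarith [not_le.mp hx2])
      · exact ih (h.of_cons) hxy

lemma interp_agrees (l : List (ℚ × ℚ)) (h : l.Pairwise interpR) :
    ∀ p ∈ l, interp l p.1 = p.2 := by
  induction l with
  | nil => intro p hp; simp at hp
  | cons q l ih =>
    obtain ⟨a, c⟩ := q
    intro p hp
    rcases List.mem_cons.mp hp with rfl | hp'
    · rw [interp_left a c l a le_rfl]; ring
    · match l, hp' with
      | (b, d) :: l', hp' =>
        have hab : a < b := (pw_head h).1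
        have hbp : b ≤ p.1 := by
          rcases List.mem_cons.mp hp' with rfl | hp''
          · exact le_rfl
          · exact ((List.pairwise_cons.mp h.of_cons).1 p hp'').1.le
        have hap : a < p.1 := lt_of_lt_of_le hab hbp
        rw [interp]
        split_ifs with h1 h2
        · exact absurd h1 (not_le.mpr hap)
        · -- p.1 ≤ b and b ≤ p.1 so p.1 = b, and p = (b, d)
          have hpb : p.1 = b := le_antisymm h2 hbp
          have hpd : p = (b, d) := by
            rcases List.mem_cons.mp hp' with rfl | hp''
            · rfl
            · exact absurd ((List.pairwise_cons.mp h.of_cons).1 p hp'').1 (by rw [hpb]; exact lt_irrefl b)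
          have hp2 : p.2 = d := by rw [hpd]
          rw [hpb, hp2, mul_div_assoc, div_self (by linarith : b - a ≠ 0)]
          ring
        · rw [ih h.of_cons p hp']

lemma interp_surj_strong (a c : ℚ) (l : List (ℚ × ℚ))
    (h : ((a, c) :: l).Pairwise interpR) (y : ℚ) (hy : c ≤ y) :
    ∃ x, a ≤ x ∧ interp ((a, c) :: l) x = y := by
  induction l generalizing a c with
  | nil =>
    exact ⟨a + (y - c), by linarith, by simp [interp]⟩
  | cons p l ih =>
    obtain ⟨b, d⟩ := p
    have hab : a < b := (pw_head h).1
    have hcd : c ≤ d := (pw_head h).2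
    rcases eq_or_lt_of_le hy with rfl | hy'
    · exact ⟨a, le_rfl, by rw [interp_left a c _ a le_rfl]; ring⟩
    rcases le_or_gt y d with hyd | hyd
    · -- c < y ≤ d, so c < d
      have hcd' : c < d := lt_of_lt_of_le hy' hyd
      refine ⟨a + (y - c) * (b - a) / (d - c), ?_, ?_⟩
      · have : 0 < (y - c) * (b - a) / (d - c) := div_pos (mul_pos (by linarith) (by linarith)) (by linarith)
        linarith
      · rw [interp]
        have hxa : ¬ (a + (y - c) * (b - a) / (d - c) ≤ a) := by
          push_neg
          have : 0 < (y - c) * (b - a) / (d - c) := div_pos (mul_pos (by linarith) (by linarith)) (by linarith)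
          linarith
        have hxb : a + (y - c) * (b - a) / (d - c) ≤ b := by
          have h9 : (y - c) * (b - a) / (d - c) ≤ b - a := by
            rw [div_le_iff₀ (by linarith)]
            nlinarith
          linarith
        rw [if_neg hxa, if_pos hxb]
        have hba : (b : ℚ) - a ≠ 0 := by linarith
        have hdc : (d : ℚ) - c ≠ 0 := by linarith
        field_simp
        ring
    · -- y > d
      obtain ⟨x, hbx, hx⟩ := ih b d h.of_cons hyd.le
      have hbx' : b < x := by
        rcases eq_or_lt_of_le hbx with rfl | h'
        · exfalso
          have := interp_agrees ((b, d) :: l) h.of_cons (b, d) (by simp)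
          simp only at this
          rw [this] at hx
          linarith
        · exact h'
      refine ⟨x, by linarith, ?_⟩
      rw [interp, if_neg (by linarith), if_neg (by linarith)]
      exact hx

lemma interp_surj (l : List (ℚ × ℚ)) (h : l.Pairwise interpR) :
    Function.Surjective (interp l) := by
  match l with
  | [] => intro y; exact ⟨y, rfl⟩
  | (a, c) :: l =>
    intro y
    rcases le_or_gt y c with hy | hy
    · refine ⟨a + (y - c), ?_⟩
      rw [interp_left a c l _ (by linarith)]
      ring
    · obtain ⟨x, _, hx⟩ := interp_surj_strong a c l h y hy.le
      exact ⟨x, hx⟩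

/-- The ordered rationals are H̄Ē-homogeneous: every ≤-preserving map between finite
subsets of `ℚ` extends to a surjective ≤-preserving map `ℚ → ℚ`. -/
theorem rat_HbarEbar :
    ∀ (A : Finset ℚ) (f : ℚ → ℚ), (∀ a₁ ∈ A, ∀ a₂ ∈ A, a₁ ≤ a₂ → f a₁ ≤ f a₂) →
      ∃ g : ℚ → ℚ, Monotone g ∧ Function.Surjective g ∧ ∀ a ∈ A, g a = f a := by
  intro A f hf
  set L := A.sort (· ≤ ·) with hL
  set l := L.map (fun a => (a, f a)) with hl
  have hsorted : L.Pairwise (· < ·) := A.sortedLT_sort.pairwise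
  have hmem : ∀ a ∈ L, a ∈ A := fun a ha => (Finset.mem_sort _).mp ha
  have hpw : l.Pairwise interpR := by
    rw [hl]
    rw [List.pairwise_map]
    refine hsorted.imp_of_mem ?_
    intro a b ha hb hab
    exact ⟨hab, hf a (hmem a ha) b (hmem b hb) hab.le⟩
  refine ⟨interp l, interp_mono l hpw, interp_surj l hpw, ?_⟩
  intro a ha
  have : (a, f a) ∈ l := by
    rw [hl]
    exact List.mem_map_of_mem ((Finset.mem_sort _).mpr ha)
  exact interp_agrees l hpw (a, f a) this
end

section
/- Let B_ω be the countably infinite disjoint union of copies of (ℚ, <), i.e., ℕ × ℚ ordered by (i, q) ≤ (j, r) iff i = j and q ≤ r. Then: (a) B_ω is MB-homogeneous: every injective <-preserving map between finite subsets of B_ω extends to a bijective <-preserving map B_ω → B_ω; (b) B_ω is HE-homogeneous: every <-preserving map between finite subsets of B_ω extends to a surjective <-preserving map B_ω → B_ω; (c) B_ω is H̄Ē-homogeneous: every ≤-preserving map between finite subsets of B_ω extends to a surjective ≤-preserving map B_ω → B_ω. -/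
/-- The order on a disjoint union `ι × ℚ` of copies of `ℚ`:
`(i, q) ≤ (j, r)` iff `i = j` and `q ≤ r`. -/
def Dle {ι : Type*} (x y : ι × ℚ) : Prop := x.1 = y.1 ∧ x.2 ≤ y.2

/-- The strict order: `(i, q) < (j, r)` iff `i = j` and `q < r`. -/
def Dlt {ι : Type*} (x y : ι × ℚ) : Prop := x.1 = y.1 ∧ x.2 < y.2


/-! ### Auxiliary machinery -/

/-- A subset of ℚ that is nonempty, densely ordered in itself, with no min and no max. -/
def Good (X : Set ℚ) : Prop :=
  X.Nonempty ∧ (∀ a ∈ X, ∀ b ∈ X, a < b → ∃ c ∈ X, a < c ∧ c < b) ∧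
  (∀ a ∈ X, ∃ b ∈ X, b < a) ∧ (∀ a ∈ X, ∃ b ∈ X, a < b)

lemma good_univ : Good (Set.univ : Set ℚ) := by
  refine ⟨⟨0, trivial⟩, ?_, ?_, ?_⟩
  · intro a _ b _ hab; exact ⟨(a+b)/2, trivial, by linarith, by linarith⟩
  · intro a _; exact ⟨a-1, trivial, by linarith⟩
  · intro a _; exact ⟨a+1, trivial, by linarith⟩

lemma good_of_dense {X : Set ℚ} (h : ∀ a b : ℚ, a < b → ∃ c ∈ X, a < c ∧ c < b) :
    Good X := by
  refine ⟨?_, ?_, ?_, ?_⟩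
  · obtain ⟨c, hc, -⟩ := h 0 1 (by norm_num); exact ⟨c, hc⟩
  · intro a _ b _ hab; exact h a b hab
  · intro a _; obtain ⟨c, hc, -, h2⟩ := h (a-1) a (by linarith); exact ⟨c, hc, h2⟩
  · intro a _; obtain ⟨c, hc, h1, -⟩ := h a (a+1) (by linarith); exact ⟨c, hc, h1⟩
lemma exists_iso_of_good {X Y : Set ℚ} (hX : Good X) (hY : Good Y) :
    ∃ h : ℚ → ℚ, StrictMonoOn h X ∧ h '' X = Y := by
  obtain ⟨hXne, hXd, hXmin, hXmax⟩ := hX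
  obtain ⟨hYne, hYd, hYmin, hYmax⟩ := hY
  haveI : Nonempty X := hXne.to_subtype
  haveI : Nonempty Y := hYne.to_subtype
  haveI : DenselyOrdered X := ⟨fun a b hab => by
    obtain ⟨c, hc, h1, h2⟩ := hXd a a.2 b b.2 hab
    exact ⟨⟨c, hc⟩, h1, h2⟩⟩
  haveI : DenselyOrdered Y := ⟨fun a b hab => by
    obtain ⟨c, hc, h1, h2⟩ := hYd a a.2 b b.2 hab
    exact ⟨⟨c, hc⟩, h1, h2⟩⟩
  haveI : NoMinOrder X := ⟨fun a => by
    obtain ⟨b, hb, h1⟩ := hXmin a a.2; exact ⟨⟨b, hb⟩, h1⟩⟩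
  haveI : NoMaxOrder X := ⟨fun a => by
    obtain ⟨b, hb, h1⟩ := hXmax a a.2; exact ⟨⟨b, hb⟩, h1⟩⟩
  haveI : NoMinOrder Y := ⟨fun a => by
    obtain ⟨b, hb, h1⟩ := hYmin a a.2; exact ⟨⟨b, hb⟩, h1⟩⟩
  haveI : NoMaxOrder Y := ⟨fun a => by
    obtain ⟨b, hb, h1⟩ := hYmax a a.2; exact ⟨⟨b, hb⟩, h1⟩⟩
  obtain ⟨e⟩ := Order.iso_of_countable_dense (α := X) (β := Y)
  classical
  refine ⟨fun q => if hq : q ∈ X then (e ⟨q, hq⟩ : ℚ) else 0, ?_, ?_⟩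
  · intro a ha b hb hab
    simp only [dif_pos ha, dif_pos hb]
    exact_mod_cast e.strictMono (show (⟨a, ha⟩ : X) < ⟨b, hb⟩ from hab)
  · ext y; constructor
    · rintro ⟨x, hx, rfl⟩
      simp only [dif_pos hx]
      exact (e ⟨x, hx⟩).2
    · intro hy
      refine ⟨e.symm ⟨y, hy⟩, (e.symm ⟨y, hy⟩).2, ?_⟩
      simp only [dif_pos (e.symm ⟨y, hy⟩).2]
      rw [Subtype.coe_eta, OrderIso.apply_symm_apply]
lemma good_inter_Iio {X : Set ℚ} (hX : Good X) {s : ℚ} (hs : s ∈ X) :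
    Good (X ∩ Set.Iio s) := by
  obtain ⟨-, hd, hmin, hmax⟩ := hX
  refine ⟨?_, ?_, ?_, ?_⟩
  · obtain ⟨b, hb, h1⟩ := hmin s hs; exact ⟨b, hb, h1⟩
  · rintro a ⟨ha, ha'⟩ b ⟨hb, hb'⟩ hab
    obtain ⟨c, hc, h1, h2⟩ := hd a ha b hb hab
    exact ⟨c, ⟨hc, lt_trans h2 hb'⟩, h1, h2⟩
  · rintro a ⟨ha, ha'⟩
    obtain ⟨b, hb, h1⟩ := hmin a ha
    exact ⟨b, ⟨hb, lt_trans h1 ha'⟩, h1⟩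
  · rintro a ⟨ha, ha'⟩
    obtain ⟨c, hc, h1, h2⟩ := hd a ha s hs ha'
    exact ⟨c, ⟨hc, h2⟩, h1⟩

lemma good_inter_Ioi {X : Set ℚ} (hX : Good X) {s : ℚ} (hs : s ∈ X) :
    Good (X ∩ Set.Ioi s) := by
  obtain ⟨-, hd, hmin, hmax⟩ := hX
  refine ⟨?_, ?_, ?_, ?_⟩
  · obtain ⟨b, hb, h1⟩ := hmax s hs; exact ⟨b, hb, h1⟩
  · rintro a ⟨ha, ha'⟩ b ⟨hb, hb'⟩ hab
    obtain ⟨c, hc, h1, h2⟩ := hd a ha b hb hab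
    exact ⟨c, ⟨hc, lt_trans ha' h1⟩, h1, h2⟩
  · rintro a ⟨ha, ha'⟩
    obtain ⟨c, hc, h1, h2⟩ := hd s hs a ha ha'
    exact ⟨c, ⟨hc, h1⟩, h2⟩
  · rintro a ⟨ha, ha'⟩
    obtain ⟨b, hb, h1⟩ := hmax a ha
    exact ⟨b, ⟨hb, lt_trans ha' h1⟩, h1⟩

/-- Extension of a finite strictly monotone partial map to an order isomorphism
between Good sets. -/
lemma lemB : ∀ (n : ℕ) (S : Finset ℚ) (X Y : Set ℚ) (k : ℚ → ℚ), S.card = n →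
    Good X → Good Y → ↑S ⊆ X → StrictMonoOn k ↑S → (∀ s ∈ S, k s ∈ Y) →
    ∃ h : ℚ → ℚ, StrictMonoOn h X ∧ h '' X = Y ∧ ∀ s ∈ S, h s = k s := by
  intro n
  induction n with
  | zero =>
    intro S X Y k hcard hX hY _ _ _
    obtain ⟨h, h1, h2⟩ := exists_iso_of_good hX hY
    exact ⟨h, h1, h2, fun s hs => absurd hs (by simp [Finset.card_eq_zero.mp hcard])⟩
  | succ n ih =>
    intro S X Y k hcard hX hY hSX hk hkY
    have hS : S.Nonempty := Finset.card_pos.mp (by omega)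
    set s := S.max' hS with hs_def
    have hsS : s ∈ S := S.max'_mem hS
    have hsX : s ∈ X := hSX hsS
    have hvY : k s ∈ Y := hkY s hsS
    set v := k s with hv_def
    set S' := S.erase s with hS'_def
    have hS'lt : ∀ s' ∈ S', s' < s := fun s' hs' =>
      lt_of_le_of_ne (S.le_max' s' (Finset.mem_of_mem_erase hs'))
        (Finset.ne_of_mem_erase hs')
    have hX1 := good_inter_Iio hX hsX
    have hY1 := good_inter_Iio hY hvY
    obtain ⟨h₁, hm₁, him₁, hext₁⟩ := ih S' (X ∩ Set.Iio s) (Y ∩ Set.Iio v) k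
      (by rw [hS'_def, Finset.card_erase_of_mem hsS, hcard]; omega) hX1 hY1
      (fun x hx => by
        rcases hx with hx
        have hx' := Finset.mem_coe.mp hx
        exact ⟨hSX (Finset.mem_of_mem_erase hx'), hS'lt _ hx'⟩)
      (hk.mono (fun x hx => Finset.mem_coe.mpr (Finset.mem_of_mem_erase (Finset.mem_coe.mp hx))))
      (fun x hx => ⟨hkY x (Finset.mem_of_mem_erase hx),
        hk (Finset.mem_of_mem_erase hx) hsS (hS'lt x hx)⟩)
    obtain ⟨h₂, hm₂, him₂⟩ := exists_iso_of_good (good_inter_Ioi hX hsX) (good_inter_Ioi hY hvY)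
    classical
    refine ⟨fun q => if q < s then h₁ q else if q = s then v else h₂ q, ?_, ?_, ?_⟩
    · -- strict mono on X
      intro a ha b hb hab
      have hmem₁ : ∀ x ∈ X, x < s → h₁ x ∈ Y ∩ Set.Iio v := fun x hx hxs =>
        him₁ ▸ Set.mem_image_of_mem h₁ (⟨hx, hxs⟩ : x ∈ X ∩ Set.Iio s)
      have hmem₂ : ∀ x ∈ X, s < x → h₂ x ∈ Y ∩ Set.Ioi v := fun x hx hxs =>
        him₂ ▸ Set.mem_image_of_mem h₂ (⟨hx, hxs⟩ : x ∈ X ∩ Set.Ioi s)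
      simp only
      rcases lt_trichotomy a s with ha' | ha' | ha' <;>
        rcases lt_trichotomy b s with hb' | hb' | hb'
      · rw [if_pos ha', if_pos hb']
        exact hm₁ ⟨ha, ha'⟩ ⟨hb, hb'⟩ hab
      · rw [if_pos ha', if_neg (by rw [hb']; exact lt_irrefl s), if_pos hb']
        exact (hmem₁ a ha ha').2
      · rw [if_pos ha', if_neg (asymm hb'), if_neg (ne_of_gt hb')]
        exact lt_trans (hmem₁ a ha ha').2 (hmem₂ b hb hb').2
      · exact absurd (ha' ▸ hab) (asymm hb')
      · exact absurd hab (by rw [ha', hb']; exact lt_irrefl s)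
      · rw [if_neg (by rw [ha']; exact lt_irrefl s), if_pos ha',
          if_neg (asymm hb'), if_neg (ne_of_gt hb')]
        exact (hmem₂ b hb hb').2
      · exact absurd (lt_trans (lt_trans ha' hab) hb') (lt_irrefl s)
      · exact absurd (lt_trans ha' (hb' ▸ hab)) (lt_irrefl s)
      · rw [if_neg (asymm ha'), if_neg (ne_of_gt ha'), if_neg (asymm hb'),
          if_neg (ne_of_gt hb')]
        exact hm₂ ⟨ha, ha'⟩ ⟨hb, hb'⟩ hab
    · -- image
      ext y; constructor
      · rintro ⟨x, hx, rfl⟩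
        rcases lt_trichotomy x s with hx' | hx' | hx'
        · simp only [if_pos hx']
          exact (him₁ ▸ Set.mem_image_of_mem h₁ (⟨hx, hx'⟩ : x ∈ X ∩ Set.Iio s) :
            h₁ x ∈ Y ∩ Set.Iio v).1
        · simp only [hx', if_neg (lt_irrefl s), if_pos rfl]; exact hvY
        · simp only [if_neg (asymm hx'), if_neg (ne_of_gt hx')]
          exact (him₂ ▸ Set.mem_image_of_mem h₂ (⟨hx, hx'⟩ : x ∈ X ∩ Set.Ioi s) :
            h₂ x ∈ Y ∩ Set.Ioi v).1
      · intro hy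
        rcases lt_trichotomy y v with hy' | hy' | hy'
        · have : y ∈ h₁ '' (X ∩ Set.Iio s) := him₁ ▸ ⟨hy, hy'⟩
          obtain ⟨x, ⟨hx1, hx2⟩, rfl⟩ := this
          exact ⟨x, hx1, by simp only; rw [if_pos (show x < s from hx2)]⟩
        · exact ⟨s, hsX, by simp [hy']⟩
        · have : y ∈ h₂ '' (X ∩ Set.Ioi s) := him₂ ▸ ⟨hy, hy'⟩
          obtain ⟨x, ⟨hx1, hx2⟩, rfl⟩ := this
          exact ⟨x, hx1, by simp only; rw [if_neg (asymm (show s < x from hx2)), if_neg (ne_of_gt (show s < x from hx2))]⟩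
    · -- extension
      intro t ht
      rcases eq_or_ne t s with h | hts
      · simp only
        rw [if_neg (by rw [h]; exact lt_irrefl s), if_pos h, h]
      · have htS' : t ∈ S' := Finset.mem_erase.mpr ⟨hts, ht⟩
        have := hS'lt t htS'
        simp only [if_pos this]
        exact hext₁ t htS'
def Dcl (k t : ℕ) : Set ℚ := {q : ℚ | (q.num % (k : ℤ)).toNat = t}

lemma Dcl_mem_iff {k t : ℕ} (q : ℚ) : q ∈ Dcl k t ↔ (q.num % (k : ℤ)).toNat = t :=
  Iff.rfl

lemma Dcl_cover {k : ℕ} (hk : 0 < k) (q : ℚ) :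
    ∃ t < k, q ∈ Dcl k t := by
  refine ⟨(q.num % (k : ℤ)).toNat, ?_, rfl⟩
  have h1 : 0 ≤ q.num % (k : ℤ) := Int.emod_nonneg _ (by exact_mod_cast hk.ne')
  have h2 : q.num % (k : ℤ) < k := Int.emod_lt_of_pos _ (by exact_mod_cast hk)
  omega

lemma Dcl_disj {k t t' : ℕ} {q : ℚ} (h : q ∈ Dcl k t) (h' : q ∈ Dcl k t') : t = t' := by
  rw [Dcl_mem_iff] at h h'; omega

lemma Dcl_dense {k t : ℕ} (hk : 0 < k) (ht : t < k) :
    ∀ a b : ℚ, a < b → ∃ q ∈ Dcl k t, a < q ∧ q < b := by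
  intro a b hab
  set N : ℕ := ⌈(3 * (k : ℚ) + 1) / (b - a)⌉₊ + 1 with hN
  obtain ⟨p, hple, hp⟩ := Nat.exists_infinite_primes (max (k + 1) N)
  have hpk : k < p := lt_of_lt_of_le (Nat.lt_succ_self k) (le_trans (le_max_left _ _) hple)
  have hpN : (N : ℚ) ≤ p := by exact_mod_cast le_trans (le_max_right _ _) hple
  have hba : 0 < b - a := by linarith
  have hbap : 3 * (k : ℚ) + 1 ≤ (b - a) * p := by
    have h1 : (3 * (k : ℚ) + 1) / (b - a) ≤ (⌈(3 * (k : ℚ) + 1) / (b - a)⌉₊ : ℚ) :=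
      Nat.le_ceil _
    have h2 : ((⌈(3 * (k : ℚ) + 1) / (b - a)⌉₊ : ℚ)) ≤ (N : ℚ) := by
      rw [hN]; push_cast; linarith
    have := le_trans (le_trans h1 h2) hpN
    rw [div_le_iff₀ hba] at this
    linarith [this]
  have hp0 : (0 : ℚ) < p := by exact_mod_cast hp.pos
  -- choose the integer m
  set α : ℚ := a * p with hα
  set j : ℤ := ⌊(α - t) / k⌋ + 1 with hj
  set m : ℤ := t + k * j with hm
  have hk0 : (0 : ℚ) < k := by exact_mod_cast hk
  have hαm : α < (m : ℚ) := by
    have h1 : (α - t) / k < ((⌊(α - t) / k⌋ : ℤ) : ℚ) + 1 := Int.lt_floor_add_one _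
    have h2 : α - t < k * (((⌊(α - t) / k⌋ : ℤ) : ℚ) + 1) := by
      rw [div_lt_iff₀ hk0] at h1; linarith
    push_cast [hm, hj]
    linarith
  have hmle : (m : ℚ) ≤ α + k := by
    have h1 : ((⌊(α - t) / k⌋ : ℤ) : ℚ) ≤ (α - t) / k := Int.floor_le _
    have h2 : ((⌊(α - t) / k⌋ : ℤ) : ℚ) * k ≤ α - t := by
      rw [← le_div_iff₀ hk0]; exact h1
    push_cast [hm, hj]
    linarith
  -- pick m or m + k to avoid divisibility by p
  have hkdvd : ¬ ((p : ℤ) ∣ (k : ℤ)) := by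
    intro hdvd
    have := Int.le_of_dvd (by exact_mod_cast hk) hdvd
    omega
  have key : ∃ m' : ℤ, ¬ ((p : ℤ) ∣ m') ∧ α < (m' : ℚ) ∧ (m' : ℚ) ≤ α + 2 * k ∧
      m' % (k : ℤ) = (t : ℤ) % (k : ℤ) := by
    by_cases hdvd : (p : ℤ) ∣ m
    · refine ⟨m + k, ?_, by push_cast; linarith, by push_cast; linarith, ?_⟩
      · intro hdvd2
        have : (p : ℤ) ∣ (k : ℤ) := by simpa using Int.dvd_sub hdvd2 hdvd
        exact hkdvd this
      · have hrw : m + k = t + k * (j + 1) := by rw [hm]; ring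
        rw [hrw]; exact Int.add_mul_emod_self_left ..
    · exact ⟨m, hdvd, hαm, by linarith, by rw [hm]; exact Int.add_mul_emod_self_left ..⟩
  obtain ⟨m', hnd, hα1, hα2, hmod⟩ := key
  have hmodt : m' % (k : ℤ) = t := by
    have h0 : (t : ℤ) % (k : ℤ) = t := Int.emod_eq_of_lt (by positivity) (by exact_mod_cast ht)
    rw [hmod, h0]
  -- the rational
  refine ⟨(m' : ℚ) / (p : ℚ), ?_, ?_, ?_⟩
  · rw [Dcl_mem_iff]
    have hcop : Nat.Coprime m'.natAbs ((p : ℤ)).natAbs := by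
      rw [Int.natAbs_natCast]
      refine Nat.Coprime.symm ((Nat.Prime.coprime_iff_not_dvd hp).mpr ?_)
      intro hd
      exact hnd (Int.natAbs_dvd_natAbs.mp (by simpa using hd))
    have : ((m' : ℚ) / (p : ℚ)).num = m' := by
      have := Rat.num_div_eq_of_coprime (a := m') (b := (p : ℤ)) (by exact_mod_cast hp0) hcop
      simpa using this
    rw [this, hmodt]
    simp
  · rw [lt_div_iff₀ hp0]; exact hα1
  · rw [div_lt_iff₀ hp0]
    have : α + 2 * k < b * p := by
      rw [hα]; nlinarith
    linarith
lemma pickPoints : ∀ (n : ℕ) (F : Finset ℚ) (W : ℚ → Set ℚ), F.card = n →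
    (∀ x ∈ F, ∀ a b : ℚ, a < b → ∃ c ∈ W x, a < c ∧ c < b) →
    ∃ p : ℚ → ℚ, StrictMonoOn p ↑F ∧ ∀ x ∈ F, p x ∈ W x := by
  intro n
  induction n with
  | zero =>
    intro F W hcard _
    refine ⟨id, ?_, ?_⟩ <;> simp [Finset.card_eq_zero.mp hcard]
    · intro a ha; simp [Finset.card_eq_zero.mp hcard] at ha
  | succ n ih =>
    intro F W hcard hW
    classical
    have hF : F.Nonempty := Finset.card_pos.mp (by omega)
    set x := F.max' hF with hx_def
    have hxF : x ∈ F := F.max'_mem hF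
    set F' := F.erase x with hF'_def
    have hF'lt : ∀ y ∈ F', y < x := fun y hy =>
      lt_of_le_of_ne (F.le_max' y (Finset.mem_of_mem_erase hy)) (Finset.ne_of_mem_erase hy)
    obtain ⟨p', hm', hw'⟩ := ih F' W (by rw [hF'_def, Finset.card_erase_of_mem hxF, hcard]; omega)
      (fun y hy => hW y (Finset.mem_of_mem_erase hy))
    set B : ℚ := if hne : F'.Nonempty then p' (F'.max' hne) else 0 with hB_def
    have hBle : ∀ y ∈ F', p' y ≤ B := by
      intro y hy
      have hne : F'.Nonempty := ⟨y, hy⟩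
      rw [hB_def, dif_pos hne]
      rcases eq_or_lt_of_le (F'.le_max' y hy) with h | h
      · rw [h]
      · exact le_of_lt (hm' hy (F'.max'_mem hne) h)
    obtain ⟨c, hcW, hc1, hc2⟩ := hW x hxF B (B + 1) (by linarith)
    refine ⟨Function.update p' x c, ?_, ?_⟩
    · intro y hy z hz hyz
      have hzF := Finset.mem_coe.mp hz
      have hyF := Finset.mem_coe.mp hy
      rcases eq_or_ne z x with rfl | hzx
      · have hyF' : y ∈ F' := Finset.mem_erase.mpr ⟨ne_of_lt hyz, hyF⟩
        rw [Function.update_self, Function.update_of_ne (Finset.ne_of_mem_erase hyF') _ _]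
        exact lt_of_le_of_lt (hBle y hyF') hc1
      · have hzF' : z ∈ F' := Finset.mem_erase.mpr ⟨hzx, hzF⟩
        have hyx : y ≠ x := by
          intro h; rw [h] at hyz; exact absurd (lt_trans hyz (hF'lt z hzF')) (lt_irrefl x)
        have hyF' : y ∈ F' := Finset.mem_erase.mpr ⟨hyx, hyF⟩
        rw [Function.update_of_ne hyx _ _, Function.update_of_ne hzx _ _]
        exact hm' hyF' hzF' hyz
    · intro y hy
      rcases eq_or_ne y x with rfl | hyx
      · rw [Function.update_self]; exact hcW
      · rw [Function.update_of_ne hyx _ _]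
        exact hw' y (Finset.mem_erase.mpr ⟨hyx, hy⟩)

lemma monoExt (S : Finset ℚ) (hS : S.Nonempty) (k : ℚ → ℚ) (hk : MonotoneOn k ↑S) :
    ∃ h : ℚ → ℚ, Monotone h ∧ ∀ s ∈ S, h s = k s := by
  classical
  refine ⟨fun q => if hq : ((S.filter (· ≤ q)).Nonempty) then
    k ((S.filter (· ≤ q)).max' hq) else k (S.min' hS), ?_, ?_⟩
  · intro q q' hqq'
    simp only
    by_cases hq : (S.filter (· ≤ q)).Nonempty
    · have hsub : S.filter (· ≤ q) ⊆ S.filter (· ≤ q') := by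
        intro y hy
        rw [Finset.mem_filter] at *
        exact ⟨hy.1, le_trans hy.2 hqq'⟩
      have hq' : (S.filter (· ≤ q')).Nonempty := hq.mono hsub
      rw [dif_pos hq, dif_pos hq']
      have h1 : (S.filter (· ≤ q)).max' hq ∈ S.filter (· ≤ q) := Finset.max'_mem _ _
      have h2 : (S.filter (· ≤ q')).max' hq' ∈ S.filter (· ≤ q') := Finset.max'_mem _ _
      rw [Finset.mem_filter] at h1 h2
      exact hk h1.1 h2.1 (Finset.le_max' _ _ (hsub (Finset.mem_filter.mpr h1)))
    · rw [dif_neg hq]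
      by_cases hq' : (S.filter (· ≤ q')).Nonempty
      · rw [dif_pos hq']
        have h2 : (S.filter (· ≤ q')).max' hq' ∈ S.filter (· ≤ q') := Finset.max'_mem _ _
        rw [Finset.mem_filter] at h2
        exact hk (S.min'_mem hS) h2.1 (S.min'_le _ h2.1)
      · rw [dif_neg hq']
  · intro s hs
    have hsf : s ∈ S.filter (· ≤ s) := Finset.mem_filter.mpr ⟨hs, le_refl s⟩
    have hne : (S.filter (· ≤ s)).Nonempty := ⟨s, hsf⟩
    simp only [dif_pos hne]
    congr 1
    refine le_antisymm ?_ (Finset.le_max' _ _ hsf)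
    have := Finset.max'_mem (S.filter (· ≤ s)) hne
    rw [Finset.mem_filter] at this
    exact this.2
/-- Per-target-copy construction: a finite disjoint family of partial monomorphisms
into a single copy of ℚ extends to a family whose ranges partition ℚ. -/
lemma PT (P : Finset ℕ) (hP : P.Nonempty) (S : ℕ → Finset ℚ)
    (k : ℕ → ℚ → ℚ) (hmono : ∀ i ∈ P, StrictMonoOn (k i) ↑(S i))
    (hinj : ∀ i ∈ P, ∀ j ∈ P, ∀ q ∈ S i, ∀ r ∈ S j, k i q = k j r → i = j ∧ q = r) :
    ∃ H : ℕ → ℚ → ℚ, (∀ i ∈ P, StrictMono (H i)) ∧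
      (∀ i ∈ P, ∀ q ∈ S i, H i q = k i q) ∧
      (∀ y : ℚ, ∃ i ∈ P, ∃ q, H i q = y) ∧
      (∀ i ∈ P, ∀ j ∈ P, ∀ q r, H i q = H j r → i = j ∧ q = r) := by
  classical
  set n := P.card with hn_def
  have hn : 0 < n := Finset.card_pos.mpr hP
  set e := P.orderIsoOfFin rfl with he_def
  set cl : ℕ → ℕ := fun i => if h : i ∈ P then (e.symm ⟨i, h⟩ : Fin n).val else 0 with hcl_def
  have hcl_lt : ∀ i ∈ P, cl i < n := by
    intro i hi; rw [hcl_def]; simp only [dif_pos hi]; exact (e.symm ⟨i, hi⟩).isLt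
  have hcl_inj : ∀ i ∈ P, ∀ j ∈ P, cl i = cl j → i = j := by
    intro i hi j hj hij
    rw [hcl_def] at hij; simp only [dif_pos hi, dif_pos hj] at hij
    have := e.symm.injective (Fin.val_injective hij)
    exact Subtype.ext_iff.mp this
  have hcl_surj : ∀ t, t < n → ∃ i ∈ P, cl i = t := by
    intro t ht
    refine ⟨(e ⟨t, ht⟩ : {x // x ∈ P}).val, (e ⟨t, ht⟩).2, ?_⟩
    rw [hcl_def]; simp only [dif_pos (e ⟨t, ht⟩).2]
    rw [Subtype.coe_eta, OrderIso.symm_apply_apply]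
  set D : ℕ → Set ℚ := fun i => Dcl n (cl i) with hD_def
  have hDdense : ∀ i ∈ P, ∀ a b : ℚ, a < b → ∃ c ∈ D i, a < c ∧ c < b := by
    intro i hi; exact Dcl_dense hn (hcl_lt i hi)
  have hDcover : ∀ y : ℚ, ∃ i ∈ P, y ∈ D i := by
    intro y
    obtain ⟨t, ht, hyt⟩ := Dcl_cover hn y
    obtain ⟨i, hi, hcli⟩ := hcl_surj t ht
    exact ⟨i, hi, by rw [hD_def]; simp only; rw [hcli]; exact hyt⟩
  have hDdisj : ∀ i ∈ P, ∀ j ∈ P, ∀ y : ℚ, y ∈ D i → y ∈ D j → i = j := by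
    intro i hi j hj y h1 h2
    exact hcl_inj i hi j hj (Dcl_disj h1 h2)
  -- the finite set of prescribed values, with its coloring
  set F : Finset ℚ := P.biUnion (fun i => (S i).image (k i)) with hF_def
  have hmemF : ∀ i ∈ P, ∀ q ∈ S i, k i q ∈ F := by
    intro i hi q hq
    rw [hF_def, Finset.mem_biUnion]
    exact ⟨i, hi, Finset.mem_image_of_mem _ hq⟩
  set γ : ℚ → ℕ := fun y =>
    if h : ∃ i, i ∈ P ∧ ∃ q, q ∈ S i ∧ k i q = y then h.choose else 0 with hγ_def
  have hγ : ∀ i ∈ P, ∀ q ∈ S i, γ (k i q) = i := by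
    intro i hi q hq
    have h : ∃ i', i' ∈ P ∧ ∃ q', q' ∈ S i' ∧ k i' q' = k i q := ⟨i, hi, q, hq, rfl⟩
    rw [hγ_def]; simp only [dif_pos h]
    obtain ⟨hi', q', hq', heq⟩ := h.choose_spec
    exact (hinj h.choose hi' i hi q' hq' q hq heq).1
  -- pick the anchor points
  obtain ⟨p, hpmono, hpW⟩ := pickPoints F.card F (fun y => D (γ y)) rfl (by
    intro x hx a b hab
    rw [hF_def, Finset.mem_biUnion] at hx
    obtain ⟨i, hi, hx⟩ := hx
    rw [Finset.mem_image] at hx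
    obtain ⟨q, hq, rfl⟩ := hx
    rw [hγ i hi q hq]
    exact hDdense i hi a b hab)
  -- the global repositioning map Ψ
  set F' : Finset ℚ := F.image p with hF'_def
  set k' : ℚ → ℚ := fun y => if h : ∃ x, x ∈ F ∧ p x = y then h.choose else 0 with hk'_def
  have hpinj : ∀ x ∈ F, ∀ x' ∈ F, p x = p x' → x = x' := by
    intro x hx x' hx' hpp
    rcases lt_trichotomy x x' with h | h | h
    · exact absurd (hpmono hx hx' h) (by rw [hpp]; exact lt_irrefl _)
    · exact h
    · exact absurd (hpmono hx' hx h) (by rw [hpp]; exact lt_irrefl _)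
  have hk' : ∀ x ∈ F, k' (p x) = x := by
    intro x hx
    have h : ∃ x', x' ∈ F ∧ p x' = p x := ⟨x, hx, rfl⟩
    rw [hk'_def]; simp only [dif_pos h]
    exact hpinj h.choose h.choose_spec.1 x hx h.choose_spec.2
  have hk'mono : StrictMonoOn k' ↑F' := by
    intro y₁ hy₁ y₂ hy₂ h12
    rw [hF'_def, Finset.coe_image] at hy₁ hy₂
    obtain ⟨x₁, hx₁, rfl⟩ := hy₁
    obtain ⟨x₂, hx₂, rfl⟩ := hy₂
    rw [hk' x₁ hx₁, hk' x₂ hx₂]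
    rcases lt_trichotomy x₁ x₂ with h | h | h
    · exact h
    · exact absurd h12 (by rw [h]; exact lt_irrefl _)
    · exact absurd (lt_trans h12 (hpmono hx₂ hx₁ h)) (lt_irrefl _)
  obtain ⟨Ψ, hΨmono, hΨim, hΨext⟩ := lemB F'.card F' Set.univ Set.univ k' rfl
    good_univ good_univ (Set.subset_univ _) hk'mono (fun _ _ => Set.mem_univ _)
  have hΨsm : StrictMono Ψ := fun a b hab => hΨmono (Set.mem_univ a) (Set.mem_univ b) hab
  have hΨsurj : ∀ y : ℚ, ∃ z, Ψ z = y := by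
    intro y
    have : y ∈ Ψ '' Set.univ := by rw [hΨim]; exact Set.mem_univ y
    obtain ⟨z, _, hz⟩ := this
    exact ⟨z, hz⟩
  have hΨp : ∀ x ∈ F, Ψ (p x) = x := by
    intro x hx
    have : p x ∈ F' := by rw [hF'_def]; exact Finset.mem_image_of_mem _ hx
    rw [hΨext _ this, hk' x hx]
  -- the per-copy maps onto the pieces
  have hG : ∀ i : ℕ, ∃ g : ℚ → ℚ, i ∈ P →
      (StrictMono g ∧ g '' Set.univ = D i ∧ ∀ q ∈ S i, g q = p (k i q)) := by
    intro i
    by_cases hi : i ∈ P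
    · obtain ⟨g, h1, h2, h3⟩ := lemB (S i).card (S i) Set.univ (D i)
        (fun q => p (k i q)) rfl good_univ (good_of_dense (hDdense i hi))
        (Set.subset_univ _)
        (by
          intro q hq r hr hqr
          exact hpmono (hmemF i hi q hq) (hmemF i hi r hr)
            (hmono i hi hq hr hqr))
        (by
          intro q hq
          have := hpW (k i q) (hmemF i hi q hq)
          rwa [hγ i hi q hq] at this)
      exact ⟨g, fun _ => ⟨fun a b hab => h1 (Set.mem_univ a) (Set.mem_univ b) hab, h2, h3⟩⟩
    · exact ⟨id, fun h => absurd h hi⟩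
  choose G hGspec using hG
  refine ⟨fun i => Ψ ∘ G i, ?_, ?_, ?_, ?_⟩
  · intro i hi
    exact hΨsm.comp (hGspec i hi).1
  · intro i hi q hq
    simp only [Function.comp_apply]
    rw [(hGspec i hi).2.2 q hq, hΨp _ (hmemF i hi q hq)]
  · intro y
    obtain ⟨z, hz⟩ := hΨsurj y
    obtain ⟨i, hi, hzD⟩ := hDcover z
    have : z ∈ G i '' Set.univ := by rw [(hGspec i hi).2.1]; exact hzD
    obtain ⟨q, -, hq⟩ := this
    exact ⟨i, hi, q, by simp only [Function.comp_apply]; rw [hq, hz]⟩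
  · intro i hi j hj q r hqr
    simp only [Function.comp_apply] at hqr
    have hGz : G i q = G j r := hΨsm.injective hqr
    have hzi : G i q ∈ D i := by
      rw [← (hGspec i hi).2.1]; exact Set.mem_image_of_mem _ (Set.mem_univ q)
    have hzj : G j r ∈ D j := by
      rw [← (hGspec j hj).2.1]; exact Set.mem_image_of_mem _ (Set.mem_univ r)
    have hij : i = j := hDdisj i hi j hj (G i q) hzi (hGz ▸ hzj)
    subst hij
    exact ⟨rfl, (hGspec i hi).1.injective hGz⟩

/-! ### Setup lemmas about finite partial maps on ℕ × ℚ -/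

section Setup
variable (A : Finset (ℕ × ℚ))

/-- The second coordinates of points of `A` in copy `i`. -/
noncomputable def Sf (i : ℕ) : Finset ℚ := (A.filter (fun a => a.1 = i)).image Prod.snd

lemma mem_Sf {A : Finset (ℕ × ℚ)} {i : ℕ} {q : ℚ} : q ∈ Sf A i ↔ (i, q) ∈ A := by
  constructor
  · intro h
    rw [Sf, Finset.mem_image] at h
    obtain ⟨a, ha, rfl⟩ := h
    rw [Finset.mem_filter] at ha
    have : (i, a.2) = a := by rw [← ha.2]
    rw [this]; exact ha.1
  · intro h
    rw [Sf, Finset.mem_image]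
    exact ⟨(i, q), Finset.mem_filter.mpr ⟨h, rfl⟩, rfl⟩

lemma mem_If {A : Finset (ℕ × ℚ)} {i : ℕ} :
    i ∈ A.image Prod.fst ↔ (Sf A i).Nonempty := by
  rw [Finset.mem_image]
  constructor
  · rintro ⟨a, ha, rfl⟩
    exact ⟨a.2, mem_Sf.mpr (by rwa [show (a.1, a.2) = a from rfl])⟩
  · rintro ⟨q, hq⟩
    exact ⟨(i, q), mem_Sf.mp hq, rfl⟩

/-- The target copy of copy `i`. -/
noncomputable def tauf (f : ℕ × ℚ → ℕ × ℚ) (i : ℕ) : ℕ :=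
  if h : (Sf A i).Nonempty then (f (i, (Sf A i).min' h)).1 else 0

end Setup

lemma tau_lt_spec {A : Finset (ℕ × ℚ)} {f : ℕ × ℚ → ℕ × ℚ}
    (hf : ∀ a₁ ∈ A, ∀ a₂ ∈ A, Dlt a₁ a₂ → Dlt (f a₁) (f a₂)) {i : ℕ} {q : ℚ}
    (hq : (i, q) ∈ A) : (f (i, q)).1 = tauf A f i := by
  have hS : q ∈ Sf A i := mem_Sf.mpr hq
  have hne : (Sf A i).Nonempty := ⟨q, hS⟩
  rw [tauf, dif_pos hne]
  have hmin : (Sf A i).min' hne ≤ q := Finset.min'_le _ _ hS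
  rcases eq_or_lt_of_le hmin with h | h
  · rw [h]
  · exact ((hf _ (mem_Sf.mp ((Sf A i).min'_mem hne)) _ hq ⟨rfl, h⟩).1).symm

lemma tau_le_spec {A : Finset (ℕ × ℚ)} {f : ℕ × ℚ → ℕ × ℚ}
    (hf : ∀ a₁ ∈ A, ∀ a₂ ∈ A, Dle a₁ a₂ → Dle (f a₁) (f a₂)) {i : ℕ} {q : ℚ}
    (hq : (i, q) ∈ A) : (f (i, q)).1 = tauf A f i := by
  have hS : q ∈ Sf A i := mem_Sf.mpr hq
  have hne : (Sf A i).Nonempty := ⟨q, hS⟩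
  rw [tauf, dif_pos hne]
  exact ((hf _ (mem_Sf.mp ((Sf A i).min'_mem hne)) _ hq
    ⟨rfl, Finset.min'_le _ _ hS⟩).1).symm

/-! ### Part (b): HE-homogeneity -/

lemma part_b (A : Finset (ℕ × ℚ)) (f : ℕ × ℚ → ℕ × ℚ)
    (hf : ∀ a₁ ∈ A, ∀ a₂ ∈ A, Dlt a₁ a₂ → Dlt (f a₁) (f a₂)) :
    ∃ g : ℕ × ℚ → ℕ × ℚ, Function.Surjective g ∧
      (∀ x y, Dlt x y → Dlt (g x) (g y)) ∧ ∀ a ∈ A, g a = f a := by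
  classical
  set I : Finset ℕ := A.image Prod.fst with hI_def
  set M : ℕ := I.sup id + 1 with hM_def
  have hM : ∀ n, M ≤ n → n ∉ I := by
    intro n hn hnI
    have : n ≤ I.sup id := Finset.le_sup (f := id) hnI
    omega
  have hkm : ∀ i ∈ I, StrictMonoOn (fun q => (f (i, q)).2) ↑(Sf A i) := by
    intro i _ q hq r hr hqr
    exact (hf _ (mem_Sf.mp hq) _ (mem_Sf.mp hr) ⟨rfl, hqr⟩).2
  have hB : ∀ i : ℕ, ∃ h : ℚ → ℚ, i ∈ I →
      (StrictMono h ∧ ∀ q ∈ Sf A i, h q = (f (i, q)).2) := by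
    intro i
    by_cases hi : i ∈ I
    · obtain ⟨h, h1, _, h3⟩ := lemB (Sf A i).card (Sf A i) Set.univ Set.univ
        (fun q => (f (i, q)).2) rfl good_univ good_univ (Set.subset_univ _)
        (hkm i hi) (fun _ _ => Set.mem_univ _)
      exact ⟨h, fun _ => ⟨fun a b hab => h1 (Set.mem_univ a) (Set.mem_univ b) hab, h3⟩⟩
    · exact ⟨id, fun h => absurd h hi⟩
  choose hB hBspec using hB
  refine ⟨fun x => if x.1 ∈ I then (tauf A f x.1, hB x.1 x.2) else (x.1 - M, x.2),
    ?_, ?_, ?_⟩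
  · intro y
    refine ⟨(M + y.1, y.2), ?_⟩
    simp only
    rw [if_neg (hM (M + y.1) (by omega))]
    simp
  · rintro ⟨i, q⟩ ⟨j, r⟩ ⟨h1, h2⟩
    simp only at h1 h2
    subst h1
    simp only
    by_cases hi : i ∈ I
    · rw [if_pos hi, if_pos hi]
      exact ⟨rfl, (hBspec i hi).1 h2⟩
    · rw [if_neg hi, if_neg hi]
      exact ⟨rfl, h2⟩
  · rintro ⟨i, q⟩ ha
    have hi : i ∈ I := Finset.mem_image_of_mem Prod.fst ha
    show (if i ∈ I then _ else _) = _
    rw [if_pos hi]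
    have h2 : hB i q = (f (i, q)).2 := (hBspec i hi).2 q (mem_Sf.mpr ha)
    have h1 : (f (i, q)).1 = tauf A f i := tau_lt_spec hf ha
    simp only
    rw [h2, ← h1]

/-! ### Part (c): H̄Ē-homogeneity -/

lemma part_c (A : Finset (ℕ × ℚ)) (f : ℕ × ℚ → ℕ × ℚ)
    (hf : ∀ a₁ ∈ A, ∀ a₂ ∈ A, Dle a₁ a₂ → Dle (f a₁) (f a₂)) :
    ∃ g : ℕ × ℚ → ℕ × ℚ, Function.Surjective g ∧
      (∀ x y, Dle x y → Dle (g x) (g y)) ∧ ∀ a ∈ A, g a = f a := by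
  classical
  set I : Finset ℕ := A.image Prod.fst with hI_def
  set M : ℕ := I.sup id + 1 with hM_def
  have hM : ∀ n, M ≤ n → n ∉ I := by
    intro n hn hnI
    have : n ≤ I.sup id := Finset.le_sup (f := id) hnI
    omega
  have hkm : ∀ i ∈ I, MonotoneOn (fun q => (f (i, q)).2) ↑(Sf A i) := by
    intro i _ q hq r hr hqr
    exact (hf _ (mem_Sf.mp hq) _ (mem_Sf.mp hr) ⟨rfl, hqr⟩).2
  have hB : ∀ i : ℕ, ∃ h : ℚ → ℚ, i ∈ I →
      (Monotone h ∧ ∀ q ∈ Sf A i, h q = (f (i, q)).2) := by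
    intro i
    by_cases hi : i ∈ I
    · obtain ⟨h, h1, h2⟩ := monoExt (Sf A i) (mem_If.mp hi) (fun q => (f (i, q)).2)
        (hkm i hi)
      exact ⟨h, fun _ => ⟨h1, h2⟩⟩
    · exact ⟨id, fun h => absurd h hi⟩
  choose hB hBspec using hB
  refine ⟨fun x => if x.1 ∈ I then (tauf A f x.1, hB x.1 x.2) else (x.1 - M, x.2),
    ?_, ?_, ?_⟩
  · intro y
    refine ⟨(M + y.1, y.2), ?_⟩
    simp only
    rw [if_neg (hM (M + y.1) (by omega))]
    simp
  · rintro ⟨i, q⟩ ⟨j, r⟩ ⟨h1, h2⟩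
    simp only at h1 h2
    subst h1
    simp only
    by_cases hi : i ∈ I
    · rw [if_pos hi, if_pos hi]
      exact ⟨rfl, (hBspec i hi).1 h2⟩
    · rw [if_neg hi, if_neg hi]
      exact ⟨rfl, h2⟩
  · rintro ⟨i, q⟩ ha
    have hi : i ∈ I := Finset.mem_image_of_mem Prod.fst ha
    show (if i ∈ I then _ else _) = _
    rw [if_pos hi]
    have h2 : hB i q = (f (i, q)).2 := (hBspec i hi).2 q (mem_Sf.mpr ha)
    have h1 : (f (i, q)).1 = tauf A f i := tau_le_spec hf ha
    simp only
    rw [h2, ← h1]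

/-! ### Part (a): MB-homogeneity -/

lemma part_a (A : Finset (ℕ × ℚ)) (f : ℕ × ℚ → ℕ × ℚ) (hinj : Set.InjOn f ↑A)
    (hf : ∀ a₁ ∈ A, ∀ a₂ ∈ A, Dlt a₁ a₂ → Dlt (f a₁) (f a₂)) :
    ∃ g : ℕ × ℚ → ℕ × ℚ, Function.Bijective g ∧
      (∀ x y, Dlt x y → Dlt (g x) (g y)) ∧ ∀ a ∈ A, g a = f a := by
  classical
  set I : Finset ℕ := A.image Prod.fst with hI_def
  set τ : ℕ → ℕ := tauf A f with hτ_def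
  set kf : ℕ → ℚ → ℚ := fun i q => (f (i, q)).2 with hkf_def
  have hfval : ∀ i q, (i, q) ∈ A → f (i, q) = (τ i, kf i q) := by
    intro i q h
    have h1 : f (i, q) = ((f (i, q)).1, (f (i, q)).2) := rfl
    rw [h1, tau_lt_spec hf h]
  set T : Finset ℕ := I.image τ with hT_def
  set Pm : ℕ → Finset ℕ := fun m => I.filter (fun i => τ i = m) with hPm_def
  have hiPm : ∀ i ∈ I, i ∈ Pm (τ i) := fun i hi => Finset.mem_filter.mpr ⟨hi, rfl⟩
  have hτT : ∀ i ∈ I, τ i ∈ T := fun i hi => Finset.mem_image_of_mem τ hi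
  have hPmI : ∀ m, ∀ i ∈ Pm m, i ∈ I := fun m i hi => (Finset.mem_filter.mp hi).1
  have hPmτ : ∀ m, ∀ i ∈ Pm m, τ i = m := fun m i hi => (Finset.mem_filter.mp hi).2
  have hPT : ∀ m : ℕ, ∃ H : ℕ → ℚ → ℚ, m ∈ T →
      ((∀ i ∈ Pm m, StrictMono (H i)) ∧
       (∀ i ∈ Pm m, ∀ q ∈ Sf A i, H i q = kf i q) ∧
       (∀ y : ℚ, ∃ i ∈ Pm m, ∃ q, H i q = y) ∧
       (∀ i ∈ Pm m, ∀ j ∈ Pm m, ∀ q r, H i q = H j r → i = j ∧ q = r)) := by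
    intro m
    by_cases hm : m ∈ T
    · have hPne : (Pm m).Nonempty := by
        rw [hT_def] at hm
        obtain ⟨i, hi, rfl⟩ := Finset.mem_image.mp hm
        exact ⟨i, hiPm i hi⟩
      obtain ⟨H, h1, h2, h3, h4⟩ := PT (Pm m) hPne (Sf A) kf
        (by
          intro i _ q hq r hr hqr
          exact (hf _ (mem_Sf.mp hq) _ (mem_Sf.mp hr) ⟨rfl, hqr⟩).2)
        (by
          intro i hi j hj q hq r hr heq
          have hfi : f (i, q) = (m, kf i q) := by
            rw [hfval i q (mem_Sf.mp hq), hPmτ m i hi]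
          have hfj : f (j, r) = (m, kf j r) := by
            rw [hfval j r (mem_Sf.mp hr), hPmτ m j hj]
          have : f (i, q) = f (j, r) := by rw [hfi, hfj, heq]
          have := hinj (Finset.mem_coe.mpr (mem_Sf.mp hq))
            (Finset.mem_coe.mpr (mem_Sf.mp hr)) this
          exact ⟨congrArg Prod.fst this, congrArg Prod.snd this⟩)
      exact ⟨H, fun _ => ⟨h1, h2, h3, h4⟩⟩
    · exact ⟨fun _ => id, fun h => absurd h hm⟩
  choose HH hHH using hPT
  -- matching up the unused copies
  have hIinf : ((↑I : Set ℕ)ᶜ).Infinite := I.finite_toSet.infinite_compl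
  have hTinf : ((↑T : Set ℕ)ᶜ).Infinite := T.finite_toSet.infinite_compl
  haveI := hIinf.to_subtype
  haveI := hTinf.to_subtype
  obtain ⟨ρ⟩ : Nonempty (↥((↑I : Set ℕ)ᶜ) ≃ ↥((↑T : Set ℕ)ᶜ)) := nonempty_equiv_of_countable
  refine ⟨fun x => if hx : x.1 ∈ I then (τ x.1, HH (τ x.1) x.1 x.2)
    else ((ρ ⟨x.1, by simpa using hx⟩ : ℕ), x.2), ⟨?_, ?_⟩, ?_, ?_⟩
  · -- injective
    rintro ⟨i, q⟩ ⟨j, r⟩ hxy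
    simp only at hxy
    by_cases hi : i ∈ I <;> by_cases hj : j ∈ I
    · rw [dif_pos hi, dif_pos hj] at hxy
      have h1 : τ i = τ j := congrArg Prod.fst hxy
      have h2 : HH (τ i) i q = HH (τ j) j r := congrArg Prod.snd hxy
      rw [← h1] at h2
      have hjPm : j ∈ Pm (τ i) := Finset.mem_filter.mpr ⟨hj, h1.symm⟩
      have := (hHH (τ i) (hτT i hi)).2.2.2 i (hiPm i hi) j hjPm q r h2
      rw [Prod.mk.injEq]
      exact this
    · rw [dif_pos hi, dif_neg hj] at hxy
      have h1 : τ i = (ρ ⟨j, by simpa using hj⟩ : ℕ) := congrArg Prod.fst hxy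
      have h2 := (ρ ⟨j, by simpa using hj⟩).2
      rw [← h1] at h2
      exact absurd (hτT i hi) (by simpa using h2)
    · rw [dif_neg hi, dif_pos hj] at hxy
      have h1 : (ρ ⟨i, by simpa using hi⟩ : ℕ) = τ j := congrArg Prod.fst hxy
      have h2 := (ρ ⟨i, by simpa using hi⟩).2
      rw [h1] at h2
      exact absurd (hτT j hj) (by simpa using h2)
    · rw [dif_neg hi, dif_neg hj] at hxy
      have h1 : (ρ ⟨i, by simpa using hi⟩ : ℕ) = (ρ ⟨j, by simpa using hj⟩ : ℕ) :=
        congrArg Prod.fst hxy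
      have h2 : q = r := congrArg Prod.snd hxy
      have := ρ.injective (Subtype.ext h1)
      rw [Prod.mk.injEq]
      exact ⟨Subtype.ext_iff.mp this, h2⟩
  · -- surjective
    rintro ⟨m, r⟩
    by_cases hm : m ∈ T
    · obtain ⟨i, hiPm', q, hq⟩ := (hHH m hm).2.2.1 r
      have hi : i ∈ I := hPmI m i hiPm'
      have hτi : τ i = m := hPmτ m i hiPm'
      refine ⟨(i, q), ?_⟩
      simp only
      rw [dif_pos hi]
      rw [Prod.mk.injEq]
      constructor
      · exact hτi
      · rw [show τ i = m from hτi]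
        exact hq
    · set z := ρ.symm ⟨m, by simpa using hm⟩ with hz_def
      have hzI : (z : ℕ) ∉ I := fun h => z.2 (Finset.mem_coe.mpr h)
      refine ⟨((z : ℕ), r), ?_⟩
      simp only
      rw [dif_neg hzI]
      have hsub : (⟨(z : ℕ), by simpa using hzI⟩ : ↥((↑I : Set ℕ)ᶜ)) = z :=
        Subtype.ext rfl
      rw [Prod.mk.injEq]
      refine ⟨?_, rfl⟩
      rw [hsub, hz_def, Equiv.apply_symm_apply]
  · -- Dlt-preserving
    rintro ⟨i, q⟩ ⟨j, r⟩ ⟨h1, h2⟩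
    simp only at h1 h2
    subst h1
    simp only
    by_cases hi : i ∈ I
    · rw [dif_pos hi, dif_pos hi]
      exact ⟨rfl, (hHH (τ i) (hτT i hi)).1 i (hiPm i hi) h2⟩
    · rw [dif_neg hi, dif_neg hi]
      exact ⟨rfl, h2⟩
  · -- extension
    rintro ⟨i, q⟩ ha
    have hi : i ∈ I := Finset.mem_image_of_mem Prod.fst ha
    simp only
    rw [dif_pos hi]
    rw [(hHH (τ i) (hτT i hi)).2.1 i (hiPm i hi) q (mem_Sf.mpr ha)]
    exact (hfval i q ha).symm

/-- `B_ω`, the countably infinite disjoint union `ℕ × ℚ` of copies of `(ℚ, <)`, is: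
(a) MB-homogeneous: every injective `<`-preserving map between finite subsets extends
to a bijective `<`-preserving map;
(b) HE-homogeneous: every `<`-preserving map between finite subsets extends to a
surjective `<`-preserving map;
(c) H̄Ē-homogeneous: every ≤-preserving map between finite subsets extends to a
surjective ≤-preserving map. -/
theorem Bomega_MB_HE_HbarEbar :
    (∀ (A : Finset (ℕ × ℚ)) (f : ℕ × ℚ → ℕ × ℚ), Set.InjOn f ↑A →
      (∀ a₁ ∈ A, ∀ a₂ ∈ A, Dlt a₁ a₂ → Dlt (f a₁) (f a₂)) →
      ∃ g : ℕ × ℚ → ℕ × ℚ, Function.Bijective g ∧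
        (∀ x y, Dlt x y → Dlt (g x) (g y)) ∧ ∀ a ∈ A, g a = f a) ∧
    (∀ (A : Finset (ℕ × ℚ)) (f : ℕ × ℚ → ℕ × ℚ),
      (∀ a₁ ∈ A, ∀ a₂ ∈ A, Dlt a₁ a₂ → Dlt (f a₁) (f a₂)) →
      ∃ g : ℕ × ℚ → ℕ × ℚ, Function.Surjective g ∧
        (∀ x y, Dlt x y → Dlt (g x) (g y)) ∧ ∀ a ∈ A, g a = f a) ∧
    (∀ (A : Finset (ℕ × ℚ)) (f : ℕ × ℚ → ℕ × ℚ),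
      (∀ a₁ ∈ A, ∀ a₂ ∈ A, Dle a₁ a₂ → Dle (f a₁) (f a₂)) →
      ∃ g : ℕ × ℚ → ℕ × ℚ, Function.Surjective g ∧
        (∀ x y, Dle x y → Dle (g x) (g y)) ∧ ∀ a ∈ A, g a = f a) := by
  exact ⟨part_a, part_b, part_c⟩
end

section
/- Let T be a countable nontrivial tree: a partial order in which for every x the set {z | z < x} is a chain, whose comparability graph is connected (any two elements are joined by a finite path of pairwise comparable elements), and which contains an incomparable pair. Then the following are equivalent: (i) T is IĒ-homogeneous; (ii) T is H̄Ē-homogeneous (every ≤-preserving map between finite subsets of T extends to a surjective ≤-preserving map T → T); (iii) for every x ∈ T there is y ∈ T with x ∥ y. -/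
/-- A tree (semilinear order): a connected poset in which every set `{z | z < x}` is a
chain. Connectedness means the reflexive transitive closure of comparability relates
every pair of elements. -/
def IsTreePoset (T : Type*) [PartialOrder T] : Prop :=
  (∀ x : T, IsChain (· ≤ ·) {z : T | z < x}) ∧
    ∀ x y : T, Relation.ReflTransGen (fun a b : T => a ≤ b ∨ b ≤ a) x y

/-- `P` is H̄Ē-homogeneous: every ≤-preserving map between finite subsets extends to a
surjective ≤-preserving map `P → P`. -/
def HbarEbarHomogeneous (P : Type*) [PartialOrder P] : Prop :=
  ∀ (A : Finset P) (f : P → P), (∀ a₁ ∈ A, ∀ a₂ ∈ A, a₁ ≤ a₂ → f a₁ ≤ f a₂) →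
    ∃ g : P → P, Monotone g ∧ Function.Surjective g ∧ ∀ a ∈ A, g a = f a

section Aux

variable {T : Type*} [PartialOrder T]

/-- In a tree, two elements with a common upper bound are comparable. -/
lemma TreeAux.comp_of_le_le (hT : IsTreePoset T) {a b z : T} (ha : a ≤ z) (hb : b ≤ z) :
    a ≤ b ∨ b ≤ a := by
  rcases eq_or_lt_of_le ha with rfl | ha'
  · exact Or.inr hb
  rcases eq_or_lt_of_le hb with rfl | hb'
  · exact Or.inl ha
  rcases eq_or_ne a b with rfl | hne
  · exact Or.inl le_rfl
  exact hT.1 z ha' hb' hne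

/-- In a connected tree, any two elements have a common lower bound. -/
lemma TreeAux.exists_lb_pair (hT : IsTreePoset T) (x y : T) : ∃ w : T, w ≤ x ∧ w ≤ y := by
  induction hT.2 x y with
  | refl => exact ⟨x, le_rfl, le_rfl⟩
  | tail _ hbc ih =>
    obtain ⟨w, hwx, hwb⟩ := ih
    rcases hbc with h | h
    · exact ⟨w, hwx, hwb.trans h⟩
    · rcases TreeAux.comp_of_le_le hT hwb h with h' | h'
      · exact ⟨w, hwx, h'⟩
      · exact ⟨_, h'.trans hwx, le_rfl⟩

/-- Any finite set has a common lower bound. -/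
lemma TreeAux.exists_lb_finset (hT : IsTreePoset T) [Nonempty T] (S : Finset T) :
    ∃ w : T, ∀ a ∈ S, w ≤ a := by
  classical
  induction S using Finset.induction with
  | empty => exact ⟨Classical.arbitrary T, by simp⟩
  | @insert a s _ ih =>
    obtain ⟨w, hw⟩ := ih
    obtain ⟨w', h1, h2⟩ := TreeAux.exists_lb_pair hT w a
    refine ⟨w', fun b hb => ?_⟩
    rcases Finset.mem_insert.1 hb with rfl | hb
    · exact h2
    · exact h1.trans (hw b hb)

/-- If every point has an incomparable partner, then for every finite set there is a
point incomparable with all its elements. -/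
lemma TreeAux.exists_incomp_finset (hT : IsTreePoset T) [Nonempty T]
    (hiii : ∀ x : T, ∃ y : T, Incomp x y) (S : Finset T) :
    ∃ y : T, ∀ a ∈ S, Incomp y a := by
  obtain ⟨w, hw⟩ := TreeAux.exists_lb_finset hT S
  obtain ⟨y, hy⟩ := hiii w
  refine ⟨y, fun a ha => ⟨fun h => ?_, fun h => hy.1 ((hw a ha).trans h)⟩⟩
  rcases TreeAux.comp_of_le_le hT h (hw a ha) with h' | h'
  · exact hy.2 h'
  · exact hy.1 h'

/-- A descending sequence below a given sequence, starting below a given finite set. -/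
lemma TreeAux.exists_desc_seq (hT : IsTreePoset T) [Nonempty T] (t : ℕ → T) (B : Finset T) :
    ∃ s : ℕ → T, (∀ m n, m ≤ n → s n ≤ s m) ∧ (∀ n, s n ≤ t n) ∧ (∀ b ∈ B, s 0 ≤ b) := by
  classical
  choose w hw1 hw2 using fun (p : T × ℕ) => TreeAux.exists_lb_pair hT p.1 (t p.2)
  obtain ⟨w0, hw0⟩ := TreeAux.exists_lb_finset hT (insert (t 0) B)
  refine ⟨fun n => Nat.rec w0 (fun n sn => w (sn, n + 1)) n, ?_, ?_, ?_⟩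
  · refine fun m n h => antitone_nat_of_succ_le (fun k => ?_) h
    exact hw1 _
  · intro n
    cases n with
    | zero => exact hw0 _ (Finset.mem_insert_self _ _)
    | succ n => exact hw2 _
  · intro b hb; exact hw0 b (Finset.mem_insert_of_mem hb)

/-- An "independent" sequence: each term incomparable with `A`, with all previous
terms, and with all earlier terms of `s`. -/
lemma TreeAux.exists_indep_seq (hT : IsTreePoset T) [Nonempty T]
    (hiii : ∀ x : T, ∃ y : T, Incomp x y) (A : Finset T) (s : ℕ → T) :
    ∃ c : ℕ → T, (∀ n, ∀ a ∈ A, Incomp (c n) a) ∧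
      (∀ m n, m < n → Incomp (c n) (c m)) ∧ (∀ m n, m < n → Incomp (c n) (s m)) := by
  classical
  choose y hy using fun (F : Finset T) => TreeAux.exists_incomp_finset hT hiii F
  set F : ℕ → Finset T := fun n => Nat.rec A (fun n Fn => insert (y Fn) (insert (s n) Fn)) n
    with hF
  set c : ℕ → T := fun n => y (F n) with hc
  have hstep : ∀ n, F n ⊆ F (n + 1) := by
    intro n
    exact (Finset.subset_insert _ _).trans (Finset.subset_insert _ _)
  have hmono : ∀ m n, m ≤ n → F m ⊆ F n := by
    intro m n h
    induction h with
    | refl => exact Finset.Subset.refl _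
    | step h ih => exact ih.trans (hstep _)
  have hcmem : ∀ m n, m < n → c m ∈ F n := by
    intro m n h
    exact hmono (m + 1) n h (Finset.mem_insert_self _ _)
  have hsmem : ∀ m n, m < n → s m ∈ F n := by
    intro m n h
    exact hmono (m + 1) n h (Finset.mem_insert_of_mem (Finset.mem_insert_self _ _))
  have hA : ∀ n, A ⊆ F n := fun n => hmono 0 n (Nat.zero_le n)
  exact ⟨c, fun n a ha => hy (F n) a (hA n ha),
    fun m n h => hy (F n) _ (hcmem m n h),
    fun m n h => hy (F n) _ (hsmem m n h)⟩

end Aux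

/-- For a countable nontrivial tree `T`: IĒ-homogeneity, H̄Ē-homogeneity, and the
property that every point has an incomparable point, are all equivalent. -/
theorem tree_IEbar_iff_HbarEbar_iff_incomp {T : Type*} [PartialOrder T] [Countable T]
    (hT : IsTreePoset T) (hnt : ∃ x y : T, Incomp x y) :
    (IEbarHomogeneous T ↔ HbarEbarHomogeneous T) ∧
      (IEbarHomogeneous T ↔ ∀ x : T, ∃ y : T, Incomp x y) := by
  classical
  obtain ⟨a0, b0, hab0⟩ := hnt
  have hne : Nonempty T := ⟨a0⟩
  -- IĒ → (iii)
  have h1 : IEbarHomogeneous T → ∀ x : T, ∃ y : T, Incomp x y := by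
    intro hIE x
    by_contra h
    push_neg at h
    have hcomp : ∀ y : T, x ≤ y ∨ y ≤ x := by
      intro y
      by_contra hy
      push_neg at hy
      exact (h y ⟨hy.1, hy.2⟩).elim
    -- x is below both a0 and b0
    have hxa : x ≤ a0 := by
      rcases hcomp a0 with h' | h'
      · exact h'
      · rcases hcomp b0 with h'' | h'' 
        · exact absurd (h'.trans h'') hab0.1
        · rcases TreeAux.comp_of_le_le hT (le_refl x) (le_refl x) with _ | _ <;>
          · rcases TreeAux.comp_of_le_le hT h' h'' with h3 | h3
            · exact absurd h3 hab0.1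
            · exact absurd h3 hab0.2
    have hxb : x ≤ b0 := by
      rcases hcomp b0 with h' | h'
      · exact h'
      · rcases hcomp a0 with h'' | h''
        · exact absurd (h'.trans h'') hab0.2
        · rcases TreeAux.comp_of_le_le hT h'' h' with h3 | h3
          · exact absurd h3 hab0.1
          · exact absurd h3 hab0.2
    obtain ⟨g, hgmono, hgsurj, hgext⟩ := hIE {x} (fun _ => a0) (by
      intro a₁ h₁ a₂ h₂
      rw [Finset.mem_singleton] at h₁ h₂
      subst h₁; subst h₂
      simp)
    have hgx : g x = a0 := hgext x (Finset.mem_singleton_self x)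
    obtain ⟨w, hw⟩ := hgsurj b0
    rcases hcomp w with h' | h'
    · have := hgmono h'
      rw [hgx, hw] at this
      exact hab0.1 this
    · have := hgmono h'
      rw [hgx, hw] at this
      exact hab0.2 this
  -- (iii) → H̄Ē
  have h2 : (∀ x : T, ∃ y : T, Incomp x y) → HbarEbarHomogeneous T := by
    intro hiii A f hf
    obtain ⟨t, ht⟩ := exists_surjective_nat T
    obtain ⟨s, hs_anti, hs_le, -⟩ := TreeAux.exists_desc_seq hT t ∅
    obtain ⟨r, hr_anti, hr_le, hr0⟩ := TreeAux.exists_desc_seq hT t (A.image f)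
    obtain ⟨c, hcA, hcc, hcs⟩ := TreeAux.exists_indep_seq hT hiii A s
    -- uniqueness of cone indices
    have hcu : ∀ k m : ℕ, c k ≤ c m → k = m := by
      intro k m h
      rcases lt_trichotomy k m with h' | h' | h'
      · exact absurd h (hcc k m h').2.elim
      · exact h'
      · exact absurd h (hcc m k h').1.elim
    -- every point is above some s n
    have hνex : ∀ x : T, ∃ n, s n ≤ x := by
      intro x
      obtain ⟨m, rfl⟩ := ht x
      exact ⟨m, hs_le m⟩
    -- greatest element of A below x
    have hmaxex : ∀ x : T, (∃ a ∈ A, a ≤ x) →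
        ∃ m, m ∈ A ∧ m ≤ x ∧ ∀ b ∈ A, b ≤ x → b ≤ m := by
      intro x hx
      obtain ⟨m, hm, hmax'⟩ : ∃ m ∈ A.filter (· ≤ x), ∀ b ∈ A.filter (· ≤ x), ¬ m < b :=
        (Finset.exists_maximal (s := A.filter (· ≤ x)) (by
        obtain ⟨a, ha, hax⟩ := hx
        exact ⟨a, Finset.mem_filter.2 ⟨ha, hax⟩⟩)).imp
          fun m hm => ⟨hm.1, fun b hb hlt => hlt.not_ge (hm.2 hb hlt.le)⟩
      rw [Finset.mem_filter] at hm
      refine ⟨m, hm.1, hm.2, fun b hb hbx => ?_⟩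
      rcases TreeAux.comp_of_le_le hT hbx hm.2 with h | h
      · exact h
      · rcases eq_or_lt_of_le h with rfl | h'
        · exact le_rfl
        · exact absurd h' (hmax' b (Finset.mem_filter.2 ⟨hb, hbx⟩))
    choose mx hmx1 hmx2 hmx3 using hmaxex
    refine ⟨fun x =>
      if h1 : ∃ n, c n ≤ x then t (Nat.find h1)
      else if h2 : ∃ a ∈ A, a ≤ x then f (mx x h2)
      else r (Nat.find (hνex x)), ?_, ?_, ?_⟩
    · -- Monotone
      intro x y hxy
      beta_reduce
      by_cases h1y : ∃ n, c n ≤ y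
      · rw [dif_pos h1y]
        by_cases h1x : ∃ n, c n ≤ x
        · rw [dif_pos h1x]
          have hx := Nat.find_spec h1x
          have hy := Nat.find_spec h1y
          have hcomp := TreeAux.comp_of_le_le hT (hx.trans hxy) hy
          rcases hcomp with h' | h'
          · rw [hcu _ _ h']
          · rw [hcu _ _ h']
        · rw [dif_neg h1x]
          set n := Nat.find h1y with hn
          have hcy : c n ≤ y := Nat.find_spec h1y
          have hxc : x ≤ c n := by
            rcases TreeAux.comp_of_le_le hT hxy hcy with h' | h'
            · exact h'
            · exact absurd ⟨n, h'⟩ h1x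
          by_cases h2x : ∃ a ∈ A, a ≤ x
          · exact absurd ((hmx2 x h2x).trans hxc) (hcA n _ (hmx1 x h2x)).2
          · rw [dif_neg h2x]
            have hν : s (Nat.find (hνex x)) ≤ x := Nat.find_spec (hνex x)
            have hge : n ≤ Nat.find (hνex x) := by
              by_contra hlt
              push_neg at hlt
              exact (hcs _ n hlt).2 (hν.trans hxc)
            exact (hr_anti n _ hge).trans (hr_le n)
      · rw [dif_neg h1y]
        have h1x : ¬ ∃ n, c n ≤ x := fun ⟨n, h⟩ => h1y ⟨n, h.trans hxy⟩
        rw [dif_neg h1x]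
        by_cases h2y : ∃ a ∈ A, a ≤ y
        · rw [dif_pos h2y]
          by_cases h2x : ∃ a ∈ A, a ≤ x
          · rw [dif_pos h2x]
            exact hf _ (hmx1 x h2x) _ (hmx1 y h2y)
              (hmx3 y h2y _ (hmx1 x h2x) ((hmx2 x h2x).trans hxy))
          · rw [dif_neg h2x]
            exact (hr_anti 0 _ (Nat.zero_le _)).trans
              (hr0 _ (Finset.mem_image_of_mem f (hmx1 y h2y)))
        · rw [dif_neg h2y]
          have h2x : ¬ ∃ a ∈ A, a ≤ x := fun ⟨a, ha, h⟩ => h2y ⟨a, ha, h.trans hxy⟩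
          rw [dif_neg h2x]
          exact hr_anti _ _ (Nat.find_min' (hνex y) ((Nat.find_spec (hνex x)).trans hxy))
    · -- Surjective
      intro z
      obtain ⟨m, rfl⟩ := ht z
      refine ⟨c m, ?_⟩
      beta_reduce
      have hex : ∃ n, c n ≤ c m := ⟨m, le_rfl⟩
      rw [dif_pos hex, hcu _ _ (Nat.find_spec hex)]
    · -- Extends f
      intro a ha
      beta_reduce
      have hnc : ¬ ∃ n, c n ≤ a := fun ⟨n, h⟩ => (hcA n a ha).1 h
      have hex : ∃ b ∈ A, b ≤ a := ⟨a, ha, le_rfl⟩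
      rw [dif_neg hnc, dif_pos hex]
      exact congrArg f (le_antisymm (hmx2 a hex) (hmx3 a hex a ha le_rfl))
  -- H̄Ē → IĒ
  have h3 : HbarEbarHomogeneous T → IEbarHomogeneous T := by
    intro hH A f hf
    exact hH A f (fun a₁ h₁ a₂ h₂ h => (hf a₁ h₁ a₂ h₂).1 h)
  exact ⟨⟨fun h => h2 (h1 h), h3⟩, ⟨h1, fun h => h3 (h2 h)⟩⟩
end

section
/- Let T be a countable nontrivial tree: a partial order in which for every x the set {z | z < x} is a chain, whose comparability graph is connected, and which contains an incomparable pair. Then the following are equivalent: (i) T is IE-homogeneous (every finite partial isomorphism extends to a surjective <-preserving map T → T); (ii) T is HE-homogeneous (every <-preserving map between finite subsets extends to a surjective <-preserving map T → T) and MB-homogeneous (every injective <-preserving map between finite subsets extends to a bijective <-preserving map T → T); (iii) T is IH-homogeneous (every finite partial isomorphism extends to a <-preserving map T → T) and for every x ∈ T there is y ∈ T with x ∥ y. -/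
/-- `P` is IE-homogeneous: every finite partial isomorphism extends to a surjective
`<`-preserving map `P → P`. -/
def IEHomogeneous (P : Type*) [PartialOrder P] : Prop :=
  ∀ (A : Finset P) (f : P → P), IsFinPartIso A f →
    ∃ g : P → P, StrictMono g ∧ Function.Surjective g ∧ ∀ a ∈ A, g a = f a

/-- `P` is HE-homogeneous: every `<`-preserving map between finite subsets extends to a
surjective `<`-preserving map `P → P`. -/
def HEHomogeneous (P : Type*) [PartialOrder P] : Prop :=
  ∀ (A : Finset P) (f : P → P), (∀ a₁ ∈ A, ∀ a₂ ∈ A, a₁ < a₂ → f a₁ < f a₂) →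
    ∃ g : P → P, StrictMono g ∧ Function.Surjective g ∧ ∀ a ∈ A, g a = f a

/-- `P` is MB-homogeneous: every injective `<`-preserving map between finite subsets
extends to a bijective `<`-preserving map `P → P`. -/
def MBHomogeneous (P : Type*) [PartialOrder P] : Prop :=
  ∀ (A : Finset P) (f : P → P), Set.InjOn f ↑A →
    (∀ a₁ ∈ A, ∀ a₂ ∈ A, a₁ < a₂ → f a₁ < f a₂) →
    ∃ g : P → P, StrictMono g ∧ Function.Bijective g ∧ ∀ a ∈ A, g a = f a

/-- `P` is IH-homogeneous: every finite partial isomorphism extends to a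
`<`-preserving map `P → P`. -/
def IHHomogeneous (P : Type*) [PartialOrder P] : Prop :=
  ∀ (A : Finset P) (f : P → P), IsFinPartIso A f →
    ∃ g : P → P, StrictMono g ∧ ∀ a ∈ A, g a = f a

section Aux
variable {T : Type*} [PartialOrder T]

lemma aux_comp (hch : ∀ x : T, IsChain (· ≤ ·) {z : T | z < x})
    {a b c : T} (ha : a ≤ c) (hb : b ≤ c) : a ≤ b ∨ b ≤ a := by
  rcases eq_or_lt_of_le ha with rfl | ha'
  · exact Or.inr hb
  rcases eq_or_lt_of_le hb with rfl | hb'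
  · exact Or.inl ha'.le
  rcases eq_or_ne a b with rfl | hne
  · exact Or.inl le_rfl
  exact hch c ha' hb' hne

lemma aux_clb (hch : ∀ x : T, IsChain (· ≤ ·) {z : T | z < x})
    (hconn : ∀ x y : T, Relation.ReflTransGen (fun a b : T => a ≤ b ∨ b ≤ a) x y)
    (x y : T) : ∃ c, c ≤ x ∧ c ≤ y := by
  have h := hconn x y
  induction h with
  | refl => exact ⟨x, le_rfl, le_rfl⟩
  | tail _ hbc ih =>
    obtain ⟨c, hcx, hcb⟩ := ih
    rcases hbc with hby | hyb
    · exact ⟨c, hcx, hcb.trans hby⟩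
    · rcases aux_comp hch hcb hyb with h1 | h1
      · exact ⟨c, hcx, h1⟩
      · exact ⟨_, h1.trans hcx, le_rfl⟩

lemma aux_clb_finset (hch : ∀ x : T, IsChain (· ≤ ·) {z : T | z < x})
    (hconn : ∀ x y : T, Relation.ReflTransGen (fun a b : T => a ≤ b ∨ b ≤ a) x y)
    [Nonempty T] (S : Finset T) : ∃ c : T, ∀ a ∈ S, c ≤ a := by
  classical
  induction S using Finset.induction with
  | empty => exact ⟨Classical.arbitrary T, by simp⟩
  | @insert a s _ ih =>
    obtain ⟨c, hc⟩ := ih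
    obtain ⟨d, hdc, hda⟩ := aux_clb hch hconn c a
    refine ⟨d, fun b hb => ?_⟩
    rcases Finset.mem_insert.1 hb with rfl | hb
    · exact hda
    · exact hdc.trans (hc b hb)

lemma aux_incomp_up (hch : ∀ x : T, IsChain (· ≤ ·) {z : T | z < x})
    {y c a : T} (h : Incomp y c) (hca : c ≤ a) : Incomp y a := by
  constructor
  · intro hya
    rcases aux_comp hch hya hca with h1 | h1
    exacts [h.1 h1, h.2 h1]
  · intro hay
    exact h.2 (hca.trans hay)

lemma aux_fresh (hch : ∀ x : T, IsChain (· ≤ ·) {z : T | z < x})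
    (hconn : ∀ x y : T, Relation.ReflTransGen (fun a b : T => a ≤ b ∨ b ≤ a) x y)
    [Nonempty T] (hinc : ∀ x : T, ∃ y, Incomp x y) (S : Finset T) :
    ∃ t : T, ∀ a ∈ S, Incomp t a := by
  obtain ⟨c, hc⟩ := aux_clb_finset hch hconn S
  obtain ⟨y, hy⟩ := hinc c
  exact ⟨y, fun a ha => aux_incomp_up hch ⟨hy.2, hy.1⟩ (hc a ha)⟩

lemma aux_below (hch : ∀ x : T, IsChain (· ≤ ·) {z : T | z < x})
    (hconn : ∀ x y : T, Relation.ReflTransGen (fun a b : T => a ≤ b ∨ b ≤ a) x y)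
    (hinc : ∀ x : T, ∃ y, Incomp x y) (x : T) : ∃ z, z < x := by
  obtain ⟨y, hy⟩ := hinc x
  obtain ⟨c, hcx, hcy⟩ := aux_clb hch hconn x y
  refine ⟨c, lt_of_le_of_ne hcx ?_⟩
  rintro rfl
  exact hy.1 hcy



lemma isFinPartIso_pair [DecidableEq T] {a b a' b' : T} (hab : a ≠ b)
    (h1 : a ≤ b ↔ a' ≤ b') (h2 : b ≤ a ↔ b' ≤ a') :
    IsFinPartIso {a, b} (fun w => if w = a then a' else b') := by
  set f : T → T := fun w => if w = a then a' else b' with hf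
  have hfa : f a = a' := if_pos rfl
  have hfb : f b = b' := if_neg hab.symm
  intro u hu v hv
  have hu' : u = a ∨ u = b := by simpa using hu
  have hv' : v = a ∨ v = b := by simpa using hv
  rcases hu' with h | h <;> rcases hv' with h' | h' <;> rw [h, h'] <;>
    simp only [hfa, hfb]
  exacts [iff_of_true le_rfl le_rfl, h1, h2, iff_of_true le_rfl le_rfl]

lemma isFinPartIso_triple [DecidableEq T] {a b c a' b' c' : T}
    (hab : a ≠ b) (hac : a ≠ c) (hbc : b ≠ c)
    (h1 : a ≤ b ↔ a' ≤ b') (h2 : b ≤ a ↔ b' ≤ a')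
    (h3 : a ≤ c ↔ a' ≤ c') (h4 : c ≤ a ↔ c' ≤ a')
    (h5 : b ≤ c ↔ b' ≤ c') (h6 : c ≤ b ↔ c' ≤ b') :
    IsFinPartIso {a, b, c} (fun w => if w = a then a' else if w = b then b' else c') := by
  set f : T → T := fun w => if w = a then a' else if w = b then b' else c' with hf
  have hfa : f a = a' := if_pos rfl
  have hfb : f b = b' := by
    show (if b = a then a' else if b = b then b' else c') = b'
    rw [if_neg hab.symm, if_pos rfl]
  have hfc : f c = c' := by
    show (if c = a then a' else if c = b then b' else c') = c'
    rw [if_neg hac.symm, if_neg hbc.symm]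
  intro u hu v hv
  have hu' : u = a ∨ u = b ∨ u = c := by simpa using hu
  have hv' : v = a ∨ v = b ∨ v = c := by simpa using hv
  rcases hu' with h | h | h <;> rcases hv' with h' | h' | h' <;> rw [h, h'] <;>
    simp only [hfa, hfb, hfc]
  exacts [iff_of_true le_rfl le_rfl, h1, h3, h2, iff_of_true le_rfl le_rfl, h5, h4, h6, iff_of_true le_rfl le_rfl]

section Rich
variable [DecidableEq T]
variable (hbelow : ∀ x : T, ∃ z, z < x) (hIH : IHHomogeneous T)
include hbelow hIH

lemma aux_above (x : T) : ∃ z, x < z := by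
  obtain ⟨c, hc⟩ := hbelow x
  have hiso : IsFinPartIso ({c} : Finset T) (fun _ => x) := by
    intro u hu v hv
    simp only [Finset.mem_singleton] at hu hv
    rw [hu, hv]
    exact iff_of_true le_rfl le_rfl
  obtain ⟨g, hg, hgc⟩ := hIH {c} (fun _ => x) hiso
  have h1 : g c = x := hgc c (Finset.mem_singleton_self c)
  have h2 := hg hc
  rw [h1] at h2
  exact ⟨g x, h2⟩

lemma aux_dense {a b : T} (hab : a < b) : ∃ z, a < z ∧ z < b := by
  obtain ⟨a', ha'⟩ := hbelow a
  have hab' : a' < b := ha'.trans hab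
  have hne : a' ≠ b := hab'.ne
  have hiso : IsFinPartIso ({a', b} : Finset T) (fun w => if w = a' then a else b) :=
    isFinPartIso_pair hne (iff_of_true hab'.le hab.le)
      (iff_of_false (not_le_of_gt hab') (not_le_of_gt hab))
  obtain ⟨g, hg, hge⟩ := hIH _ _ hiso
  have h1 : g a' = a := by
    have := hge a' (by simp)
    simpa using this
  have h2 : g b = b := by
    have := hge b (by simp)
    simpa [hne.symm] using this
  refine ⟨g a, ?_, ?_⟩
  · have := hg ha'; rwa [h1] at this
  · have := hg hab; rwa [h2] at this

lemma aux_pair (hinc : ∀ x : T, ∃ y, Incomp x y)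
    (hclb : ∀ x y : T, ∃ c, c ≤ x ∧ c ≤ y)
    {p q₁ q₂ : T} (h1 : p < q₁) (h2 : p < q₂) :
    ∃ z, p < z ∧ z < q₁ ∧ z < q₂ := by
  by_cases hc1 : q₁ ≤ q₂
  · obtain ⟨z, hz1, hz2⟩ := aux_dense hbelow hIH h1
    exact ⟨z, hz1, hz2, hz2.trans_le hc1⟩
  by_cases hc2 : q₂ ≤ q₁
  · obtain ⟨z, hz1, hz2⟩ := aux_dense hbelow hIH h2
    exact ⟨z, hz1, hz2.trans_le hc2, hz2⟩
  -- q₁ and q₂ incomparable; find a configuration c' < c < p, y with p ∥ y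
  obtain ⟨y, hy⟩ := hinc p
  obtain ⟨c, hcp, hcy⟩ := hclb p y
  have hcp' : c < p := lt_of_le_of_ne hcp (by rintro rfl; exact hy.1 hcy)
  have hcy' : c < y := lt_of_le_of_ne hcy (by rintro rfl; exact hy.2 hcp)
  obtain ⟨c', hc'⟩ := hbelow c
  have hc'p : c' < p := hc'.trans hcp'
  have hc'y : c' < y := hc'.trans hcy'
  have hne1 : c' ≠ p := hc'p.ne
  have hne2 : c' ≠ y := hc'y.ne
  have hne3 : p ≠ y := fun h => hy.1 h.le
  have hiso : IsFinPartIso ({c', p, y} : Finset T)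
      (fun w => if w = c' then p else if w = p then q₁ else q₂) :=
    isFinPartIso_triple hne1 hne2 hne3
      (iff_of_true hc'p.le h1.le) (iff_of_false (not_le_of_gt hc'p) (not_le_of_gt h1))
      (iff_of_true hc'y.le h2.le) (iff_of_false (not_le_of_gt hc'y) (not_le_of_gt h2))
      (iff_of_false hy.1 hc1) (iff_of_false hy.2 hc2)
  obtain ⟨g, hg, hge⟩ := hIH _ _ hiso
  have e1 : g c' = p := by
    have := hge c' (by simp)
    simpa using this
  have e2 : g p = q₁ := by
    have := hge p (by simp)
    simpa [Ne.symm hne1, hne3] using this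
  have e3 : g y = q₂ := by
    have := hge y (by simp)
    simpa [Ne.symm hne2, Ne.symm hne3] using this
  refine ⟨g c, ?_, ?_, ?_⟩
  · have := hg hc'; rwa [e1] at this
  · have := hg hcp'; rwa [e2] at this
  · have := hg hcy'; rwa [e3] at this

lemma aux_multi (hinc : ∀ x : T, ∃ y, Incomp x y)
    (hclb : ∀ x y : T, ∃ c, c ≤ x ∧ c ≤ y)
    (p : T) (U : Finset T) (hU : ∀ u ∈ U, p < u) :
    ∃ z, p < z ∧ ∀ u ∈ U, z < u := by
  classical
  induction U using Finset.induction with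
  | empty =>
    obtain ⟨z, hz⟩ := aux_above hbelow hIH p
    exact ⟨z, hz, by simp⟩
  | @insert u U hu ih =>
    obtain ⟨z, hpz, hzU⟩ := ih fun v hv => hU v (Finset.mem_insert_of_mem hv)
    obtain ⟨w, hpw, hwz, hwu⟩ :=
      aux_pair hbelow hIH hinc hclb hpz (hU u (Finset.mem_insert_self u U))
    refine ⟨w, hpw, fun v hv => ?_⟩
    rcases Finset.mem_insert.1 hv with rfl | hv
    · exact hwu
    · exact hwz.trans (hzU v hv)

lemma aux_sandwich [Nonempty T] (hinc : ∀ x : T, ∃ y, Incomp x y)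
    (hclb : ∀ x y : T, ∃ c, c ≤ x ∧ c ≤ y)
    (hclbfin : ∀ S : Finset T, ∃ c : T, ∀ a ∈ S, c ≤ a)
    (L U F : Finset T) (hL : IsChain (· ≤ ·) (L : Set T))
    (hLU : ∀ l ∈ L, ∀ u ∈ U, l < u) :
    ∃ z, z ∉ F ∧ (∀ l ∈ L, l < z) ∧ ∀ u ∈ U, z < u := by
  have hmaxL : L.Nonempty → ∃ m ∈ L, ∀ l ∈ L, l ≤ m := by
    intro hLne
    obtain ⟨m, hmL, hmax⟩ := L.exists_maximal hLne
    refine ⟨m, hmL, fun l hl => ?_⟩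
    rcases eq_or_ne l m with rfl | h
    · exact le_rfl
    rcases hL hl hmL h with h' | h'
    · exact h'
    · exact hmax hl h'
  have hC0 : ∃ z, (∀ l ∈ L, l < z) ∧ ∀ u ∈ U, z < u := by
    rcases L.eq_empty_or_nonempty with rfl | hLne
    · obtain ⟨c, hc⟩ := hclbfin U
      obtain ⟨c', hc'⟩ := hbelow c
      exact ⟨c', by simp, fun u hu => hc'.trans_le (hc u hu)⟩
    · obtain ⟨m, hmL, hm⟩ := hmaxL hLne
      obtain ⟨z, hmz, hzU⟩ := aux_multi hbelow hIH hinc hclb m U (hLU m hmL)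
      exact ⟨z, fun l hl => (hm l hl).trans_lt hmz, hzU⟩
  have descend : ∀ z, ((∀ l ∈ L, l < z) ∧ ∀ u ∈ U, z < u) →
      ∃ z', z' < z ∧ (∀ l ∈ L, l < z') ∧ ∀ u ∈ U, z' < u := by
    intro z hz
    rcases L.eq_empty_or_nonempty with rfl | hLne
    · obtain ⟨z', h⟩ := hbelow z
      exact ⟨z', h, by simp, fun u hu => h.trans (hz.2 u hu)⟩
    · obtain ⟨m, hmL, hm⟩ := hmaxL hLne
      obtain ⟨z', hmz', hz'z⟩ := aux_dense hbelow hIH (hz.1 m hmL)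
      exact ⟨z', hz'z, fun l hl => (hm l hl).trans_lt hmz',
        fun u hu => hz'z.trans (hz.2 u hu)⟩
  obtain ⟨z0, hz0⟩ := hC0
  choose d hd1 hd2 using descend
  let ψ : ℕ → {z : T // (∀ l ∈ L, l < z) ∧ ∀ u ∈ U, z < u} := fun n =>
    Nat.rec ⟨z0, hz0⟩ (fun _ p => ⟨d p.1 p.2, hd2 p.1 p.2⟩) n
  have hψ : ∀ n, (ψ (n + 1)).1 < (ψ n).1 := fun n => hd1 _ _
  have hanti : StrictAnti (fun n => (ψ n).1) := strictAnti_nat_of_succ_lt hψ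
  by_contra h
  have key : ∀ n, (ψ n).1 ∈ F := by
    intro n
    by_contra hn
    exact h ⟨(ψ n).1, hn, (ψ n).2.1, (ψ n).2.2⟩
  obtain ⟨m, n, hmn, he⟩ :=
    Finite.exists_ne_map_eq_of_infinite (fun n : ℕ => (⟨(ψ n).1, key n⟩ : {x // x ∈ F}))
  have : (ψ m).1 = (ψ n).1 := Subtype.mk_eq_mk.1 he
  exact hmn (hanti.injective this)

lemma aux_forth [Nonempty T] (hch : ∀ x : T, IsChain (· ≤ ·) {z : T | z < x})
    (hinc : ∀ x : T, ∃ y, Incomp x y)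
    (hclb : ∀ x y : T, ∃ c, c ≤ x ∧ c ≤ y)
    (hclbfin : ∀ S : Finset T, ∃ c : T, ∀ a ∈ S, c ≤ a)
    (A : Finset T) (f : T → T)
    (hf : ∀ a ∈ A, ∀ b ∈ A, a < b → f a < f b) (t : T) :
    ∃ (A' : Finset T) (f' : T → T), (∀ a ∈ A', ∀ b ∈ A', a < b → f' a < f' b) ∧
      A ⊆ A' ∧ (∀ a ∈ A, f' a = f a) ∧ t ∈ A' ∧
      (Set.InjOn f ↑A → Set.InjOn f' ↑A') := by
  classical
  by_cases ht : t ∈ A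
  · exact ⟨A, f, hf, Finset.Subset.refl A, fun _ _ => rfl, ht, id⟩
  set D := A.filter (fun a => a < t) with hD
  set U := A.filter (fun a => t < a) with hU
  have hLchain : IsChain (· ≤ ·) ((D.image f : Finset T) : Set T) := by
    intro x hx y hy hne
    simp only [Finset.coe_image, Set.mem_image, Finset.mem_coe] at hx hy
    obtain ⟨d1, hd1, rfl⟩ := hx
    obtain ⟨d2, hd2, rfl⟩ := hy
    have hd1' := Finset.mem_filter.1 hd1
    have hd2' := Finset.mem_filter.1 hd2
    have hne' : d1 ≠ d2 := fun h => hne (by rw [h])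
    rcases hch t hd1'.2 hd2'.2 hne' with h | h
    · exact Or.inl (hf _ hd1'.1 _ hd2'.1 (lt_of_le_of_ne h hne')).le
    · exact Or.inr (hf _ hd2'.1 _ hd1'.1 (lt_of_le_of_ne h hne'.symm)).le
  have hLU : ∀ l ∈ D.image f, ∀ u ∈ U.image f, l < u := by
    intro l hl u hu
    obtain ⟨d, hd, rfl⟩ := Finset.mem_image.1 hl
    obtain ⟨a, ha, rfl⟩ := Finset.mem_image.1 hu
    have hd' := Finset.mem_filter.1 hd
    have ha' := Finset.mem_filter.1 ha
    exact hf _ hd'.1 _ ha'.1 (hd'.2.trans ha'.2)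
  obtain ⟨z, hzF, hzL, hzU⟩ := aux_sandwich hbelow hIH hinc hclb hclbfin
    (D.image f) (U.image f) (A.image f) hLchain hLU
  refine ⟨insert t A, Function.update f t z, ?_, Finset.subset_insert t A, ?_,
    Finset.mem_insert_self t A, ?_⟩
  · intro a ha b hb hab
    rcases Finset.mem_insert.1 ha with ha' | ha' <;> rcases Finset.mem_insert.1 hb with hb' | hb'
    · rw [ha', hb'] at hab
      exact absurd hab (lt_irrefl _)
    · rw [ha'] at hab ⊢
      rw [Function.update_self, Function.update_of_ne (ne_of_mem_of_not_mem hb' ht)]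
      exact hzU (f b) (Finset.mem_image_of_mem f (Finset.mem_filter.2 ⟨hb', hab⟩))
    · rw [hb'] at hab ⊢
      rw [Function.update_self, Function.update_of_ne (ne_of_mem_of_not_mem ha' ht)]
      exact hzL (f a) (Finset.mem_image_of_mem f (Finset.mem_filter.2 ⟨ha', hab⟩))
    · rw [Function.update_of_ne (ne_of_mem_of_not_mem ha' ht),
        Function.update_of_ne (ne_of_mem_of_not_mem hb' ht)]
      exact hf a ha' b hb' hab
  · intro a ha
    exact Function.update_of_ne (ne_of_mem_of_not_mem ha ht) _ _
  · intro hinj x hx y hy hxy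
    simp only [Finset.coe_insert, Set.mem_insert_iff, Finset.mem_coe] at hx hy
    rcases hx with hx' | hx' <;> rcases hy with hy' | hy'
    · rw [hx', hy']
    · rw [hx', Function.update_self, Function.update_of_ne (ne_of_mem_of_not_mem hy' ht)] at hxy
      exact absurd (hxy ▸ Finset.mem_image_of_mem f hy') hzF
    · rw [hy', Function.update_self, Function.update_of_ne (ne_of_mem_of_not_mem hx' ht)] at hxy
      exact absurd (hxy.symm ▸ Finset.mem_image_of_mem f hx') hzF
    · rw [Function.update_of_ne (ne_of_mem_of_not_mem hx' ht),
        Function.update_of_ne (ne_of_mem_of_not_mem hy' ht)] at hxy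
      exact hinj hx' hy' hxy

omit hbelow hIH in
lemma aux_back [Nonempty T] (hch : ∀ x : T, IsChain (· ≤ ·) {z : T | z < x})
    (hinc : ∀ x : T, ∃ y, Incomp x y)
    (hclbfin : ∀ S : Finset T, ∃ c : T, ∀ a ∈ S, c ≤ a)
    (A : Finset T) (f : T → T)
    (hf : ∀ a ∈ A, ∀ b ∈ A, a < b → f a < f b) (s : T) :
    ∃ (A' : Finset T) (f' : T → T), (∀ a ∈ A', ∀ b ∈ A', a < b → f' a < f' b) ∧
      A ⊆ A' ∧ (∀ a ∈ A, f' a = f a) ∧ s ∈ A'.image f' ∧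
      (Set.InjOn f ↑A → Set.InjOn f' ↑A') := by
  classical
  by_cases hs : s ∈ A.image f
  · exact ⟨A, f, hf, Finset.Subset.refl A, fun _ _ => rfl, hs, id⟩
  obtain ⟨c, hc⟩ := hclbfin A
  obtain ⟨y, hy⟩ := hinc c
  have ht : ∀ a ∈ A, Incomp y a := fun a ha =>
    aux_incomp_up hch ⟨hy.2, hy.1⟩ (hc a ha)
  have htA : y ∉ A := fun h => (ht y h).1 le_rfl
  refine ⟨insert y A, Function.update f y s, ?_, Finset.subset_insert y A, ?_, ?_, ?_⟩
  · intro a ha b hb hab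
    rcases Finset.mem_insert.1 ha with ha' | ha' <;> rcases Finset.mem_insert.1 hb with hb' | hb'
    · rw [ha', hb'] at hab
      exact absurd hab (lt_irrefl _)
    · rw [ha'] at hab
      exact absurd hab.le (ht b hb').1
    · rw [hb'] at hab
      exact absurd hab.le (ht a ha').2
    · rw [Function.update_of_ne (ne_of_mem_of_not_mem ha' htA),
        Function.update_of_ne (ne_of_mem_of_not_mem hb' htA)]
      exact hf a ha' b hb' hab
  · intro a ha
    exact Function.update_of_ne (ne_of_mem_of_not_mem ha htA) _ _
  · exact Finset.mem_image.2 ⟨y, Finset.mem_insert_self y A, Function.update_self y s f⟩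
  · intro hinj x hx y' hy'
    simp only [Finset.coe_insert, Set.mem_insert_iff, Finset.mem_coe] at hx hy'
    intro hxy
    rcases hx with hx' | hx' <;> rcases hy' with hy'' | hy''
    · rw [hx', hy'']
    · rw [hx', Function.update_self, Function.update_of_ne (ne_of_mem_of_not_mem hy'' htA)] at hxy
      exact absurd (Finset.mem_image.2 ⟨y', hy'', hxy.symm⟩) hs
    · rw [hy'', Function.update_self, Function.update_of_ne (ne_of_mem_of_not_mem hx' htA)] at hxy
      exact absurd (Finset.mem_image.2 ⟨x, hx', hxy⟩) hs
    · rw [Function.update_of_ne (ne_of_mem_of_not_mem hx' htA),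
        Function.update_of_ne (ne_of_mem_of_not_mem hy'' htA)] at hxy
      exact hinj hx' hy'' hxy

lemma aux_main [Nonempty T] [Countable T]
    (hch : ∀ x : T, IsChain (· ≤ ·) {z : T | z < x})
    (hinc : ∀ x : T, ∃ y, Incomp x y)
    (hclb : ∀ x y : T, ∃ c, c ≤ x ∧ c ≤ y)
    (hclbfin : ∀ S : Finset T, ∃ c : T, ∀ a ∈ S, c ≤ a)
    (A : Finset T) (f : T → T)
    (hf : ∀ a ∈ A, ∀ b ∈ A, a < b → f a < f b) :
    ∃ g : T → T, StrictMono g ∧ Function.Surjective g ∧ (∀ a ∈ A, g a = f a) ∧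
      (Set.InjOn f ↑A → Function.Injective g) := by
  classical
  obtain ⟨e, he⟩ := exists_surjective_nat T
  have step : ∀ (p : {q : Finset T × (T → T) // ∀ a ∈ q.1, ∀ b ∈ q.1, a < b → q.2 a < q.2 b})
      (n : ℕ), ∃ p' : {q : Finset T × (T → T) // ∀ a ∈ q.1, ∀ b ∈ q.1, a < b → q.2 a < q.2 b},
      p.1.1 ⊆ p'.1.1 ∧ (∀ a ∈ p.1.1, p'.1.2 a = p.1.2 a) ∧ e n ∈ p'.1.1 ∧
      e n ∈ p'.1.1.image p'.1.2 ∧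
      (Set.InjOn p.1.2 ↑p.1.1 → Set.InjOn p'.1.2 ↑p'.1.1) := by
    rintro ⟨⟨B, kk⟩, hk⟩ n
    obtain ⟨B₁, k₁, hk₁, hsub₁, hagr₁, hmem₁, hinj₁⟩ :=
      aux_forth hbelow hIH hch hinc hclb hclbfin B kk hk (e n)
    obtain ⟨B₂, k₂, hk₂, hsub₂, hagr₂, himg₂, hinj₂⟩ :=
      aux_back hch hinc hclbfin B₁ k₁ hk₁ (e n)
    refine ⟨⟨⟨B₂, k₂⟩, hk₂⟩, hsub₁.trans hsub₂, ?_, hsub₂ hmem₁, himg₂,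
      fun h => hinj₂ (hinj₁ h)⟩
    intro a ha
    show k₂ a = kk a
    rw [hagr₂ a (hsub₁ ha), hagr₁ a ha]
  choose F hsub hagr hmem himg hinj using step
  let seq : ℕ → {q : Finset T × (T → T) // ∀ a ∈ q.1, ∀ b ∈ q.1, a < b → q.2 a < q.2 b} :=
    fun n => Nat.rec ⟨⟨A, f⟩, hf⟩ (fun n p => F p n) n
  have hmono : ∀ m n, m ≤ n → (seq m).1.1 ⊆ (seq n).1.1 := by
    intro m n h
    induction n, h using Nat.le_induction with
    | base => exact Finset.Subset.refl _
    | succ n hmn ih => exact ih.trans (hsub (seq n) n)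
  have hagree : ∀ m n, m ≤ n → ∀ a ∈ (seq m).1.1, (seq n).1.2 a = (seq m).1.2 a := by
    intro m n h
    induction n, h using Nat.le_induction with
    | base => intro a _; rfl
    | succ n hmn ih =>
      intro a ha
      rw [show (seq (n+1)) = F (seq n) n from rfl]
      rw [hagr (seq n) n a (hmono m n hmn ha), ih a ha]
  have hinj' : Set.InjOn f ↑A → ∀ n, Set.InjOn (seq n).1.2 ↑(seq n).1.1 := by
    intro h n
    induction n with
    | zero => exact h
    | succ n ih => exact hinj (seq n) n ih
  have cover : ∀ x : T, ∃ n, x ∈ (seq n).1.1 := by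
    intro x
    obtain ⟨n, rfl⟩ := he x
    exact ⟨n + 1, hmem (seq n) n⟩
  let g : T → T := fun x => (seq (Nat.find (cover x))).1.2 x
  have hg : ∀ n, ∀ x ∈ (seq n).1.1, g x = (seq n).1.2 x := by
    intro n x hx
    exact (hagree (Nat.find (cover x)) n (Nat.find_min' (cover x) hx) x
      (Nat.find_spec (cover x))).symm
  refine ⟨g, ?_, ?_, ?_, ?_⟩
  · intro x y hxy
    have hx : x ∈ (seq (max (Nat.find (cover x)) (Nat.find (cover y)))).1.1 :=
      hmono _ _ (le_max_left _ _) (Nat.find_spec (cover x))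
    have hy : y ∈ (seq (max (Nat.find (cover x)) (Nat.find (cover y)))).1.1 :=
      hmono _ _ (le_max_right _ _) (Nat.find_spec (cover y))
    rw [hg _ x hx, hg _ y hy]
    exact (seq _).2 x hx y hy hxy
  · intro s
    obtain ⟨n, rfl⟩ := he s
    obtain ⟨a, ha, hfa⟩ := Finset.mem_image.1 (himg (seq n) n)
    exact ⟨a, by rw [hg (n + 1) a ha]; exact hfa⟩
  · intro a ha
    have ha0 : a ∈ (seq 0).1.1 := ha
    rw [hg 0 a ha0]
    rfl
  · intro hinjA x y hxy
    have hx : x ∈ (seq (max (Nat.find (cover x)) (Nat.find (cover y)))).1.1 :=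
      hmono _ _ (le_max_left _ _) (Nat.find_spec (cover x))
    have hy : y ∈ (seq (max (Nat.find (cover x)) (Nat.find (cover y)))).1.1 :=
      hmono _ _ (le_max_right _ _) (Nat.find_spec (cover y))
    rw [hg _ x hx, hg _ y hy] at hxy
    exact hinj' hinjA _ hx hy hxy

end Rich
end Aux


/-- For a countable nontrivial tree `T`: `T` is IE iff it is both HE and MB, iff it is
IH and every point has an incomparable point. -/
theorem tree_IE_iff_HE_MB_iff_IH_incomp {T : Type*} [PartialOrder T] [Countable T]
    (hT : IsTreePoset T) (hnt : ∃ x y : T, Incomp x y) :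
    (IEHomogeneous T ↔ HEHomogeneous T ∧ MBHomogeneous T) ∧
      (IEHomogeneous T ↔ IHHomogeneous T ∧ ∀ x : T, ∃ y : T, Incomp x y) := by
  classical
  obtain ⟨hch, hconn⟩ := hT
  obtain ⟨x₀, y₀, hxy₀⟩ := hnt
  have hne : Nonempty T := ⟨x₀⟩
  have hclb : ∀ x y : T, ∃ c, c ≤ x ∧ c ≤ y := aux_clb hch hconn
  have hclbfin : ∀ S : Finset T, ∃ c : T, ∀ a ∈ S, c ≤ a := aux_clb_finset hch hconn
  have iso_pres : ∀ (A : Finset T) (f : T → T), IsFinPartIso A f →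
      ∀ a ∈ A, ∀ b ∈ A, a < b → f a < f b := by
    intro A f h a ha b hb hab
    have h1 : f a ≤ f b := (h a ha b hb).1 hab.le
    refine lt_of_le_of_ne h1 ?_
    intro heq
    have h2 : b ≤ a := (h b hb a ha).2 (le_of_eq heq.symm)
    exact absurd (le_antisymm hab.le h2) (ne_of_lt hab)
  have ie_inc : IEHomogeneous T → ∀ x : T, ∃ y, Incomp x y := by
    intro hIE x
    have hiso : IsFinPartIso ({x} : Finset T) (fun _ => x₀) := by
      intro u hu v hv
      simp only [Finset.mem_singleton] at hu hv
      rw [hu, hv]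
      exact iff_of_true le_rfl le_rfl
    obtain ⟨g, hg, hgs, hge⟩ := hIE {x} _ hiso
    have hgx : g x = x₀ := hge x (Finset.mem_singleton_self x)
    obtain ⟨z, hz⟩ := hgs y₀
    refine ⟨z, ?_, ?_⟩
    · intro hxz
      rcases lt_or_eq_of_le hxz with h | h
      · have h' := hg h
        rw [hgx, hz] at h'
        exact hxy₀.1 h'.le
      · have h' : x₀ = y₀ := by rw [← hgx, h, hz]
        exact hxy₀.1 h'.le
    · intro hzx
      rcases lt_or_eq_of_le hzx with h | h
      · have h' := hg h
        rw [hgx, hz] at h'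
        exact hxy₀.2 h'.le
      · have h' : y₀ = x₀ := by rw [← hgx, ← h, hz]
        exact hxy₀.2 h'.le
  have hIH_of_IE : IEHomogeneous T → IHHomogeneous T := by
    intro hIE A f h
    obtain ⟨g, h1, _, h3⟩ := hIE A f h
    exact ⟨g, h1, h3⟩
  have main : IHHomogeneous T → (∀ x : T, ∃ y, Incomp x y) →
      ∀ (A : Finset T) (f : T → T), (∀ a ∈ A, ∀ b ∈ A, a < b → f a < f b) →
      ∃ g : T → T, StrictMono g ∧ Function.Surjective g ∧ (∀ a ∈ A, g a = f a) ∧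
        (Set.InjOn f ↑A → Function.Injective g) := by
    intro hIH hinc A f hf
    exact aux_main (aux_below hch hconn hinc) hIH hch hinc hclb hclbfin A f hf
  constructor
  · constructor
    · intro hIE
      have hIH := hIH_of_IE hIE
      have hinc := ie_inc hIE
      constructor
      · intro A f hf
        obtain ⟨g, h1, h2, h3, _⟩ := main hIH hinc A f hf
        exact ⟨g, h1, h2, h3⟩
      · intro A f hinj hf
        obtain ⟨g, h1, h2, h3, h4⟩ := main hIH hinc A f hf
        exact ⟨g, h1, ⟨h4 hinj, h2⟩, h3⟩
    · rintro ⟨hHE, _⟩ A f hiso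
      exact hHE A f (iso_pres A f hiso)
  · constructor
    · intro hIE
      exact ⟨hIH_of_IE hIE, ie_inc hIE⟩
    · rintro ⟨hIH, hinc⟩ A f hiso
      obtain ⟨g, h1, h2, h3, _⟩ := main hIH hinc A f (iso_pres A f hiso)
      exact ⟨g, h1, h2, h3⟩
end

section
/- Let P be a countable partial order which is IĒ-homogeneous, and let n ≥ 1 be a natural number such that every antichain in P has at most n elements and some antichain in P has exactly n elements. Then every x ∈ P belongs to an antichain with exactly n elements. -/
/-- If `P` is a countable IĒ-homogeneous poset whose antichains have maximum size
`n ≥ 1`, then every element of `P` lies in an antichain of size `n`. -/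
theorem IEbar_antichain_max (P : Type*) [PartialOrder P] [Countable P]
    (hIE : IEbarHomogeneous P) (n : ℕ) (hn : 1 ≤ n)
    (hmax : ∀ S : Finset P, IsAntichain (· ≤ ·) (S : Set P) → S.card ≤ n)
    (hex : ∃ S : Finset P, IsAntichain (· ≤ ·) (S : Set P) ∧ S.card = n) :
    ∀ x : P, ∃ S : Finset P, IsAntichain (· ≤ ·) (S : Set P) ∧ S.card = n ∧ x ∈ S := by
  classical
  intro x
  obtain ⟨S, hS, hcard⟩ := hex
  have hSne : S.Nonempty := Finset.card_pos.mp (by omega)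
  obtain ⟨s, hs⟩ := hSne
  have hiso : IsFinPartIso {x} (fun _ => s) := by
    intro a₁ h₁ a₂ h₂
    simp only [Finset.mem_singleton] at h₁ h₂
    subst h₁; subst h₂; simp
  obtain ⟨g, hmono, hsurj, hgx⟩ := hIE {x} (fun _ => s) hiso
  have hgx' : g x = s := hgx x (Finset.mem_singleton_self x)
  set h : P → P := fun p => if p = s then x else Function.surjInv hsurj p with hh
  have hgh : ∀ p, g (h p) = p := by
    intro p
    by_cases hp : p = s
    · simp [hh, hp, hgx']
    · simp [hh, hp, Function.surjInv_eq hsurj]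
  have hinj : Function.Injective h := by
    intro a b hab
    have := congrArg g hab
    rwa [hgh, hgh] at this
  refine ⟨S.image h, ?_, ?_, ?_⟩
  · intro t₁ ht₁ t₂ ht₂ hne hle
    simp only [Finset.coe_image, Set.mem_image, Finset.mem_coe] at ht₁ ht₂
    obtain ⟨s₁, hs₁, rfl⟩ := ht₁
    obtain ⟨s₂, hs₂, rfl⟩ := ht₂
    have hne' : s₁ ≠ s₂ := fun h' => hne (by rw [h'])
    exact hS hs₁ hs₂ hne' (by simpa [hgh] using (hgh s₁ ▸ hgh s₂ ▸ hmono hle))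
  · rw [Finset.card_image_of_injective _ hinj, hcard]
  · refine Finset.mem_image.mpr ⟨s, hs, ?_⟩
    simp [hh]
end

section
/- Let P be a countable partial order which is IĒ-homogeneous, which embeds V (there exist a, b, c ∈ P with c < a, c < b and a ∥ b) and Λ (there exist a, b, c ∈ P with a < c, b < c and a ∥ b), but which does not embed Z (there do not exist a, b, c ∈ P with a < b, c ∥ a and c ∥ b). Then P is a chain of antichains C_n: there exists a nonempty countable type A such that P is order-isomorphic to ℚ × A with the order (q, a) ≤ (r, b) iff q < r or (q = r and a = b). -/
section Aux
open scoped Classical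

variable {P : Type*} [PartialOrder P]

lemma incomp_symm {x y : P} (h : Incomp x y) : Incomp y x := ⟨h.2, h.1⟩

lemma incomp_ne {x y : P} (h : Incomp x y) : x ≠ y := fun e => h.1 (le_of_eq e)

/-- "same antichain class" -/
def PEqv (x y : P) : Prop := x = y ∨ Incomp x y

lemma pe_refl (x : P) : PEqv x x := Or.inl rfl

lemma pe_symm {x y : P} (h : PEqv x y) : PEqv y x := by
  rcases h with rfl | h
  · exact Or.inl rfl
  · exact Or.inr (incomp_symm h)

lemma lt_pe_right (hZ : ¬ ∃ a b c : P, a < b ∧ Incomp c a ∧ Incomp c b)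
    {x y y' : P} (hxy : x < y) (h : PEqv y y') : x < y' := by
  rcases h with rfl | h
  · exact hxy
  by_cases h1 : x ≤ y'
  · rcases h1.lt_or_eq with h2 | rfl
    · exact h2
    · exact absurd hxy.le h.2
  · by_cases h2 : y' ≤ x
    · exact absurd (h2.trans hxy.le) h.2
    · exact absurd ⟨x, y, y', hxy, ⟨h2, h1⟩, incomp_symm h⟩ hZ

lemma lt_pe_left (hZ : ¬ ∃ a b c : P, a < b ∧ Incomp c a ∧ Incomp c b)
    {x x' y : P} (hxy : x < y) (h : PEqv x x') : x' < y := by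
  rcases h with rfl | h
  · exact hxy
  by_cases h1 : x' ≤ y
  · rcases h1.lt_or_eq with h2 | rfl
    · exact h2
    · exact absurd hxy.le h.1
  · by_cases h2 : y ≤ x'
    · exact absurd (hxy.le.trans h2) h.1
    · exact absurd ⟨x, y, x', hxy, incomp_symm h, ⟨h1, h2⟩⟩ hZ

lemma pe_trans (hZ : ¬ ∃ a b c : P, a < b ∧ Incomp c a ∧ Incomp c b)
    {x y z : P} (h1 : PEqv x y) (h2 : PEqv y z) : PEqv x z := by
  rcases h1 with rfl | h1
  · exact h2
  rcases h2 with rfl | h2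
  · exact Or.inr h1
  by_cases hxz : x = z
  · exact Or.inl hxz
  refine Or.inr ⟨fun hle => ?_, fun hle => ?_⟩
  · exact hZ ⟨x, z, y, hle.lt_of_ne hxz, incomp_symm h1, h2⟩
  · exact hZ ⟨z, x, y, hle.lt_of_ne (Ne.symm hxz), h2, incomp_symm h1⟩

lemma pair_iso {p₁ p₂ q₁ q₂ : P} (hp : Incomp p₁ p₂) (hq : Incomp q₁ q₂) :
    IsFinPartIso {p₁, p₂} (fun w => if w = p₁ then q₁ else q₂) := by
  have hne : p₂ ≠ p₁ := (incomp_ne hp).symm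
  intro a₁ h₁ a₂ h₂
  rw [Finset.mem_insert, Finset.mem_singleton] at h₁ h₂
  rcases h₁ with rfl | rfl <;> rcases h₂ with rfl | rfl <;> simp only [if_pos rfl, if_neg hne]
  · exact iff_of_true le_rfl le_rfl
  · exact iff_of_false hp.1 hq.1
  · exact iff_of_false hp.2 hq.2
  · exact iff_of_true le_rfl le_rfl

lemma chain_pair_iso {s t u v : P} (hst : s < t) (huv : u < v) :
    IsFinPartIso {s, t} (fun w => if w = s then u else v) := by
  have hne : t ≠ s := hst.ne'
  intro a₁ h₁ a₂ h₂
  rw [Finset.mem_insert, Finset.mem_singleton] at h₁ h₂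
  rcases h₁ with rfl | rfl <;> rcases h₂ with rfl | rfl <;> simp only [if_pos rfl, if_neg hne]
  · exact iff_of_true le_rfl le_rfl
  · exact iff_of_true hst.le huv.le
  · exact iff_of_false (LT.lt.not_ge hst) (LT.lt.not_ge huv)
  · exact iff_of_true le_rfl le_rfl

lemma exists_incomp (hIE : IEbarHomogeneous P)
    (hV : ∃ a b c : P, c < a ∧ c < b ∧ Incomp a b) (x : P) : ∃ z, Incomp x z := by
  obtain ⟨a, b, c, hca, hcb, hab⟩ := hV
  have hiso : IsFinPartIso {x} (fun _ => a) := by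
    intro a₁ h₁ a₂ h₂
    rw [Finset.mem_singleton] at h₁ h₂
    subst h₁; subst h₂
    exact iff_of_true le_rfl le_rfl
  obtain ⟨g, hmono, hsurj, hval⟩ := hIE {x} _ hiso
  have hgx : g x = a := hval x (Finset.mem_singleton_self x)
  obtain ⟨z, hz⟩ := hsurj b
  refine ⟨z, ⟨fun h => hab.1 ?_, fun h => hab.2 ?_⟩⟩
  · have := hmono h; rwa [hgx, hz] at this
  · have := hmono h; rwa [hgx, hz] at this

end Aux

section Quot
open scoped Classical
variable {P : Type*} [PartialOrder P]

def pSetoid (hZ : ¬ ∃ a b c : P, a < b ∧ Incomp c a ∧ Incomp c b) : Setoid P :=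
  ⟨PEqv, ⟨pe_refl, pe_symm, pe_trans hZ⟩⟩

def qLT (hZ : ¬ ∃ a b c : P, a < b ∧ Incomp c a ∧ Incomp c b) :
    Quotient (pSetoid hZ) → Quotient (pSetoid hZ) → Prop :=
  Quotient.lift₂ (· < ·) (by
    intro a b a' b' h1 h2
    exact propext ⟨fun h => lt_pe_left hZ (lt_pe_right hZ h h2) h1,
      fun h => lt_pe_left hZ (lt_pe_right hZ h (pe_symm h2)) (pe_symm h1)⟩)

variable {hZ : ¬ ∃ a b c : P, a < b ∧ Incomp c a ∧ Incomp c b}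

lemma qLT_mk (x y : P) : qLT hZ (Quotient.mk _ x) (Quotient.mk _ y) ↔ x < y := Iff.rfl

lemma qLT_trans {p q r} (h1 : qLT hZ p q) (h2 : qLT hZ q r) : qLT hZ p r := by
  induction p using Quotient.ind
  induction q using Quotient.ind
  induction r using Quotient.ind
  exact lt_trans h1 h2

lemma qLT_irrefl (p) : ¬ qLT hZ p p := by
  induction p using Quotient.ind
  exact lt_irrefl _

noncomputable def qLO (hZ : ¬ ∃ a b c : P, a < b ∧ Incomp c a ∧ Incomp c b) :
    LinearOrder (Quotient (pSetoid hZ)) where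
  le p q := p = q ∨ qLT hZ p q
  lt := qLT hZ
  le_refl p := Or.inl rfl
  le_trans p q r h1 h2 := by
    rcases h1 with rfl | h1
    · exact h2
    rcases h2 with rfl | h2
    · exact Or.inr h1
    · exact Or.inr (qLT_trans h1 h2)
  le_antisymm p q h1 h2 := by
    rcases h1 with rfl | h1
    · rfl
    rcases h2 with rfl | h2
    · rfl
    · exact absurd (qLT_trans h1 h2) (qLT_irrefl p)
  lt_iff_le_not_ge p q := by
    constructor
    · intro h
      refine ⟨Or.inr h, fun hc => ?_⟩
      rcases hc with rfl | hc
      · exact qLT_irrefl _ h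
      · exact qLT_irrefl _ (qLT_trans h hc)
    · rintro ⟨h1, h2⟩
      rcases h1 with rfl | h1
      · exact absurd (Or.inl rfl) h2
      · exact h1
  le_total p q := by
    induction p using Quotient.ind with | _ x => ?_
    induction q using Quotient.ind with | _ y => ?_
    by_cases hpe : PEqv x y
    · exact Or.inl (Or.inl (Quotient.sound hpe))
    · have hne : x ≠ y := fun e => hpe (Or.inl e)
      have hni : ¬ Incomp x y := fun h => hpe (Or.inr h)
      by_cases hxy : x ≤ y
      · exact Or.inl (Or.inr (hxy.lt_of_ne hne))
      · have hyx : y ≤ x := by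
          by_contra h2
          exact hni ⟨hxy, h2⟩
        exact Or.inr (Or.inr (hyx.lt_of_ne hne.symm))
  toDecidableLE _ _ := Classical.propDecidable _
end Quot

section Struct
open scoped Classical
variable {P : Type*} [PartialOrder P]

lemma exists_below (hZ : ¬ ∃ a b c : P, a < b ∧ Incomp c a ∧ Incomp c b)
    (hIE : IEbarHomogeneous P)
    (hV : ∃ a b c : P, c < a ∧ c < b ∧ Incomp a b) (x : P) : ∃ s, s < x := by
  by_cases hd : ∃ d, x < d
  · obtain ⟨d, hd⟩ := hd
    obtain ⟨d₂, hdd⟩ := exists_incomp hIE hV d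
    have hxd₂ : x < d₂ := lt_pe_right hZ hd (Or.inr hdd)
    obtain ⟨x₂, hxx⟩ := exists_incomp hIE hV x
    obtain ⟨g, hmono, hsurj, hval⟩ := hIE {d, d₂} _ (pair_iso hdd hxx)
    have hgd : g d = x := by
      rw [hval d (Finset.mem_insert_self _ _), if_pos rfl]
    have hgd₂ : g d₂ = x₂ := by
      rw [hval d₂ (Finset.mem_insert_of_mem (Finset.mem_singleton_self _)),
        if_neg (incomp_ne hdd).symm]
    have h1 : g x ≤ x := by have := hmono hd.le; rwa [hgd] at this
    have h2 : g x ≤ x₂ := by have := hmono hxd₂.le; rwa [hgd₂] at this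
    refine ⟨g x, h1.lt_of_ne fun hEq => hxx.1 ?_⟩
    rw [← hEq]; exact h2
  · push_neg at hd
    obtain ⟨a, b, c, hca, hcb, hab⟩ := hV
    by_cases h1 : x ≤ a
    · rcases h1.lt_or_eq with h1 | rfl
      · exact absurd h1 (hd a)
      · exact ⟨c, lt_pe_right hZ hcb (Or.inr (incomp_symm hab))⟩
    · by_cases h2 : a ≤ x
      · exact ⟨c, hca.trans_le h2⟩
      · exact ⟨c, lt_pe_right hZ hca (Or.inr ⟨h2, h1⟩)⟩

lemma exists_above (hZ : ¬ ∃ a b c : P, a < b ∧ Incomp c a ∧ Incomp c b)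
    (hIE : IEbarHomogeneous P)
    (hV : ∃ a b c : P, c < a ∧ c < b ∧ Incomp a b) (x : P) : ∃ t, x < t := by
  obtain ⟨s, hs⟩ := exists_below hZ hIE hV x
  obtain ⟨s₂, hss⟩ := exists_incomp hIE hV s
  have hs₂x : s₂ < x := lt_pe_left hZ hs (Or.inr hss)
  obtain ⟨x₂, hxx⟩ := exists_incomp hIE hV x
  obtain ⟨g, hmono, hsurj, hval⟩ := hIE {s, s₂} _ (pair_iso hss hxx)
  have hgs : g s = x := by
    rw [hval s (Finset.mem_insert_self _ _), if_pos rfl]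
  have hgs₂ : g s₂ = x₂ := by
    rw [hval s₂ (Finset.mem_insert_of_mem (Finset.mem_singleton_self _)),
      if_neg (incomp_ne hss).symm]
  have h1 : x ≤ g x := by have := hmono hs.le; rwa [hgs] at this
  have h2 : x₂ ≤ g x := by have := hmono hs₂x.le; rwa [hgs₂] at this
  refine ⟨g x, h1.lt_of_ne' fun hEq => hxx.2 ?_⟩
  rw [← hEq]; exact h2

lemma dense_between (hZ : ¬ ∃ a b c : P, a < b ∧ Incomp c a ∧ Incomp c b)
    (hIE : IEbarHomogeneous P)
    (hV : ∃ a b c : P, c < a ∧ c < b ∧ Incomp a b)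
    {u v : P} (huv : u < v) : ∃ m, u < m ∧ m < v := by
  by_contra hmid
  push_neg at hmid
  obtain ⟨s, hs⟩ := exists_below hZ hIE hV u
  obtain ⟨t, ht⟩ := exists_above hZ hIE hV v
  obtain ⟨u₂, huu⟩ := exists_incomp hIE hV u
  obtain ⟨v₂, hvv⟩ := exists_incomp hIE hV v
  have hut : u < t := huv.trans ht
  have hst : s < t := hs.trans hut
  obtain ⟨g, hmono, hsurj, hval⟩ := hIE {s, t} _ (chain_pair_iso hst huv)
  have hgs : g s = u := by
    rw [hval s (Finset.mem_insert_self _ _), if_pos rfl]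
  have hgt : g t = v := by
    rw [hval t (Finset.mem_insert_of_mem (Finset.mem_singleton_self _)), if_neg hst.ne']
  have step1 : ∀ c, PEqv u c → g c = v := by
    intro c hc
    have hsc : s < c := lt_pe_right hZ hs hc
    have hct : c < t := lt_pe_left hZ hut hc
    obtain ⟨z, hz⟩ := hsurj u₂
    have hzs : PEqv s z := by
      refine Or.inr ⟨fun h => ?_, fun h => ?_⟩
      · rcases h.lt_or_eq with h | h
        · have := hmono h.le; rw [hgs, hz] at this
          exact huu.1 this
        · rw [h, hz] at hgs
          exact (incomp_ne huu) hgs.symm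
      · have := hmono h; rw [hgs, hz] at this
        exact huu.2 this
    have hzc : z < c := lt_pe_left hZ hsc hzs
    have hu₂c : u₂ ≤ g c := by have := hmono hzc.le; rwa [hz] at this
    have huc : u ≤ g c := by have := hmono hsc.le; rwa [hgs] at this
    have hcv : g c ≤ v := by have := hmono hct.le; rwa [hgt] at this
    rcases huc.lt_or_eq with h1 | h1
    · rcases hcv.lt_or_eq with h2 | h2
      · exact absurd h2 (hmid _ h1)
      · exact h2
    · rw [← h1] at hu₂c
      exact absurd hu₂c huu.2
  obtain ⟨z', hz'⟩ := hsurj v₂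
  have hzt : PEqv t z' := by
    refine Or.inr ⟨fun h => ?_, fun h => ?_⟩
    · rcases h.lt_or_eq with h | h
      · have := hmono h.le; rw [hgt, hz'] at this
        exact hvv.1 this
      · rw [h, hz'] at hgt
        exact (incomp_ne hvv) hgt.symm
    · have := hmono h; rw [hgt, hz'] at this
      exact hvv.2 this
  have huz : u < z' := lt_pe_right hZ hut hzt
  have hfin : v ≤ v₂ := by
    have h := hmono huz.le
    rwa [step1 u (Or.inl rfl), hz'] at h
  exact hvv.1 hfin

lemma class_inj (hIE : IEbarHomogeneous P) (x y : P) :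
    ∃ h : {z : P // PEqv x z} → {z : P // PEqv y z}, Function.Injective h := by
  have hiso : IsFinPartIso {y} (fun _ => x) := by
    intro a₁ h₁ a₂ h₂
    rw [Finset.mem_singleton] at h₁ h₂
    subst h₁; subst h₂
    exact iff_of_true le_rfl le_rfl
  obtain ⟨g, hmono, hsurj, hval⟩ := hIE {y} _ hiso
  have hgy : g y = x := hval y (Finset.mem_singleton_self y)
  choose pre hpre using hsurj
  have key : ∀ z : P, PEqv x z → z ≠ x → Incomp y (pre z) := by
    intro z hz hne
    have hinc : Incomp x z := hz.resolve_left fun e => hne e.symm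
    constructor
    · intro h
      have := hmono h
      rw [hgy, hpre] at this
      exact hinc.1 this
    · intro h
      have := hmono h
      rw [hgy, hpre] at this
      exact hinc.2 this
  refine ⟨fun z => if hne : (z : P) = x then ⟨y, Or.inl rfl⟩
    else ⟨pre (z : P), Or.inr (key (z : P) z.2 hne)⟩, ?_⟩
  intro z₁ z₂ heq
  by_cases h1 : (z₁ : P) = x <;> by_cases h2 : (z₂ : P) = x
  · exact Subtype.ext (h1.trans h2.symm)
  · simp only [dif_pos h1, dif_neg h2] at heq
    have hyp : y = pre (z₂ : P) := congrArg Subtype.val heq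
    exact absurd (show (z₂ : P) = x by rw [← hpre (z₂ : P), ← hyp, hgy]) h2
  · simp only [dif_pos h2, dif_neg h1] at heq
    have hyp : y = pre (z₁ : P) := (congrArg Subtype.val heq).symm
    exact absurd (show (z₁ : P) = x by rw [← hpre (z₁ : P), ← hyp, hgy]) h1
  · simp only [dif_neg h1, dif_neg h2] at heq
    have hyp : pre (z₁ : P) = pre (z₂ : P) := congrArg Subtype.val heq
    apply Subtype.ext
    rw [← hpre (z₁ : P), ← hpre (z₂ : P), hyp]

end Struct

/-- A countable IĒ-homogeneous poset embedding `V` and `Λ` but not `Z` is a chain of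
antichains `C_n`: it is order-isomorphic to `ℚ × A` for some nonempty countable `A`,
where `(q, a) ≤ (r, b)` iff `q < r` or `(q, a) = (r, b)`. -/
theorem IEbar_V_Lambda_notZ_chain_of_antichains (P : Type*) [PartialOrder P] [Countable P]
    (hIE : IEbarHomogeneous P)
    (hV : ∃ a b c : P, c < a ∧ c < b ∧ Incomp a b)
    (hL : ∃ a b c : P, a < c ∧ b < c ∧ Incomp a b)
    (hZ : ¬ ∃ a b c : P, a < b ∧ Incomp c a ∧ Incomp c b) :
    ∃ (A : Type) (_ : Countable A) (_ : Nonempty A) (e : P ≃ ℚ × A),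
      ∀ x y : P, x ≤ y ↔ ((e x).1 < (e y).1 ∨ e x = e y) := by
    classical
  obtain ⟨a₀, -, -, -, -, -⟩ := id hV
  set S : Setoid P := pSetoid hZ with hS
  letI : LinearOrder (Quotient S) := qLO hZ
  letI : Preorder (Quotient S) := (qLO hZ).toPartialOrder.toPreorder
  haveI : DenselyOrdered (Quotient S) := by
    constructor
    intro p q
    induction p using Quotient.ind with | _ x => ?_
    induction q using Quotient.ind with | _ y => ?_
    intro (h : x < y)
    obtain ⟨m, hm1, hm2⟩ := dense_between hZ hIE hV h
    exact ⟨Quotient.mk S m, hm1, hm2⟩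
  haveI : NoMinOrder (Quotient S) := by
    constructor
    intro p
    induction p using Quotient.ind with | _ x => ?_
    obtain ⟨s, hs⟩ := exists_below hZ hIE hV x
    exact ⟨Quotient.mk S s, hs⟩
  haveI : NoMaxOrder (Quotient S) := by
    constructor
    intro p
    induction p using Quotient.ind with | _ x => ?_
    obtain ⟨t, ht⟩ := exists_above hZ hIE hV x
    exact ⟨Quotient.mk S t, ht⟩
  haveI : Nonempty (Quotient S) := ⟨Quotient.mk S a₀⟩
  obtain ⟨φ⟩ := Order.iso_of_countable_dense (α := Quotient S) (β := ℚ)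
  -- the abstract antichain type
  obtain ⟨fnat, hfnat⟩ := Countable.exists_injective_nat {z : P // PEqv a₀ z}
  let eA : {z : P // PEqv a₀ z} ≃ Set.range fnat := Equiv.ofInjective fnat hfnat
  have hcls : ∀ x y : P, Nonempty ({z : P // PEqv x z} ≃ {z : P // PEqv y z}) := by
    intro x y
    obtain ⟨f1, hf1⟩ := class_inj hIE x y
    obtain ⟨f2, hf2⟩ := class_inj hIE y x
    obtain ⟨h, hh⟩ := Function.Embedding.schroeder_bernstein hf1 hf2
    exact ⟨Equiv.ofBijective h hh⟩
  have hfib : ∀ q : Quotient S,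
      Nonempty ({z : P // Quotient.mk S z = q} ≃ {z : P // PEqv a₀ z}) := by
    intro q
    have e1 : {z : P // Quotient.mk S z = q} ≃ {z : P // PEqv q.out z} := by
      refine Equiv.subtypeEquivRight fun z => ?_
      constructor
      · intro h
        refine pe_symm (?_ : PEqv z q.out)
        have : Quotient.mk S z = Quotient.mk S q.out := by rw [h, Quotient.out_eq]
        exact Quotient.exact this
      · intro h
        have : Quotient.mk S z = Quotient.mk S q.out := Quotient.sound (pe_symm h)
        rw [this, Quotient.out_eq]
    exact ⟨e1.trans (hcls q.out a₀).some⟩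
  let γ : ∀ q : Quotient S,
      {z : P // Quotient.mk S z = q} ≃ {z : P // PEqv a₀ z} := fun q => (hfib q).some
  let e : P ≃ ℚ × Set.range fnat :=
    (Equiv.sigmaFiberEquiv (fun z : P => Quotient.mk S z)).symm.trans
      ((Equiv.sigmaCongrRight γ).trans
        ((Equiv.sigmaEquivProd (Quotient S) {z : P // PEqv a₀ z}).trans
          (Equiv.prodCongr φ.toEquiv eA)))
  refine ⟨Set.range fnat, inferInstance, ⟨eA ⟨a₀, pe_refl a₀⟩⟩, e, ?_⟩
  intro x y
  have h1 : (e x).1 = φ (Quotient.mk S x) := rfl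
  have h2 : (e y).1 = φ (Quotient.mk S y) := rfl
  have hlt : (e x).1 < (e y).1 ↔ x < y := by
    rw [h1, h2, φ.lt_iff_lt]
    exact Iff.rfl
  have heq : e x = e y ↔ x = y := e.injective.eq_iff
  rw [le_iff_lt_or_eq, hlt, heq]
end

section
/- Let P be a countable partial order which is IĒ-homogeneous, which is not a chain (it has an incomparable pair), not an antichain (it has a pair a < b), and all of whose antichains are finite. Then P is not MĒ-homogeneous: there exists an injective <-preserving map between finite subsets of P which has no extension to a surjective ≤-preserving map P → P. -/
lemma Incomp.isymm {P : Type*} [PartialOrder P] {x y : P} (h : Incomp x y) :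
    Incomp y x := ⟨h.2, h.1⟩

lemma Incomp.ine {P : Type*} [PartialOrder P] {x y : P} (h : Incomp x y) :
    x ≠ y := fun he => h.1 (he ▸ le_refl x)

namespace IEbarAux

variable {P : Type*} [PartialOrder P]

lemma ext_single (hIE : IEbarHomogeneous P) (p q : P) :
    ∃ g : P → P, Monotone g ∧ Function.Surjective g ∧ g p = q := by
  obtain ⟨g, h1, h2, h3⟩ := hIE {p} (fun _ => q) (by
    intro a₁ h₁ a₂ h₂
    simp only [Finset.mem_singleton] at h₁ h₂
    subst h₁; subst h₂; simp)
  exact ⟨g, h1, h2, by simpa using h3 p (Finset.mem_singleton_self p)⟩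

lemma ext_pair_incomp (hIE : IEbarHomogeneous P) {a b : P} (hab : Incomp a b) {p q : P}
    (hpq : Incomp p q) :
    ∃ g : P → P, Monotone g ∧ Function.Surjective g ∧ g a = p ∧ g b = q := by
  classical
  have hne : a ≠ b := hab.ine
  obtain ⟨g, h1, h2, h3⟩ := hIE {a, b} (fun t => if t = a then p else q) (by
    intro a₁ h₁ a₂ h₂
    simp only [Finset.mem_insert, Finset.mem_singleton] at h₁ h₂
    rcases h₁ with rfl | rfl <;> rcases h₂ with rfl | rfl
    · simp
    · simp only [if_pos rfl, if_neg hne.symm]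
      exact iff_of_false hab.1 hpq.1
    · simp only [if_pos rfl, if_neg hne.symm]
      exact iff_of_false hab.2 hpq.2
    · simp)
  refine ⟨g, h1, h2, ?_, ?_⟩
  · have := h3 a (by simp); simpa using this
  · have := h3 b (by simp); rw [this]; simp [hne.symm]

lemma ext_pair_chain (hIE : IEbarHomogeneous P) {a b : P} (hab : a < b) {p q : P}
    (hpq : p < q) :
    ∃ g : P → P, Monotone g ∧ Function.Surjective g ∧ g a = p ∧ g b = q := by
  classical
  have hne : a ≠ b := hab.ne
  have hba : ¬ b ≤ a := fun h => absurd (le_antisymm hab.le h) hne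
  have hqp : ¬ q ≤ p := fun h => absurd (le_antisymm hpq.le h) hpq.ne
  obtain ⟨g, h1, h2, h3⟩ := hIE {a, b} (fun t => if t = a then p else q) (by
    intro a₁ h₁ a₂ h₂
    simp only [Finset.mem_insert, Finset.mem_singleton] at h₁ h₂
    rcases h₁ with rfl | rfl <;> rcases h₂ with rfl | rfl
    · simp
    · simp only [if_pos rfl, if_neg hne.symm]
      exact iff_of_true hab.le hpq.le
    · simp only [if_pos rfl, if_neg hne.symm]
      exact iff_of_false hba hqp
    · simp)
  refine ⟨g, h1, h2, ?_, ?_⟩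
  · have := h3 a (by simp); simpa using this
  · have := h3 b (by simp); rw [this]; simp [hne.symm]

lemma exists_partner (hIE : IEbarHomogeneous P) {x₀ y₀ : P} (h : Incomp x₀ y₀) (p : P) :
    ∃ s, Incomp s p := by
  obtain ⟨g, hm, hs, hp⟩ := ext_single hIE p x₀
  obtain ⟨s, hsy⟩ := hs y₀
  refine ⟨s, ⟨fun hle => h.2 ?_, fun hle => h.1 ?_⟩⟩
  · have := hm hle; rw [hsy, hp] at this; exact this
  · have := hm hle; rw [hsy, hp] at this; exact this

lemma splitter (hIE : IEbarHomogeneous P) {u w v : P} (huw : u < w)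
    (hu : Incomp v u) (hw : Incomp v w) :
    ∀ α β : P, α < β → ∃ s, Incomp s α ∧ Incomp s β := by
  intro α β hab
  obtain ⟨g, hm, hs, hga, hgb⟩ := ext_pair_chain hIE hab huw
  obtain ⟨s, hsv⟩ := hs v
  refine ⟨s, ⟨fun h => hu.1 ?_, fun h => hu.2 ?_⟩, ⟨fun h => hw.1 ?_, fun h => hw.2 ?_⟩⟩
  · have := hm h; rw [hsv, hga] at this; exact this
  · have := hm h; rw [hsv, hga] at this; exact this
  · have := hm h; rw [hsv, hgb] at this; exact this
  · have := hm h; rw [hsv, hgb] at this; exact this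

lemma up_of (hIE : IEbarHomogeneous P) {x z y : P} (hxz : Incomp x z)
    (hxy : x < y) (hzy : z < y) :
    ∀ p q : P, Incomp p q → ∃ r, p < r ∧ q < r := by
  intro p q hpq
  obtain ⟨g, hm, _, hgx, hgz⟩ := ext_pair_incomp hIE hxz hpq
  have h1 : p ≤ g y := hgx ▸ hm hxy.le
  have h2 : q ≤ g y := hgz ▸ hm hzy.le
  refine ⟨g y, lt_of_le_of_ne h1 fun he => hpq.2 (he ▸ h2), lt_of_le_of_ne h2 fun he => hpq.1 (he ▸ h1)⟩

lemma down_of (hIE : IEbarHomogeneous P) {x z y : P} (hxz : Incomp x z)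
    (hxy : y < x) (hzy : y < z) :
    ∀ p q : P, Incomp p q → ∃ r, r < p ∧ r < q := by
  intro p q hpq
  obtain ⟨g, hm, _, hgx, hgz⟩ := ext_pair_incomp hIE hxz hpq
  have h1 : g y ≤ p := hgx ▸ hm hxy.le
  have h2 : g y ≤ q := hgz ▸ hm hzy.le
  refine ⟨g y, lt_of_le_of_ne h1 fun he => hpq.1 (he ▸ h2), lt_of_le_of_ne h2 fun he => hpq.2 (he ▸ h1)⟩


lemma noGrow {σ : Type*}
    (hfin : ∀ S : Set P, IsAntichain (· ≤ ·) S → S.Finite)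
    (A : σ → Finset P) (Good : σ → Prop) (s0 : σ) (h0 : Good s0)
    (hanti : ∀ s, Good s → IsAntichain (· ≤ ·) (↑(A s) : Set P))
    (hstep : ∀ s, Good s → ∃ s', Good s' ∧ A s ⊂ A s') : False := by
  classical
  have step : ∀ t : {s : σ // Good s}, ∃ t' : {s : σ // Good s}, A t.1 ⊂ A t'.1 := by
    rintro ⟨s, hs⟩
    obtain ⟨s', h1, h2⟩ := hstep s hs
    exact ⟨⟨s', h1⟩, h2⟩
  choose F hF using step
  set t : ℕ → {s : σ // Good s} := fun n => F^[n] ⟨s0, h0⟩ with ht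
  have hsucc : ∀ n, t (n + 1) = F (t n) := fun n => Function.iterate_succ_apply' F n _
  have hmono : ∀ m n, m ≤ n → A (t m).1 ⊆ A (t n).1 := by
    intro m n h
    induction n, h using Nat.le_induction with
    | base => exact subset_rfl
    | succ n hmn ih => exact ih.trans (by rw [hsucc n]; exact (hF (t n)).subset)
  have hcard : ∀ n, n ≤ (A (t n).1).card := by
    intro n
    induction n with
    | zero => exact Nat.zero_le _
    | succ n ih =>
      have : (A (t n).1).card < (A (t (n+1)).1).card := by
        rw [hsucc n]; exact Finset.card_lt_card (hF (t n))
      omega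
  set U : Set P := ⋃ n, (↑(A (t n).1) : Set P) with hU
  have hUanti : IsAntichain (· ≤ ·) U := by
    intro a ha b hb hne
    rcases Set.mem_iUnion.mp ha with ⟨m, ham⟩
    rcases Set.mem_iUnion.mp hb with ⟨n, hbn⟩
    have ham' : a ∈ A (t (max m n)).1 := hmono m _ (le_max_left _ _) ham
    have hbn' : b ∈ A (t (max m n)).1 := hmono n _ (le_max_right _ _) hbn
    exact hanti _ (t (max m n)).2 (Finset.mem_coe.mpr ham') (Finset.mem_coe.mpr hbn') hne
  have hUfin := hfin U hUanti
  have hsubU : ∀ n, A (t n).1 ⊆ hUfin.toFinset := by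
    intro n x hx
    rw [Set.Finite.mem_toFinset]
    exact Set.mem_iUnion.mpr ⟨n, hx⟩
  have h1 := hcard (hUfin.toFinset.card + 1)
  have h2 := Finset.card_le_card (hsubU (hUfin.toFinset.card + 1))
  omega


lemma INF1 (hfin : ∀ S : Set P, IsAntichain (· ≤ ·) S → S.Finite)
    (S : ∀ α β : P, α < β → ∃ s, Incomp s α ∧ Incomp s β)
    (UP : ∀ p q : P, Incomp p q → ∃ r, p < r ∧ q < r)
    (noL : ∀ p q r : P, Incomp p q → r < p → r < q → False)
    {x z y : P} (hxz : Incomp x z) (hxy : x < y) (hzy : z < y) : False := by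
  classical
  refine noGrow (σ := Finset P × P) hfin (fun s => s.1)
    (fun s => s.1.Nonempty ∧ IsAntichain (· ≤ ·) (↑s.1 : Set P) ∧ ∀ a ∈ s.1, a < s.2)
    ({x, z}, y) ⟨⟨x, by simp⟩, ?_, ?_⟩ (fun s hs => hs.2.1) ?_
  · intro a ha b hb hne
    simp only [Finset.coe_insert, Set.mem_insert_iff, Finset.coe_singleton,
      Set.mem_singleton_iff] at ha hb
    rcases ha with rfl | rfl <;> rcases hb with rfl | rfl
    · exact absurd rfl hne
    · exact hxz.1
    · exact hxz.2
    · exact absurd rfl hne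
  · intro a ha
    simp only [Finset.mem_insert, Finset.mem_singleton] at ha
    rcases ha with rfl | rfl
    · exact hxy
    · exact hzy
  · rintro ⟨A, yy⟩ ⟨⟨a₁, ha₁⟩, hAc, hbd⟩
    have ha₁y : a₁ < yy := hbd a₁ ha₁
    obtain ⟨s', hs'a, hs'y⟩ := S a₁ yy ha₁y
    have hkey : ∀ e ∈ A, Incomp s' e := by
      intro e he
      constructor
      · intro hle
        exact hs'y.1 (hle.trans (hbd e he).le)
      · intro hle
        rcases eq_or_lt_of_le hle with rfl | hlt
        · exact hs'y.1 (hbd e he).le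
        · exact noL s' yy e hs'y hlt (hbd e he)
    have hnotin : s' ∉ A := fun hmem => ((hkey s' hmem).1 le_rfl)
    obtain ⟨y', hy1, hy2⟩ := UP s' yy hs'y
    refine ⟨(insert s' A, y'), ⟨⟨s', Finset.mem_insert_self _ _⟩, ?_, ?_⟩,
      Finset.ssubset_insert hnotin⟩
    · intro a ha b hb hne
      simp only [Finset.coe_insert, Set.mem_insert_iff, Finset.mem_coe] at ha hb
      rcases ha with rfl | ha <;> rcases hb with rfl | hb
      · exact absurd rfl hne
      · exact (hkey b hb).1
      · exact (hkey a ha).2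
      · exact hAc (Finset.mem_coe.mpr ha) (Finset.mem_coe.mpr hb) hne
    · intro a ha
      rcases Finset.mem_insert.mp ha with rfl | ha
      · exact hy1
      · exact (hbd a ha).trans hy2

lemma INF1' (hfin : ∀ S : Set P, IsAntichain (· ≤ ·) S → S.Finite)
    (S : ∀ α β : P, α < β → ∃ s, Incomp s α ∧ Incomp s β)
    (DOWN : ∀ p q : P, Incomp p q → ∃ r, r < p ∧ r < q)
    (noV : ∀ p q r : P, Incomp p q → p < r → q < r → False)
    {x z y : P} (hxz : Incomp x z) (hxy : y < x) (hzy : y < z) : False := by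
  classical
  refine noGrow (σ := Finset P × P) hfin (fun s => s.1)
    (fun s => s.1.Nonempty ∧ IsAntichain (· ≤ ·) (↑s.1 : Set P) ∧ ∀ a ∈ s.1, s.2 < a)
    ({x, z}, y) ⟨⟨x, by simp⟩, ?_, ?_⟩ (fun s hs => hs.2.1) ?_
  · intro a ha b hb hne
    simp only [Finset.coe_insert, Set.mem_insert_iff, Finset.coe_singleton,
      Set.mem_singleton_iff] at ha hb
    rcases ha with rfl | rfl <;> rcases hb with rfl | rfl
    · exact absurd rfl hne
    · exact hxz.1
    · exact hxz.2
    · exact absurd rfl hne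
  · intro a ha
    simp only [Finset.mem_insert, Finset.mem_singleton] at ha
    rcases ha with rfl | rfl
    · exact hxy
    · exact hzy
  · rintro ⟨A, bb⟩ ⟨⟨a₁, ha₁⟩, hAc, hbd⟩
    have hba₁ : bb < a₁ := hbd a₁ ha₁
    obtain ⟨s', hs'b, hs'a⟩ := S bb a₁ hba₁
    have hkey : ∀ e ∈ A, Incomp s' e := by
      intro e he
      constructor
      · intro hle
        rcases eq_or_lt_of_le hle with rfl | hlt
        · exact hs'b.2 (hbd _ he).le
        · exact noV s' bb e hs'b hlt (hbd e he)
      · intro hle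
        exact hs'b.2 ((hbd e he).le.trans hle)
    have hnotin : s' ∉ A := fun hmem => ((hkey s' hmem).1 le_rfl)
    obtain ⟨b', hb1, hb2⟩ := DOWN s' bb hs'b
    refine ⟨(insert s' A, b'), ⟨⟨s', Finset.mem_insert_self _ _⟩, ?_, ?_⟩,
      Finset.ssubset_insert hnotin⟩
    · intro a ha b hb hne
      simp only [Finset.coe_insert, Set.mem_insert_iff, Finset.mem_coe] at ha hb
      rcases ha with rfl | ha <;> rcases hb with rfl | hb
      · exact absurd rfl hne
      · exact (hkey b hb).1
      · exact (hkey a ha).2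
      · exact hAc (Finset.mem_coe.mpr ha) (Finset.mem_coe.mpr hb) hne
    · intro a ha
      rcases Finset.mem_insert.mp ha with rfl | ha
      · exact hb1
      · exact hb2.trans (hbd a ha)

lemma INF2 (hfin : ∀ S : Set P, IsAntichain (· ≤ ·) S → S.Finite)
    (S : ∀ α β : P, α < β → ∃ s, Incomp s α ∧ Incomp s β)
    (UP : ∀ p q : P, Incomp p q → ∃ r, p < r ∧ q < r)
    (DOWN : ∀ p q : P, Incomp p q → ∃ r, r < p ∧ r < q)
    {x z : P} (hxz : Incomp x z) : False := by
  classical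
  obtain ⟨y0, hy1, hy2⟩ := UP x z hxz
  obtain ⟨b0, hb1, hb2⟩ := DOWN x z hxz
  refine noGrow (σ := Finset P × P × P) hfin (fun s => s.1)
    (fun s => s.1.Nonempty ∧ IsAntichain (· ≤ ·) (↑s.1 : Set P) ∧
      ∀ a ∈ s.1, s.2.1 < a ∧ a < s.2.2)
    ({x, z}, b0, y0) ⟨⟨x, by simp⟩, ?_, ?_⟩ (fun s hs => hs.2.1) ?_
  · intro a ha b hb hne
    simp only [Finset.coe_insert, Set.mem_insert_iff, Finset.coe_singleton,
      Set.mem_singleton_iff] at ha hb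
    rcases ha with rfl | rfl <;> rcases hb with rfl | rfl
    · exact absurd rfl hne
    · exact hxz.1
    · exact hxz.2
    · exact absurd rfl hne
  · intro a ha
    simp only [Finset.mem_insert, Finset.mem_singleton] at ha
    rcases ha with rfl | rfl
    · exact ⟨hb1, hy1⟩
    · exact ⟨hb2, hy2⟩
  · rintro ⟨A, bb, yy⟩ ⟨⟨a₁, ha₁⟩, hAc, hbd⟩
    have hby : bb < yy := (hbd a₁ ha₁).1.trans (hbd a₁ ha₁).2
    obtain ⟨s', hs'b, hs'y⟩ := S bb yy hby
    have hkey : ∀ e ∈ A, Incomp s' e := by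
      intro e he
      constructor
      · intro hle
        exact hs'y.1 (hle.trans (hbd e he).2.le)
      · intro hle
        exact hs'b.2 ((hbd e he).1.le.trans hle)
    have hnotin : s' ∉ A := fun hmem => ((hkey s' hmem).1 le_rfl)
    obtain ⟨y', hy1', hy2'⟩ := UP s' yy hs'y
    obtain ⟨b', hb1', hb2'⟩ := DOWN s' bb hs'b
    refine ⟨(insert s' A, b', y'), ⟨⟨s', Finset.mem_insert_self _ _⟩, ?_, ?_⟩,
      Finset.ssubset_insert hnotin⟩
    · intro a ha b hb hne
      simp only [Finset.coe_insert, Set.mem_insert_iff, Finset.mem_coe] at ha hb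
      rcases ha with rfl | ha <;> rcases hb with rfl | hb
      · exact absurd rfl hne
      · exact (hkey b hb).1
      · exact (hkey a ha).2
      · exact hAc (Finset.mem_coe.mpr ha) (Finset.mem_coe.mpr hb) hne
    · intro a ha
      rcases Finset.mem_insert.mp ha with rfl | ha
      · exact ⟨hb1', hy1'⟩
      · exact ⟨hb2'.trans (hbd a ha).1, (hbd a ha).2.trans hy2'⟩


lemma CT_contra
    (hCT : ∀ x y z : P, (x ≤ y ∨ y ≤ x) → (y ≤ z ∨ z ≤ y) → (x ≤ z ∨ z ≤ x))
    (hfin : ∀ S : Set P, IsAntichain (· ≤ ·) S → S.Finite)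
    {x₀ y₀ p₀ q₀ : P} (hxy : Incomp x₀ y₀) (hpq : p₀ < q₀)
    (g : P → P) (hmono : Monotone g) (hsurj : Function.Surjective g)
    (hgx : g x₀ = p₀) (hgy : g y₀ = q₀) : False := by
  classical
  let s : Setoid P := ⟨fun a b => a ≤ b ∨ b ≤ a,
    ⟨fun a => Or.inl le_rfl, fun h => h.symm, fun hab hbc => hCT _ _ _ hab hbc⟩⟩
  have hanti : IsAntichain (· ≤ ·) (Set.range (Quotient.out (s := s))) := by
    rintro _ ⟨q1, rfl⟩ _ ⟨q2, rfl⟩ hne hle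
    apply hne
    have : q1 = q2 := by
      rw [← Quotient.out_eq q1, ← Quotient.out_eq q2]
      exact Quotient.sound (Or.inl hle)
    rw [this]
  have hfinR := hfin _ hanti
  haveI : Finite (Set.range (Quotient.out (s := s))) := hfinR.to_subtype
  haveI : Finite (Quotient s) := by
    refine Finite.of_injective
      (fun q : Quotient s => (⟨Quotient.out q, Set.mem_range_self q⟩ :
        Set.range (Quotient.out (s := s)))) ?_
    intro a b hab
    exact Quotient.out_injective (congrArg Subtype.val hab)
  let G : Quotient s → Quotient s :=
    Quotient.map g (fun a b hab => hab.imp (fun h => hmono h) (fun h => hmono h))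
  have hGsurj : Function.Surjective G := by
    intro q
    refine Quotient.inductionOn q (fun p => ?_)
    obtain ⟨r, hr⟩ := hsurj p
    exact ⟨Quotient.mk s r, by simp only [G, Quotient.map_mk, hr]⟩
  have hGinj : Function.Injective G := Finite.injective_iff_surjective.mpr hGsurj
  have h1 : G (Quotient.mk s x₀) = Quotient.mk s p₀ := by
    simp only [G, Quotient.map_mk, hgx]
  have h2 : G (Quotient.mk s y₀) = Quotient.mk s q₀ := by
    simp only [G, Quotient.map_mk, hgy]
  have h3 : (Quotient.mk s p₀) = Quotient.mk s q₀ := Quotient.sound (Or.inl hpq.le)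
  have h4 : (Quotient.mk s x₀) = Quotient.mk s y₀ :=
    hGinj (h1.trans (h3.trans h2.symm))
  rcases Quotient.exact h4 with h | h
  · exact hxy.1 h
  · exact hxy.2 h


lemma IT_contra (hIE : IEbarHomogeneous P)
    (hIT : ∀ x y z : P, Incomp x y → Incomp y z → x = z ∨ Incomp x z)
    (hfin : ∀ S : Set P, IsAntichain (· ≤ ·) S → S.Finite)
    {x₀ y₀ d : P} (hxy : Incomp x₀ y₀) (hd : ¬ (d = x₀ ∨ Incomp d x₀))
    (g : P → P) (hmono : Monotone g) (hsurj : Function.Surjective g)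
    (hgx : g x₀ = x₀) (hgy : g y₀ = d) : False := by
  classical
  set C : P → Set P := fun a => {t | t = a ∨ Incomp t a} with hC
  have mem_self : ∀ a, a ∈ C a := fun a => Or.inl rfl
  have pairwise : ∀ a : P, ∀ t₁ ∈ C a, ∀ t₂ ∈ C a, t₁ ≠ t₂ → Incomp t₁ t₂ := by
    intro a t₁ h₁ t₂ h₂ hne
    rcases h₁ with rfl | h₁ <;> rcases h₂ with rfl | h₂
    · exact absurd rfl hne
    · exact h₂.isymm
    · exact h₁
    · rcases hIT t₁ a t₂ h₁ h₂.isymm with rfl | h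
      · exact absurd rfl hne
      · exact h
  have anti : ∀ a, IsAntichain (· ≤ ·) (C a) := by
    intro a t₁ h₁ t₂ h₂ hne
    exact (pairwise a t₁ h₁ t₂ h₂ hne).1
  have C_sub : ∀ a b : P, Incomp a b → C a ⊆ C b := by
    intro a b hab t ht
    rcases ht with rfl | ht
    · exact Or.inr hab
    · rcases hIT t a b ht hab with rfl | h
      · exact Or.inl rfl
      · exact Or.inr h
  have C_eq : ∀ a b : P, Incomp a b → C a = C b := fun a b hab =>
    le_antisymm (C_sub a b hab) (C_sub b a hab.isymm)
  have pull : ∀ s t : P, Incomp (g s) (g t) → Incomp s t := fun s t h =>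
    ⟨fun hle => h.1 (hmono hle), fun hle => h.2 (hmono hle)⟩
  have claim1 : ∀ a pp qq : P, g pp ∈ C a → g qq ∈ C a → qq ∈ C pp := by
    intro a pp qq hp hq
    by_cases h : g pp = g qq
    · obtain ⟨e', he'⟩ := exists_partner hIE hxy (g pp)
      obtain ⟨r, hr⟩ := hsurj e'
      have h1 : Incomp r pp := pull r pp (by rw [hr]; exact he')
      have h2 : Incomp r qq := pull r qq (by rw [hr, ← h]; exact he')
      rcases hIT pp r qq h1.isymm h2 with rfl | hh
      · exact Or.inl rfl
      · exact Or.inr hh.isymm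
    · have := pairwise a (g pp) hp (g qq) hq h
      exact Or.inr (pull pp qq this).isymm
  have hdx : d ∉ C x₀ := hd
  have hsub : C x₀ ∪ C d ⊆ g '' (C x₀) := by
    rintro t (ht | ht)
    · obtain ⟨sv, hs⟩ := hsurj t
      have : sv ∈ C x₀ := claim1 x₀ x₀ sv (by rw [hgx]; exact mem_self x₀) (by rw [hs]; exact ht)
      exact ⟨sv, this, hs⟩
    · obtain ⟨sv, hs⟩ := hsurj t
      have h1 : sv ∈ C y₀ := claim1 d y₀ sv (by rw [hgy]; exact mem_self d) (by rw [hs]; exact ht)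
      have h2 : C y₀ = C x₀ := C_eq y₀ x₀ hxy.isymm
      exact ⟨sv, h2 ▸ h1, hs⟩
  have hdisj : Disjoint (C x₀) (C d) := by
    rw [Set.disjoint_left]
    intro t ht ht'
    have e1 : C t = C x₀ := by
      rcases ht with rfl | ht
      · rfl
      · exact C_eq t x₀ ht
    have e2 : C t = C d := by
      rcases ht' with rfl | ht'
      · rfl
      · exact C_eq t d ht'
    have : d ∈ C x₀ := by rw [← e1, e2]; exact mem_self d
    exact hdx this
  have hfx : (C x₀).Finite := hfin _ (anti x₀)
  have hfd : (C d).Finite := hfin _ (anti d)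
  have h1 : (C x₀ ∪ C d).ncard ≤ (g '' C x₀).ncard :=
    Set.ncard_le_ncard hsub (hfx.image g)
  have h2 : (g '' C x₀).ncard ≤ (C x₀).ncard := Set.ncard_image_le hfx
  have h3 : (C x₀ ∪ C d).ncard = (C x₀).ncard + (C d).ncard :=
    Set.ncard_union_eq hdisj hfx hfd
  have h4 : 0 < (C d).ncard := (Set.ncard_pos hfd).mpr ⟨d, mem_self d⟩
  omega


lemma case3 (hIE : IEbarHomogeneous P)
    (hfin : ∀ S : Set P, IsAntichain (· ≤ ·) S → S.Finite)
    (hnCT : ¬ ∀ x y z : P, (x ≤ y ∨ y ≤ x) → (y ≤ z ∨ z ≤ y) → (x ≤ z ∨ z ≤ x))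
    (hnIT : ¬ ∀ x y z : P, Incomp x y → Incomp y z → x = z ∨ Incomp x z) : False := by
  classical
  push_neg at hnCT hnIT
  obtain ⟨u, v, w, huv, hvw, hne, hni⟩ := hnIT
  have hcomp : u < w ∨ w < u := by
    rcases em (u ≤ w) with h | h
    · exact Or.inl (lt_of_le_of_ne h hne)
    · rcases em (w ≤ u) with h' | h'
      · exact Or.inr (lt_of_le_of_ne h' (Ne.symm hne))
      · exact absurd ⟨h, h'⟩ hni
  have hS : ∀ α β : P, α < β → ∃ s, Incomp s α ∧ Incomp s β := by
    rcases hcomp with h | h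
    · exact splitter hIE h ⟨huv.2, huv.1⟩ hvw
    · exact splitter hIE h hvw ⟨huv.2, huv.1⟩
  obtain ⟨x, y, z, hxy, hyz, hxz1, hxz2⟩ := hnCT
  have hVL : (∃ a b c : P, Incomp a b ∧ a < c ∧ b < c) ∨
      (∃ a b c : P, Incomp a b ∧ c < a ∧ c < b) := by
    rcases hxy with h | h <;> rcases hyz with h' | h'
    · exact absurd (h.trans h') hxz1
    · refine Or.inl ⟨x, z, y, ⟨hxz1, hxz2⟩, ?_, ?_⟩
      · exact lt_of_le_of_ne h (fun he => hxz2 (he ▸ h'))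
      · exact lt_of_le_of_ne h' (fun he => hxz1 (he ▸ h))
    · refine Or.inr ⟨x, z, y, ⟨hxz1, hxz2⟩, ?_, ?_⟩
      · exact lt_of_le_of_ne h (fun he => hxz1 (he ▸ h'))
      · exact lt_of_le_of_ne h' (fun he => hxz2 (he ▸ h))
    · exact absurd (h'.trans h) hxz2
  rcases hVL with ⟨a, b, c, hab, hac, hbc⟩ | ⟨a, b, c, hab, hca, hcb⟩
  · have UP := up_of hIE hab hac hbc
    by_cases hL : ∃ p q r : P, Incomp p q ∧ r < p ∧ r < q
    · obtain ⟨p, q, r, h1, h2, h3⟩ := hL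
      exact INF2 hfin hS UP (down_of hIE h1 h2 h3) hab
    · exact INF1 hfin hS UP
        (fun p q r h1 h2 h3 => hL ⟨p, q, r, h1, h2, h3⟩) hab hac hbc
  · have DOWN := down_of hIE hab hca hcb
    by_cases hV : ∃ p q r : P, Incomp p q ∧ p < r ∧ q < r
    · obtain ⟨p, q, r, h1, h2, h3⟩ := hV
      exact INF2 hfin hS (up_of hIE h1 h2 h3) DOWN hab
    · exact INF1' hfin hS DOWN
        (fun p q r h1 h2 h3 => hV ⟨p, q, r, h1, h2, h3⟩) hab hca hcb


end IEbarAux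

open IEbarAux in
/-- A countable IĒ-homogeneous poset which is neither a chain nor an antichain, all of
whose antichains are finite, is not MĒ-homogeneous: some injective `<`-preserving map
between finite subsets has no extension to a surjective ≤-preserving map. -/
theorem IEbar_finite_antichains_not_MEbar (P : Type*) [PartialOrder P] [Countable P]
    (hIE : IEbarHomogeneous P)
    (hnc : ∃ a b : P, Incomp a b) (hna : ∃ a b : P, a < b)
    (hfin : ∀ S : Set P, IsAntichain (· ≤ ·) S → S.Finite) :
    ∃ (A : Finset P) (f : P → P), Set.InjOn f ↑A ∧
      (∀ a₁ ∈ A, ∀ a₂ ∈ A, a₁ < a₂ → f a₁ < f a₂) ∧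
      ¬ ∃ g : P → P, Monotone g ∧ Function.Surjective g ∧ ∀ a ∈ A, g a = f a := by
  classical
  obtain ⟨x₀, y₀, hx0y0⟩ := hnc
  obtain ⟨p₀, q₀, hp0q0⟩ := hna
  have hxyne : x₀ ≠ y₀ := hx0y0.ine
  by_cases hCT : ∀ x y z : P, (x ≤ y ∨ y ≤ x) → (y ≤ z ∨ z ≤ y) → (x ≤ z ∨ z ≤ x)
  · -- comparability transitive
    refine ⟨{x₀, y₀}, fun t => if t = x₀ then p₀ else q₀, ?_, ?_, ?_⟩
    · intro a ha b hb hfe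
      simp only [Finset.coe_insert, Set.mem_insert_iff, Finset.coe_singleton,
        Set.mem_singleton_iff] at ha hb
      rcases ha with rfl | rfl <;> rcases hb with rfl | rfl <;>
        simp only [if_pos rfl, if_neg hxyne.symm] at hfe
      · rfl
      · exact absurd hfe hp0q0.ne
      · exact absurd hfe.symm hp0q0.ne
      · rfl
    · intro a₁ h₁ a₂ h₂ hlt
      simp only [Finset.mem_insert, Finset.mem_singleton] at h₁ h₂
      rcases h₁ with rfl | rfl <;> rcases h₂ with rfl | rfl
      · exact absurd hlt (lt_irrefl _)
      · exact absurd hlt.le hx0y0.1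
      · exact absurd hlt.le hx0y0.2
      · exact absurd hlt (lt_irrefl _)
    · rintro ⟨g, hmono, hsurj, hagree⟩
      have hgx : g x₀ = p₀ := by
        have := hagree x₀ (by simp); simpa using this
      have hgy : g y₀ = q₀ := by
        have := hagree y₀ (by simp); rw [this]; simp [hxyne.symm]
      exact IEbarAux.CT_contra hCT hfin hx0y0 hp0q0 g hmono hsurj hgx hgy
  · by_cases hIT : ∀ x y z : P, Incomp x y → Incomp y z → x = z ∨ Incomp x z
    · -- incomparability transitive
      have hd : ∃ d : P, ¬ (d = x₀ ∨ Incomp d x₀) := by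
        by_cases hp : p₀ = x₀ ∨ Incomp p₀ x₀
        · refine ⟨q₀, fun hq => ?_⟩
          rcases hp with rfl | hp <;> rcases hq with rfl | hq
          · exact hp0q0.ne rfl
          · exact hq.2 hp0q0.le
          · exact hp.1 hp0q0.le
          · rcases hIT p₀ x₀ q₀ hp hq.isymm with he | hh
            · exact hp0q0.ne he
            · exact hh.1 hp0q0.le
        · exact ⟨p₀, hp⟩
      obtain ⟨d, hd⟩ := hd
      have hdx : d ≠ x₀ := fun he => hd (Or.inl he)
      refine ⟨{x₀, y₀}, fun t => if t = y₀ then d else x₀, ?_, ?_, ?_⟩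
      · intro a ha b hb hfe
        simp only [Finset.coe_insert, Set.mem_insert_iff, Finset.coe_singleton,
          Set.mem_singleton_iff] at ha hb
        rcases ha with rfl | rfl <;> rcases hb with rfl | rfl <;>
          simp only [if_pos rfl, if_neg hxyne] at hfe
        · rfl
        · exact absurd hfe.symm hdx
        · exact absurd hfe hdx
        · rfl
      · intro a₁ h₁ a₂ h₂ hlt
        simp only [Finset.mem_insert, Finset.mem_singleton] at h₁ h₂
        rcases h₁ with rfl | rfl <;> rcases h₂ with rfl | rfl
        · exact absurd hlt (lt_irrefl _)
        · exact absurd hlt.le hx0y0.1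
        · exact absurd hlt.le hx0y0.2
        · exact absurd hlt (lt_irrefl _)
      · rintro ⟨g, hmono, hsurj, hagree⟩
        have hgx : g x₀ = x₀ := by
          have := hagree x₀ (by simp); rw [this]; simp [hxyne]
        have hgy : g y₀ = d := by
          have := hagree y₀ (by simp); rw [this]; simp
        exact IEbarAux.IT_contra hIE hIT hfin hx0y0 hd g hmono hsurj hgx hgy
    · -- neither transitive: hypotheses contradictory
      exact absurd (IEbarAux.case3 hIE hfin hCT hIT) (fun h => h)
end

section
/- Let P be a countable partial order which is IĒ-homogeneous and which embeds V (∃ a, b, c with c < a, c < b, a ∥ b), Λ (∃ a, b, c with a < c, b < c, a ∥ b) and Z (∃ a, b, c with a < b, c ∥ a, c ∥ b). Then: (i) for all x, y ∈ P with x < y there is z ∈ P with z ∥ x and z ∥ y; (ii) for every finite subset A of P there is z ∈ P with z ∥ a for every a ∈ A. -/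
private lemma pairIso {P : Type*} [PartialOrder P] [DecidableEq P] {x y a b : P} (hne : x ≠ y)
    (h₁ : x ≤ y ↔ a ≤ b) (h₂ : y ≤ x ↔ b ≤ a) :
    IsFinPartIso ({x, y} : Finset P)
      (fun w => if w = x then a else if w = y then b else w) := by
  intro p hp q hq
  simp only [Finset.mem_insert, Finset.mem_singleton] at hp hq
  rcases hp with rfl | rfl <;> rcases hq with rfl | rfl
  · simp
  · simpa only [if_pos rfl, if_neg hne.symm, ↓reduceIte] using h₁
  · simpa only [if_pos rfl, if_neg hne.symm, ↓reduceIte] using h₂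
  · simp [hne.symm]

/-- In a countable IĒ-homogeneous poset embedding `V`, `Λ` and `Z`:
(i) any pair `x < y` has a point incomparable to both;
(ii) every finite subset has a point incomparable to all its members. -/
theorem IEbar_VLZ_incomp_points (P : Type*) [PartialOrder P] [Countable P]
    (hIE : IEbarHomogeneous P)
    (hV : ∃ a b c : P, c < a ∧ c < b ∧ Incomp a b)
    (hL : ∃ a b c : P, a < c ∧ b < c ∧ Incomp a b)
    (hZ : ∃ a b c : P, a < b ∧ Incomp c a ∧ Incomp c b) :
    (∀ x y : P, x < y → ∃ z : P, Incomp z x ∧ Incomp z y) ∧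
      (∀ A : Finset P, ∃ z : P, ∀ a ∈ A, Incomp z a) := by
  classical
  obtain ⟨va, vb, vc, hvca, hvcb, hvab⟩ := hV
  obtain ⟨la, lb, lc, hlac, hlbc, hlab⟩ := hL
  obtain ⟨za, zb, zc, hzab, hzca, hzcb⟩ := hZ
  -- Part (i): pull back the `Z`-witness along a surjection extending `{x,y} → {za,zb}`.
  have part1 : ∀ x y : P, x < y → ∃ z : P, Incomp z x ∧ Incomp z y := by
    intro x y hxy
    have hne : x ≠ y := ne_of_lt hxy
    have hiso := pairIso (a := za) (b := zb) hne
      (iff_of_true hxy.le hzab.le)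
      (iff_of_false hxy.not_ge hzab.not_ge)
    obtain ⟨g, hg_mono, hg_surj, hg_eq⟩ := hIE {x, y} _ hiso
    have hgx : g x = za := by
      rw [hg_eq x (by simp), if_pos rfl]
    have hgy : g y = zb := by
      rw [hg_eq y (by simp), if_neg hne.symm, if_pos rfl]
    obtain ⟨t, ht⟩ := hg_surj zc
    refine ⟨t, ⟨?_, ?_⟩, ⟨?_, ?_⟩⟩
    · exact fun h => hzca.1 (by rw [← ht, ← hgx]; exact hg_mono h)
    · exact fun h => hzca.2 (by rw [← ht, ← hgx]; exact hg_mono h)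
    · exact fun h => hzcb.1 (by rw [← ht, ← hgy]; exact hg_mono h)
    · exact fun h => hzcb.2 (by rw [← ht, ← hgy]; exact hg_mono h)
  -- A point incomparable to a single given point (pull back the `Z`-witness).
  have hsing : ∀ p : P, ∃ z : P, Incomp z p := by
    intro p
    have hiso : IsFinPartIso ({p} : Finset P) (fun w => if w = p then za else w) := by
      intro a₁ h₁ a₂ h₂
      rw [Finset.mem_singleton] at h₁ h₂
      subst h₁; subst h₂; simp
    obtain ⟨g, hg_mono, hg_surj, hg_eq⟩ := hIE {p} _ hiso
    have hgp : g p = za := by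
      rw [hg_eq p (by simp), if_pos rfl]
    obtain ⟨t, ht⟩ := hg_surj zc
    exact ⟨t, fun h => hzca.1 (by rw [← ht, ← hgp]; exact hg_mono h),
      fun h => hzca.2 (by rw [← ht, ← hgp]; exact hg_mono h)⟩
  -- Every pair has an upper bound: push the top of `Λ` forward.
  have hub2 : ∀ x y : P, ∃ u : P, x ≤ u ∧ y ≤ u := by
    intro x y
    by_cases hxy : x ≤ y
    · exact ⟨y, hxy, le_rfl⟩
    by_cases hyx : y ≤ x
    · exact ⟨x, le_rfl, hyx⟩
    have hne : la ≠ lb := fun h => hlab.1 (h ▸ le_rfl)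
    have hiso := pairIso (x := la) (y := lb) (a := x) (b := y) hne
      (iff_of_false hlab.1 hxy) (iff_of_false hlab.2 hyx)
    obtain ⟨g, hg_mono, hg_surj, hg_eq⟩ := hIE {la, lb} _ hiso
    have hga : g la = x := by
      rw [hg_eq la (by simp), if_pos rfl]
    have hgb : g lb = y := by
      rw [hg_eq lb (by simp), if_neg hne.symm, if_pos rfl]
    exact ⟨g lc, by rw [← hga]; exact hg_mono hlac.le,
      by rw [← hgb]; exact hg_mono hlbc.le⟩
  -- Every pair has a lower bound: push the bottom of `V` forward.
  have hlb2 : ∀ x y : P, ∃ u : P, u ≤ x ∧ u ≤ y := by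
    intro x y
    by_cases hxy : x ≤ y
    · exact ⟨x, le_rfl, hxy⟩
    by_cases hyx : y ≤ x
    · exact ⟨y, hyx, le_rfl⟩
    have hne : va ≠ vb := fun h => hvab.1 (h ▸ le_rfl)
    have hiso := pairIso (x := va) (y := vb) (a := x) (b := y) hne
      (iff_of_false hvab.1 hxy) (iff_of_false hvab.2 hyx)
    obtain ⟨g, hg_mono, hg_surj, hg_eq⟩ := hIE {va, vb} _ hiso
    have hga : g va = x := by
      rw [hg_eq va (by simp), if_pos rfl]
    have hgb : g vb = y := by
      rw [hg_eq vb (by simp), if_neg hne.symm, if_pos rfl]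
    exact ⟨g vc, by rw [← hga]; exact hg_mono hvca.le,
      by rw [← hgb]; exact hg_mono hvcb.le⟩
  -- Every finite set has an upper bound.
  have hubA : ∀ A : Finset P, ∃ m : P, ∀ a ∈ A, a ≤ m := by
    intro A
    induction A using Finset.induction_on with
    | empty => exact ⟨vc, fun a ha => absurd ha (Finset.notMem_empty a)⟩
    | @insert a s ha ih =>
      obtain ⟨m, hm⟩ := ih
      obtain ⟨u, hu1, hu2⟩ := hub2 a m
      refine ⟨u, fun b hb => ?_⟩
      rcases Finset.mem_insert.mp hb with rfl | hb'
      · exact hu1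
      · exact le_trans (hm b hb') hu2
  -- Every finite set has a lower bound.
  have hlbA : ∀ A : Finset P, ∃ l : P, ∀ a ∈ A, l ≤ a := by
    intro A
    induction A using Finset.induction_on with
    | empty => exact ⟨vc, fun a ha => absurd ha (Finset.notMem_empty a)⟩
    | @insert a s ha ih =>
      obtain ⟨l, hl⟩ := ih
      obtain ⟨u, hu1, hu2⟩ := hlb2 a l
      refine ⟨u, fun b hb => ?_⟩
      rcases Finset.mem_insert.mp hb with rfl | hb'
      · exact hu1
      · exact le_trans hu2 (hl b hb')
  refine ⟨part1, ?_⟩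
  intro A
  obtain ⟨m, hm⟩ := hubA A
  obtain ⟨l, hl⟩ := hlbA A
  rcases A.eq_empty_or_nonempty with rfl | ⟨a₀, ha₀⟩
  · exact ⟨vc, by simp⟩
  rcases eq_or_lt_of_le (le_trans (hl a₀ ha₀) (hm a₀ ha₀)) with heq | hlt
  · -- degenerate case: `l = m`, so every element of `A` equals `l`.
    obtain ⟨z, hz⟩ := hsing l
    refine ⟨z, fun a ha => ?_⟩
    have haeq : a = l := le_antisymm (by rw [heq]; exact hm a ha) (hl a ha)
    rwa [haeq]
  · -- main case: sandwich `A` between `l < m` and use part (i).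
    obtain ⟨z, hz1, hz2⟩ := part1 l m hlt
    refine ⟨z, fun a ha => ⟨?_, ?_⟩⟩
    · exact fun h => hz2.1 (le_trans h (hm a ha))
    · exact fun h => hz1.2 (le_trans (hl a ha) h)
end

section
/- Let P be a countable partial order which is IH̄-homogeneous (every finite partial isomorphism of P extends to a ≤-preserving map P → P) and which satisfies the incomparable point property: for every finite subset A of P there is z ∈ P with z ∥ a for all a ∈ A. Then P is H̄Ē-homogeneous: every ≤-preserving map between finite subsets of P extends to a surjective ≤-preserving map P → P. -/
/-- `P` is IH̄-homogeneous: every finite partial isomorphism extends to a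
≤-preserving map `P → P`. -/
def IHbarHomogeneous (P : Type*) [PartialOrder P] : Prop :=
  ∀ (A : Finset P) (f : P → P), IsFinPartIso A f →
    ∃ g : P → P, Monotone g ∧ ∀ a ∈ A, g a = f a

/-- Representatives of maximal values: a subset `S ⊆ D` such that every `h`-value on `D`
is below the `h`-value of some element of `S`, and on `S` the map `h` reflects order to equality. -/
lemma rep_max {P : Type*} [PartialOrder P] (h : P → P) (D : Finset P) :
    ∃ S : Finset P, S ⊆ D ∧ (∀ b ∈ D, ∃ d ∈ S, h b ≤ h d) ∧
      (∀ d₁ ∈ S, ∀ d₂ ∈ S, h d₁ ≤ h d₂ → d₁ = d₂) := by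
  classical
  set C := D.image h with hC
  set M : Finset P := C.filter fun c => ∀ c' ∈ C, ¬ c < c' with hM
  set rep : P → P := fun c => if hc : ∃ b, b ∈ D ∧ h b = c then hc.choose else c with hrepdef
  have hrep : ∀ c ∈ C, rep c ∈ D ∧ h (rep c) = c := by
    intro c hc
    rw [hC, Finset.mem_image] at hc
    have hc' : ∃ b, b ∈ D ∧ h b = c := by
      obtain ⟨a, ha, hac⟩ := hc; exact ⟨a, ha, hac⟩
    simp only [hrepdef, dif_pos hc']
    exact hc'.choose_spec
  refine ⟨M.image rep, ?_, ?_, ?_⟩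
  · intro d hd
    rw [Finset.mem_image] at hd
    obtain ⟨c, hcM, rfl⟩ := hd
    exact (hrep c (Finset.mem_filter.mp hcM).1).1
  · intro b hb
    have hbC : h b ∈ C := by rw [hC]; exact Finset.mem_image_of_mem h hb
    have hne : (C.filter fun c => h b ≤ c).Nonempty :=
      ⟨h b, Finset.mem_filter.mpr ⟨hbC, le_rfl⟩⟩
    obtain ⟨m, hm, hmax⟩ : ∃ m ∈ C.filter (fun c => h b ≤ c),
        ∀ x ∈ C.filter (fun c => h b ≤ c), ¬ m < x := by
      obtain ⟨m, hm⟩ := Finset.exists_maximal hne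
      exact ⟨m, hm.1, fun x hx hlt => lt_irrefl m (hlt.trans_le (hm.2 hx hlt.le))⟩
    have hmC : m ∈ C := (Finset.mem_filter.mp hm).1
    have hbm : h b ≤ m := (Finset.mem_filter.mp hm).2
    have hmM : m ∈ M := by
      rw [hM, Finset.mem_filter]
      exact ⟨hmC, fun c' hc' hlt =>
        hmax c' (Finset.mem_filter.mpr ⟨hc', hbm.trans hlt.le⟩) hlt⟩
    refine ⟨rep m, Finset.mem_image_of_mem rep hmM, ?_⟩
    rw [(hrep m hmC).2]; exact hbm
  · intro d₁ hd₁ d₂ hd₂ hle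
    rw [Finset.mem_image] at hd₁ hd₂
    obtain ⟨c₁, hc₁, rfl⟩ := hd₁
    obtain ⟨c₂, hc₂, rfl⟩ := hd₂
    have h₁ := hrep c₁ (Finset.mem_filter.mp hc₁).1
    have h₂ := hrep c₂ (Finset.mem_filter.mp hc₂).1
    rw [h₁.2, h₂.2] at hle
    have hmax₁ := (Finset.mem_filter.mp hc₁).2
    have hc₂C : c₂ ∈ C := (Finset.mem_filter.mp hc₂).1
    have : c₁ = c₂ := by
      by_contra hne
      exact hmax₁ c₂ hc₂C (hle.lt_of_ne hne)
    rw [this]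

/-- Representatives of minimal values, dual to `rep_max`. -/
lemma rep_min {P : Type*} [PartialOrder P] (h : P → P) (D : Finset P) :
    ∃ S : Finset P, S ⊆ D ∧ (∀ b ∈ D, ∃ d ∈ S, h d ≤ h b) ∧
      (∀ d₁ ∈ S, ∀ d₂ ∈ S, h d₁ ≤ h d₂ → d₁ = d₂) := by
  classical
  set C := D.image h with hC
  set M : Finset P := C.filter fun c => ∀ c' ∈ C, ¬ c' < c with hM
  set rep : P → P := fun c => if hc : ∃ b, b ∈ D ∧ h b = c then hc.choose else c with hrepdef
  have hrep : ∀ c ∈ C, rep c ∈ D ∧ h (rep c) = c := by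
    intro c hc
    rw [hC, Finset.mem_image] at hc
    have hc' : ∃ b, b ∈ D ∧ h b = c := by
      obtain ⟨a, ha, hac⟩ := hc; exact ⟨a, ha, hac⟩
    simp only [hrepdef, dif_pos hc']
    exact hc'.choose_spec
  refine ⟨M.image rep, ?_, ?_, ?_⟩
  · intro d hd
    rw [Finset.mem_image] at hd
    obtain ⟨c, hcM, rfl⟩ := hd
    exact (hrep c (Finset.mem_filter.mp hcM).1).1
  · intro b hb
    have hbC : h b ∈ C := by rw [hC]; exact Finset.mem_image_of_mem h hb
    have hne : (C.filter fun c => c ≤ h b).Nonempty :=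
      ⟨h b, Finset.mem_filter.mpr ⟨hbC, le_rfl⟩⟩
    obtain ⟨m, hm, hmin⟩ : ∃ m ∈ C.filter (fun c => c ≤ h b),
        ∀ x ∈ C.filter (fun c => c ≤ h b), ¬ x < m := by
      obtain ⟨m, hm⟩ := Finset.exists_minimal hne
      exact ⟨m, hm.1, fun x hx hlt => lt_irrefl x (hlt.trans_le (hm.2 hx hlt.le))⟩
    have hmC : m ∈ C := (Finset.mem_filter.mp hm).1
    have hbm : m ≤ h b := (Finset.mem_filter.mp hm).2
    have hmM : m ∈ M := by
      rw [hM, Finset.mem_filter]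
      exact ⟨hmC, fun c' hc' hlt =>
        hmin c' (Finset.mem_filter.mpr ⟨hc', hlt.le.trans hbm⟩) hlt⟩
    refine ⟨rep m, Finset.mem_image_of_mem rep hmM, ?_⟩
    rw [(hrep m hmC).2]; exact hbm
  · intro d₁ hd₁ d₂ hd₂ hle
    rw [Finset.mem_image] at hd₁ hd₂
    obtain ⟨c₁, hc₁, rfl⟩ := hd₁
    obtain ⟨c₂, hc₂, rfl⟩ := hd₂
    have h₁ := hrep c₁ (Finset.mem_filter.mp hc₁).1
    have h₂ := hrep c₂ (Finset.mem_filter.mp hc₂).1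
    rw [h₁.2, h₂.2] at hle
    have hmin₂ := (Finset.mem_filter.mp hc₂).2
    have hc₁C : c₁ ∈ C := (Finset.mem_filter.mp hc₁).1
    have : c₁ = c₂ := by
      by_contra hne
      exact hmin₂ c₁ hc₁C (hle.lt_of_ne hne)
    rw [this]

/-- One-point extension lemma: in an IH̄-homogeneous poset, any finite ≤-preserving
map can be given a compatible value at any further point. -/
lemma one_point_ext {P : Type*} [PartialOrder P] (hIH : IHbarHomogeneous P)
    (B : Finset P) (h : P → P)
    (hpres : ∀ b₁ ∈ B, ∀ b₂ ∈ B, b₁ ≤ b₂ → h b₁ ≤ h b₂) (p : P) :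
    ∃ v, (∀ b ∈ B, b ≤ p → h b ≤ v) ∧ (∀ b ∈ B, p ≤ b → v ≤ h b) := by
  classical
  set D := B.filter (· ≤ p) with hD
  set U := B.filter (p ≤ ·) with hU
  have hDmem : ∀ d ∈ D, d ∈ B ∧ d ≤ p := fun d hd => Finset.mem_filter.mp hd
  have hUmem : ∀ u ∈ U, u ∈ B ∧ p ≤ u := fun u hu => Finset.mem_filter.mp hu
  by_cases hcross : ∃ d ∈ D, ∃ u ∈ U, h d = h u
  · obtain ⟨d, hd, u, hu, hdu⟩ := hcross
    obtain ⟨hdB, hdp⟩ := hDmem d hd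
    obtain ⟨huB, hpu⟩ := hUmem u hu
    refine ⟨h d, ?_, ?_⟩
    · intro b hb hbp
      rw [hdu]
      exact hpres b hb u huB (hbp.trans hpu)
    · intro b hb hpb
      exact hpres d hdB b hb (hdp.trans hpb)
  · push_neg at hcross
    obtain ⟨Dm, hDmsub, hDmcov, hDminj⟩ := rep_max h D
    obtain ⟨Um, hUmsub, hUmcov, hUminj⟩ := rep_min h U
    have hDmB : ∀ d ∈ Dm, d ∈ B ∧ d ≤ p := fun d hd => hDmem d (hDmsub hd)
    have hUmB : ∀ u ∈ Um, u ∈ B ∧ p ≤ u := fun u hu => hUmem u (hUmsub hu)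
    have hSB : ∀ a ∈ Dm ∪ Um, a ∈ B := by
      intro a ha
      rcases Finset.mem_union.mp ha with ha | ha
      · exact (hDmB a ha).1
      · exact (hUmB a ha).1
    have hiso : IsFinPartIso (Dm ∪ Um) h := by
      intro a₁ ha₁ a₂ ha₂
      constructor
      · intro hle
        exact hpres a₁ (hSB a₁ ha₁) a₂ (hSB a₂ ha₂) hle
      · intro hle
        rcases Finset.mem_union.mp ha₁ with h₁ | h₁ <;>
          rcases Finset.mem_union.mp ha₂ with h₂ | h₂
        · rw [hDminj a₁ h₁ a₂ h₂ hle]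
        · exact (hDmB a₁ h₁).2.trans (hUmB a₂ h₂).2
        · exfalso
          have h21 : a₂ ≤ a₁ := (hDmB a₂ h₂).2.trans (hUmB a₁ h₁).2
          have : h a₂ ≤ h a₁ := hpres a₂ (hSB a₂ ha₂) a₁ (hSB a₁ ha₁) h21
          exact hcross a₂ (hDmsub h₂) a₁ (hUmsub h₁) (le_antisymm this hle)
        · rw [hUminj a₁ h₁ a₂ h₂ hle]
    obtain ⟨g, hgmono, hgext⟩ := hIH _ h hiso
    refine ⟨g p, ?_, ?_⟩
    · intro b hb hbp
      obtain ⟨d, hdDm, hbd⟩ := hDmcov b (Finset.mem_filter.mpr ⟨hb, hbp⟩)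
      calc h b ≤ h d := hbd
        _ = g d := (hgext d (Finset.mem_union_left _ hdDm)).symm
        _ ≤ g p := hgmono (hDmB d hdDm).2
    · intro b hb hpb
      obtain ⟨u, huUm, hub⟩ := hUmcov b (Finset.mem_filter.mpr ⟨hb, hpb⟩)
      calc g p ≤ g u := hgmono (hUmB u huUm).2
        _ = h u := hgext u (Finset.mem_union_right _ huUm)
        _ ≤ h b := hub

/-- A countable IH̄-homogeneous poset with the incomparable point property
(every finite subset has a point incomparable to all its members) is H̄Ē-homogeneous. -/
theorem IHbar_IPP_implies_HbarEbar (P : Type*) [PartialOrder P] [Countable P]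
    (hIH : IHbarHomogeneous P)
    (hIPP : ∀ A : Finset P, ∃ z : P, ∀ a ∈ A, Incomp z a) :
    HbarEbarHomogeneous P := by
  classical
  intro A f hf
  have hne : Nonempty P := ⟨(hIPP ∅).choose⟩
  obtain ⟨e, he⟩ := exists_surjective_nat P
  -- invariant on pairs (finite domain, map)
  set Inv : Finset P × (P → P) → Prop :=
    fun x => ∀ b₁ ∈ x.1, ∀ b₂ ∈ x.1, b₁ ≤ b₂ → x.2 b₁ ≤ x.2 b₂ with hInv
  -- the step: extend domain by q and range by q
  have step : ∀ (x : {x : Finset P × (P → P) // Inv x}) (q : P),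
      ∃ y : {x : Finset P × (P → P) // Inv x},
        x.1.1 ⊆ y.1.1 ∧ (∀ b ∈ x.1.1, y.1.2 b = x.1.2 b) ∧ q ∈ y.1.1 ∧
          ∃ b ∈ y.1.1, y.1.2 b = q := by
    rintro ⟨⟨B, h⟩, hinv⟩ q
    have hv : ∃ v, (∀ b ∈ B, b ≤ q → h b ≤ v) ∧ (∀ b ∈ B, q ≤ b → v ≤ h b) ∧
        (q ∈ B → v = h q) := by
      by_cases hqB : q ∈ B
      · exact ⟨h q, fun b hb hbq => hinv b hb q hqB hbq,
          fun b hb hqb => hinv q hqB b hb hqb, fun _ => rfl⟩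
      · obtain ⟨v, h1, h2⟩ := one_point_ext hIH B h hinv q
        exact ⟨v, h1, h2, fun hq => absurd hq hqB⟩
    obtain ⟨v, hv1, hv2, hv3⟩ := hv
    set h₁ := Function.update h q v with hh₁
    set B₁ := insert q B with hB₁
    have hB₁ext : ∀ b ∈ B, h₁ b = h b := by
      intro b hb
      by_cases hbq : b = q
      · subst hbq; rw [hh₁, Function.update_self, hv3 hb]
      · rw [hh₁, Function.update_of_ne hbq]
    have hinv₁ : ∀ b₁ ∈ B₁, ∀ b₂ ∈ B₁, b₁ ≤ b₂ → h₁ b₁ ≤ h₁ b₂ := by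
      intro b₁ hb₁ b₂ hb₂ hle
      by_cases e₁ : b₁ = q <;> by_cases e₂ : b₂ = q
      · subst e₁; subst e₂; exact le_rfl
      · subst e₁
        have hb₂B : b₂ ∈ B := (Finset.mem_insert.mp hb₂).resolve_left e₂
        rw [hh₁, Function.update_self, Function.update_of_ne e₂]
        exact hv2 b₂ hb₂B hle
      · subst e₂
        have hb₁B : b₁ ∈ B := (Finset.mem_insert.mp hb₁).resolve_left e₁
        rw [hh₁, Function.update_self, Function.update_of_ne e₁]
        exact hv1 b₁ hb₁B hle
      · have hb₁B : b₁ ∈ B := (Finset.mem_insert.mp hb₁).resolve_left e₁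
        have hb₂B : b₂ ∈ B := (Finset.mem_insert.mp hb₂).resolve_left e₂
        rw [hh₁, Function.update_of_ne e₁, Function.update_of_ne e₂]
        exact hinv b₁ hb₁B b₂ hb₂B hle
    -- now add a fresh incomparable point mapping to q
    obtain ⟨z, hz⟩ := hIPP B₁
    have hzB₁ : z ∉ B₁ := fun hmem => (hz z hmem).1 le_rfl
    set h₂ := Function.update h₁ z q with hh₂
    set B₂ := insert z B₁ with hB₂
    have hB₂ext : ∀ b ∈ B₁, h₂ b = h₁ b := by
      intro b hb
      have : b ≠ z := fun hbz => hzB₁ (hbz ▸ hb)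
      rw [hh₂, Function.update_of_ne this]
    have hinv₂ : Inv (B₂, h₂) := by
      intro b₁ hb₁ b₂ hb₂ hle
      simp only at hb₁ hb₂ ⊢
      by_cases e₁ : b₁ = z <;> by_cases e₂ : b₂ = z
      · subst e₁; subst e₂; exact le_rfl
      · subst e₁
        have hb₂B : b₂ ∈ B₁ := by
          rw [hB₂] at hb₂
          exact (Finset.mem_insert.mp hb₂).resolve_left e₂
        exact absurd hle (hz b₂ hb₂B).1
      · subst e₂
        have hb₁B : b₁ ∈ B₁ := by
          rw [hB₂] at hb₁
          exact (Finset.mem_insert.mp hb₁).resolve_left e₁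
        exact absurd hle (hz b₁ hb₁B).2
      · have hb₁B : b₁ ∈ B₁ := by
          rw [hB₂] at hb₁
          exact (Finset.mem_insert.mp hb₁).resolve_left e₁
        have hb₂B : b₂ ∈ B₁ := by
          rw [hB₂] at hb₂
          exact (Finset.mem_insert.mp hb₂).resolve_left e₂
        rw [hB₂ext b₁ hb₁B, hB₂ext b₂ hb₂B]
        exact hinv₁ b₁ hb₁B b₂ hb₂B hle
    refine ⟨⟨(B₂, h₂), hinv₂⟩, ?_, ?_, ?_, ?_⟩
    · exact (Finset.subset_insert q B).trans (Finset.subset_insert z B₁)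
    · intro b hb
      have hb₁ : b ∈ B₁ := Finset.mem_insert_of_mem hb
      show h₂ b = h b
      rw [hB₂ext b hb₁, hB₁ext b hb]
    · exact Finset.mem_insert_of_mem (Finset.mem_insert_self q B)
    · refine ⟨z, Finset.mem_insert_self z B₁, ?_⟩
      show h₂ z = q
      rw [hh₂, Function.update_self]
  choose stp hsub hext hmem hrange using step
  -- initial data
  have hinv0 : Inv (A, f) := hf
  let F : ℕ → {x : Finset P × (P → P) // Inv x} :=
    fun n => Nat.rec ⟨(A, f), hinv0⟩ (fun n x => stp x (e n)) n
  have hF0 : F 0 = ⟨(A, f), hinv0⟩ := rfl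
  have hFs : ∀ n, F (n + 1) = stp (F n) (e n) := fun n => rfl
  set Bn : ℕ → Finset P := fun n => (F n).1.1 with hBn
  set hn : ℕ → P → P := fun n => (F n).1.2 with hhn
  have hmono : ∀ m n, m ≤ n → Bn m ⊆ Bn n := by
    intro m n hle
    induction hle with
    | refl => exact subset_rfl
    | @step k h ih => exact ih.trans (hsub (F k) (e k))
  have hstable : ∀ m n, m ≤ n → ∀ b ∈ Bn m, hn n b = hn m b := by
    intro m n hle
    induction hle with
    | refl => intro b _; rfl
    | @step k h ih =>
      intro b hb
      have hbk : b ∈ Bn k := hmono m k h hb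
      have hk : hn (k + 1) b = hn k b := hext (F k) (e k) b hbk
      rw [hk]; exact ih b hb
  have hcover : ∀ x : P, ∃ n, x ∈ Bn n := by
    intro x
    obtain ⟨m, rfl⟩ := he x
    exact ⟨m + 1, hmem (F m) (e m)⟩
  set N : P → ℕ := fun x => (hcover x).choose with hN
  set g : P → P := fun x => hn (N x) x with hg
  have hgstable : ∀ (x : P) (n : ℕ), x ∈ Bn n → g x = hn n x := by
    intro x n hx
    have hNx : x ∈ Bn (N x) := (hcover x).choose_spec
    rcases le_total (N x) n with hle | hle
    · rw [hg]
      exact (hstable (N x) n hle x hNx).symm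
    · rw [hg]
      exact hstable n (N x) hle x hx
  refine ⟨g, ?_, ?_, ?_⟩
  · intro x y hxy
    obtain ⟨nx, hnx⟩ := hcover x
    obtain ⟨ny, hny⟩ := hcover y
    have hx : x ∈ Bn (max nx ny) := hmono nx _ (le_max_left _ _) hnx
    have hy : y ∈ Bn (max nx ny) := hmono ny _ (le_max_right _ _) hny
    rw [hgstable x _ hx, hgstable y _ hy]
    exact (F (max nx ny)).2 x hx y hy hxy
  · intro y
    obtain ⟨m, rfl⟩ := he y
    obtain ⟨b, hb, hbv⟩ : ∃ b ∈ Bn (m + 1), hn (m + 1) b = e m :=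
      hrange (F m) (e m)
    exact ⟨b, by rw [hgstable b (m + 1) hb]; exact hbv⟩
  · intro a ha
    have : a ∈ Bn 0 := ha
    rw [hgstable a 0 this]
    rfl
end
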